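/- arXiv:2202.12445 — 5 statements merged into one kernel-verified Lean document; each statement's English description precedes it below -/
import Mathlib

section
/- Let L > 0 and suppose that almost surely |τ̂| ≤ L and |τ̂_k(X)| ≤ L for every k ∈ {1,…,K}, and that |Y₀|, |Y₁| ≤ L almost surely. Let τ̂₁,…,τ̂_K be fixed measurable candidate models, let (X_i, Y_i, Z_i), i = 1,…,m, be i.i.d. copies of (X, Y, Z), and let ŵ be any minimizer of the empirical stacking loss ℓ̂ over the simplex Δ_K. Then for every δ ∈ (0,1), with probability at least 1 − δ, the stacked model τ̂_s = Σ_k ŵ_k τ̂_k satisfies ‖τ̂_s − τ‖₂² ≤ min_{k ∈ [K]} ‖τ̂_k − τ‖₂² + 12 L² √(log(2(K+1)²/δ)/m). -/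
open MeasureTheory ProbabilityTheory Real

lemma aux_exp_factor (s : ℝ) : 0 ≤ Real.exp s * (s - 1) + 1 := by
  rcases le_or_gt 1 s with h | h
  · nlinarith [Real.exp_pos s]
  · have h1 : 1 - s ≤ Real.exp (-s) := by
      have := Real.add_one_le_exp (-s); linarith
    have h2 : (1 - s) * Real.exp s ≤ 1 := by
      have := mul_le_mul_of_nonneg_right h1 (Real.exp_pos s).le
      rwa [← Real.exp_add, neg_add_cancel, Real.exp_zero] at this
    nlinarith

lemma aux_tanh (s : ℝ) (hs : 0 ≤ s) : 2 * (Real.exp s - 1) ≤ s * (Real.exp s + 1) := by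
  set f : ℝ → ℝ := fun s => s * (Real.exp s + 1) - 2 * Real.exp s + 2 with hf
  have hderiv : ∀ x : ℝ, HasDerivAt f (Real.exp x * (x - 1) + 1) x := by
    intro x
    have h1 : HasDerivAt (fun s : ℝ => s * (Real.exp s + 1))
        (1 * (Real.exp x + 1) + x * Real.exp x) x :=
      (hasDerivAt_id x).mul ((Real.hasDerivAt_exp x).add_const 1)
    have h2 : HasDerivAt (fun s : ℝ => 2 * Real.exp s) (2 * Real.exp x) x :=
      (Real.hasDerivAt_exp x).const_mul 2
    have := (h1.sub h2).add_const 2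
    refine this.congr_deriv ?_; ring
  have hmono : MonotoneOn f (Set.Ici (0:ℝ)) := by
    refine monotoneOn_of_deriv_nonneg (convex_Ici 0) ?_ ?_ ?_
    · exact (Continuous.continuousOn (by continuity))
    · intro x _; exact (hderiv x).differentiableAt.differentiableWithinAt
    · intro x _
      rw [(hderiv x).deriv]
      exact aux_exp_factor x
  have h0 : f 0 = 0 := by simp [hf]
  have := hmono (Set.self_mem_Ici) (Set.mem_Ici.2 hs) hs
  rw [h0] at this
  simp only [hf] at this
  linarith

lemma hoeffding_log_ineq (p : ℝ) (hp0 : 0 ≤ p) (hp1 : p ≤ 1) (h : ℝ) :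
    (1 - p) + p * Real.exp h ≤ Real.exp (p * h + h ^ 2 / 8) := by
  have hD : ∀ x : ℝ, 0 < (1 - p) + p * Real.exp x := by
    intro x
    rcases lt_or_ge p 1 with h1 | h1
    · have : 0 ≤ p * Real.exp x := mul_nonneg hp0 (Real.exp_pos x).le
      linarith
    · have hp : p = 1 := le_antisymm hp1 h1
      simp [hp]; positivity
  set g : ℝ → ℝ := fun x => p * x + x ^ 2 / 8 - Real.log ((1 - p) + p * Real.exp x) with hg
  have hderiv : ∀ x : ℝ, HasDerivAt g
      (p + x / 4 - p * Real.exp x / ((1 - p) + p * Real.exp x)) x := by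
    intro x
    have h1 : HasDerivAt (fun x : ℝ => (1 - p) + p * Real.exp x) (p * Real.exp x) x :=
      ((Real.hasDerivAt_exp x).const_mul p).const_add (1 - p)
    have h2 : HasDerivAt (fun x : ℝ => Real.log ((1 - p) + p * Real.exp x))
        (p * Real.exp x / ((1 - p) + p * Real.exp x)) x := h1.log (hD x).ne'
    have h4 : HasDerivAt (fun y : ℝ => p * y) p x := by
      simpa using (hasDerivAt_id x).const_mul p
    have h3 : HasDerivAt (fun x : ℝ => p * x + x ^ 2 / 8) (p + x / 4) x := by
      have := h4.add ((hasDerivAt_pow 2 x).div_const 8)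
      refine this.congr_deriv ?_; push_cast; ring
    exact h3.sub h2
  have key : ∀ x : ℝ, 0 ≤ x →
      p * (1 - p) * (Real.exp x - 1) ≤ x / 4 * ((1 - p) + p * Real.exp x) := by
    intro x hx
    set v : ℝ := Real.exp (x / 2) with hv
    have hv1 : 1 ≤ v := Real.one_le_exp (by linarith)
    have hvsq : v ^ 2 = Real.exp x := by
      rw [hv, sq, ← Real.exp_add]; norm_num
    have halg : p * (1 - p) * (v + 1) ^ 2 ≤ (1 - p) + p * v ^ 2 := by
      nlinarith [sq_nonneg (1 - p * (v + 1))]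
    have htanh : (v - 1) * 4 ≤ x * (v + 1) := by
      have := aux_tanh (x / 2) (by linarith)
      rw [← hv] at this; linarith
    rw [← hvsq]
    nlinarith [mul_nonneg (mul_nonneg hp0 (by linarith : 0 ≤ 1 - p))
        (by nlinarith : (0:ℝ) ≤ (v + 1) * (v - 1)),
      mul_le_mul_of_nonneg_right halg (by linarith : 0 ≤ v - 1),
      mul_le_mul_of_nonneg_left htanh
        (show (0:ℝ) ≤ p * (1 - p) * (v + 1) / 4 from div_nonneg (mul_nonneg (mul_nonneg hp0 (by linarith)) (by linarith)) (by norm_num))]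
  have keyneg : ∀ x : ℝ, x ≤ 0 →
      x / 4 * ((1 - p) + p * Real.exp x) ≤ p * (1 - p) * (Real.exp x - 1) := by
    intro x hx
    set v : ℝ := Real.exp (x / 2) with hv
    have hv0 : 0 < v := Real.exp_pos _
    have hv1 : v ≤ 1 := Real.exp_le_one_iff.mpr (by linarith)
    have hvsq : v ^ 2 = Real.exp x := by
      rw [hv, sq, ← Real.exp_add]; norm_num
    have halg : p * (1 - p) * (v + 1) ^ 2 ≤ (1 - p) + p * v ^ 2 := by
      nlinarith [sq_nonneg (1 - p * (v + 1))]
    set w : ℝ := Real.exp (-(x / 2)) with hw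
    have hwv : w * v = 1 := by
      rw [hw, hv, ← Real.exp_add]; simp
    have h2 : 2 * (w - 1) ≤ -(x / 2) * (w + 1) := aux_tanh (-(x / 2)) (by linarith)
    have htanh : x * (v + 1) ≤ (v - 1) * 4 := by
      have h3' := mul_le_mul_of_nonneg_right h2 hv0.le
      have e1 : 2 * (w - 1) * v = 2 * (w * v) - 2 * v := by ring
      have e2 : -(x / 2) * (w + 1) * v = -(x / 2) * (w * v) + -(x / 2) * v := by ring
      rw [e1, e2, hwv] at h3'
      linarith
    rw [← hvsq]
    have c1 : x / 4 * ((1 - p) + p * v ^ 2) ≤ x / 4 * (p * (1 - p) * (v + 1) ^ 2) :=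
      mul_le_mul_of_nonpos_left halg (by linarith : x / 4 ≤ 0)
    have c2 := mul_le_mul_of_nonneg_left htanh
      (show (0:ℝ) ≤ p * (1 - p) * (v + 1) / 4 from div_nonneg (mul_nonneg (mul_nonneg hp0 (by linarith)) (by linarith)) (by norm_num))
    nlinarith [c1, c2]
  have hd_nonneg : ∀ x ∈ Set.Ici (0:ℝ),
      0 ≤ p + x / 4 - p * Real.exp x / ((1 - p) + p * Real.exp x) := by
    intro x hx
    have hDx := hD x
    rw [sub_nonneg, div_le_iff₀ hDx]
    have := key x hx
    nlinarith
  have hd_nonpos : ∀ x ∈ Set.Iic (0:ℝ),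
      p + x / 4 - p * Real.exp x / ((1 - p) + p * Real.exp x) ≤ 0 := by
    intro x hx
    have hDx := hD x
    rw [sub_nonpos, le_div_iff₀ hDx]
    have := keyneg x hx
    nlinarith
  have hg0 : g 0 = 0 := by simp [hg]
  have hdiff : Differentiable ℝ g := fun x => (hderiv x).differentiableAt
  have hmono : MonotoneOn g (Set.Ici (0:ℝ)) := by
    refine monotoneOn_of_deriv_nonneg (convex_Ici 0) hdiff.continuous.continuousOn
      (fun x _ => (hdiff x).differentiableWithinAt) ?_
    intro x hx
    rw [(hderiv x).deriv]
    exact hd_nonneg x (le_of_lt (by simpa using hx))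
  have hanti : AntitoneOn g (Set.Iic (0:ℝ)) := by
    refine antitoneOn_of_deriv_nonpos (convex_Iic 0) hdiff.continuous.continuousOn
      (fun x _ => (hdiff x).differentiableWithinAt) ?_
    intro x hx
    rw [(hderiv x).deriv]
    exact hd_nonpos x (le_of_lt (by simpa using hx))
  have hgh : 0 ≤ g h := by
    rcases le_or_gt 0 h with hh | hh
    · have := hmono Set.self_mem_Ici (Set.mem_Ici.2 hh) hh
      rwa [hg0] at this
    · have := hanti (Set.mem_Iic.2 hh.le) Set.self_mem_Iic hh.le
      rwa [hg0] at this
  have hlog : Real.log ((1 - p) + p * Real.exp h) ≤ p * h + h ^ 2 / 8 := by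
    have he : g h = p * h + h ^ 2 / 8 - Real.log ((1 - p) + p * Real.exp h) := rfl
    rw [he] at hgh; linarith
  calc (1 - p) + p * Real.exp h = Real.exp (Real.log ((1 - p) + p * Real.exp h)) :=
        (Real.exp_log (hD h)).symm
    _ ≤ Real.exp (p * h + h ^ 2 / 8) := Real.exp_le_exp.2 hlog

lemma hoeffding_mgf {Ω : Type*} [MeasurableSpace Ω] (P : Measure Ω) [IsProbabilityMeasure P]
    (W : Ω → ℝ) (hW : Measurable W) (a b t : ℝ)
    (hbd : ∀ᵐ ω ∂P, W ω ∈ Set.Icc a b) (hmean : ∫ ω, W ω ∂P = 0) :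
    ∫ ω, Real.exp (t * W ω) ∂P ≤ Real.exp (t ^ 2 * (b - a) ^ 2 / 8) := by
  have hWint : Integrable W P := by
    refine Integrable.mono' (integrable_const (max |a| |b|)) hW.aestronglyMeasurable ?_
    filter_upwards [hbd] with ω hω
    rw [Real.norm_eq_abs, abs_le]
    constructor
    · calc -(max |a| |b|) ≤ -|a| := by simp
        _ ≤ a := neg_abs_le a
        _ ≤ W ω := hω.1
    · exact hω.2.trans ((le_abs_self b).trans (le_max_right _ _))
  have ha0 : a ≤ 0 := by
    have : ∫ (_ : Ω), a ∂P ≤ ∫ ω, W ω ∂P := by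
      refine integral_mono_ae (integrable_const a) hWint ?_
      filter_upwards [hbd] with ω hω using hω.1
    simpa [hmean] using this
  have hb0 : 0 ≤ b := by
    have : ∫ ω, W ω ∂P ≤ ∫ (_ : Ω), b ∂P := by
      refine integral_mono_ae hWint (integrable_const b) ?_
      filter_upwards [hbd] with ω hω using hω.2
    simpa [hmean] using this
  rcases eq_or_lt_of_le (ha0.trans hb0) with hab | hab
  · -- a = b = 0, W = 0 a.e.
    have ha : a = 0 := le_antisymm ha0 (by rw [hab]; exact hb0)
    have hb : b = 0 := by rw [← hab, ha]
    have hone : ∫ ω, Real.exp (t * W ω) ∂P = 1 := by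
      rw [show (1:ℝ) = ∫ (_ : Ω), (1:ℝ) ∂P by simp]
      refine integral_congr_ae ?_
      filter_upwards [hbd] with ω hω
      have hw0 : W ω = 0 := le_antisymm (hb ▸ hω.2) (ha ▸ hω.1)
      simp [hw0]
    rw [hone, ha, hb]
    norm_num
  · set c : ℝ := b - a with hc
    have hcpos : 0 < c := by linarith
    set p : ℝ := -a / c with hp
    have hp0 : 0 ≤ p := div_nonneg (by linarith) hcpos.le
    have hp1 : p ≤ 1 := by rw [hp, div_le_one hcpos]; linarith
    set h : ℝ := t * c with hh
    -- pointwise convexity bound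
    have hpt : ∀ᵐ ω ∂P, Real.exp (t * W ω) ≤
        (b - W ω) / c * Real.exp (t * a) + (W ω - a) / c * Real.exp (t * b) := by
      filter_upwards [hbd] with ω hω
      obtain ⟨h1, h2⟩ := hω
      have hl1 : 0 ≤ (b - W ω) / c := div_nonneg (by linarith) hcpos.le
      have hl2 : 0 ≤ (W ω - a) / c := div_nonneg (by linarith) hcpos.le
      have hsum : (b - W ω) / c + (W ω - a) / c = 1 := by field_simp; rw [hc]; ring
      have := convexOn_exp.2 (Set.mem_univ (t * a)) (Set.mem_univ (t * b)) hl1 hl2 hsum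
      simp only [smul_eq_mul] at this
      have harg : (b - W ω) / c * (t * a) + (W ω - a) / c * (t * b) = t * W ω := by
        field_simp; ring
      rwa [harg] at this
    -- integrate
    have hint_lhs : Integrable (fun ω => Real.exp (t * W ω)) P := by
      refine Integrable.mono' (integrable_const (Real.exp (|t| * max |a| |b|)))
        (hW.const_mul t).exp.aestronglyMeasurable ?_
      filter_upwards [hbd] with ω hω
      rw [Real.norm_eq_abs, abs_of_pos (Real.exp_pos _), Real.exp_le_exp]
      calc t * W ω ≤ |t * W ω| := le_abs_self _
        _ = |t| * |W ω| := abs_mul _ _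
        _ ≤ |t| * max |a| |b| := by
            refine mul_le_mul_of_nonneg_left ?_ (abs_nonneg t)
            rw [abs_le]
            constructor
            · calc -(max |a| |b|) ≤ -|a| := by simp
                _ ≤ a := neg_abs_le a
                _ ≤ W ω := hω.1
            · exact hω.2.trans ((le_abs_self b).trans (le_max_right _ _))
    have hint_rhs : Integrable (fun ω =>
        (b - W ω) / c * Real.exp (t * a) + (W ω - a) / c * Real.exp (t * b)) P := by
      apply Integrable.add
      · exact (((integrable_const b).sub hWint).div_const c).mul_const _
      · exact ((hWint.sub (integrable_const a)).div_const c).mul_const _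
    have I1 : Integrable (fun ω => (b - W ω) / c * Real.exp (t * a)) P :=
      (((integrable_const b).sub hWint).div_const c).mul_const _
    have I2 : Integrable (fun ω => (W ω - a) / c * Real.exp (t * b)) P :=
      ((hWint.sub (integrable_const a)).div_const c).mul_const _
    have hstep1 : ∫ ω, Real.exp (t * W ω) ∂P ≤
        (1 - p) * Real.exp (t * a) + p * Real.exp (t * b) := by
      calc ∫ ω, Real.exp (t * W ω) ∂P
          ≤ ∫ ω, ((b - W ω) / c * Real.exp (t * a) + (W ω - a) / c * Real.exp (t * b)) ∂P :=
            integral_mono_ae hint_lhs hint_rhs hpt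
        _ = (∫ ω, (b - W ω) / c ∂P) * Real.exp (t * a)
            + (∫ ω, (W ω - a) / c ∂P) * Real.exp (t * b) := by
            rw [integral_add I1 I2, integral_mul_const, integral_mul_const]
        _ = (1 - p) * Real.exp (t * a) + p * Real.exp (t * b) := by
            rw [integral_div, integral_div, integral_sub (integrable_const b) hWint,
              integral_sub hWint (integrable_const a), hmean, integral_const]
            simp only [measure_univ, ENNReal.toReal_one, one_smul, sub_zero, zero_sub, integral_const, probReal_univ, smul_eq_mul, one_mul]
            congr 2
            · rw [hp]; field_simp; rw [hc]; ring
    have hta : t * a = -(p * h) := by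
      rw [hp, hh]; field_simp
    have htb : t * b = (1 - p) * h := by
      rw [hp, hh]; field_simp; ring
    calc ∫ ω, Real.exp (t * W ω) ∂P
        ≤ (1 - p) * Real.exp (t * a) + p * Real.exp (t * b) := hstep1
      _ = Real.exp (-(p * h)) * ((1 - p) + p * Real.exp h) := by
          rw [hta, htb]
          rw [show (1 - p) * h = h + -(p*h) by ring, Real.exp_add]
          ring
      _ ≤ Real.exp (-(p * h)) * Real.exp (p * h + h ^ 2 / 8) := by
          refine mul_le_mul_of_nonneg_left ?_ (Real.exp_pos _).le
          exact hoeffding_log_ineq p hp0 hp1 h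
      _ = Real.exp (h ^ 2 / 8) := by rw [← Real.exp_add]; ring_nf
      _ = Real.exp (t ^ 2 * (b - a) ^ 2 / 8) := by rw [hh, ← hc]; ring_nf

lemma hoeffding_sum_tail {Ω : Type*} [MeasurableSpace Ω] (P : Measure Ω)
    [IsProbabilityMeasure P]
    {m : ℕ} (W : Fin m → Ω → ℝ) (hmeas : ∀ i, Measurable (W i))
    (hindep : iIndepFun W P)
    (a b : ℝ) (hab : a < b)
    (hbd : ∀ i, ∀ᵐ ω ∂P, W i ω ∈ Set.Icc a b)
    (hmean : ∀ i, ∫ ω, W i ω ∂P = 0)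
    (ε : ℝ) (hε : 0 ≤ ε) :
    P {ω | (m : ℝ) * ε ≤ ∑ i, W i ω} ≤
      ENNReal.ofReal (Real.exp (-(2 * m * ε ^ 2 / (b - a) ^ 2))) := by
  set d : ℝ := (b - a) ^ 2 with hd
  have hdpos : 0 < d := by
    rw [hd]
    have h1 : b - a > 0 := by linarith
    positivity
  set t : ℝ := 4 * ε / d with ht
  have ht0 : 0 ≤ t := by positivity
  set S : Ω → ℝ := ∑ i, W i with hS
  have hSapp : ∀ ω, S ω = ∑ i, W i ω := fun ω => by rw [hS]; simp
  have hSmeas : Measurable S := by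
    have h1 : Measurable fun ω => ∑ i, W i ω := Finset.measurable_sum _ fun i _ => hmeas i
    have h2 : S = fun ω => ∑ i, W i ω := funext hSapp
    rw [h2]; exact h1
  have hbd' : ∀ᵐ ω ∂P, ∀ i, W i ω ∈ Set.Icc a b := (ae_all_iff).2 hbd
  set M : ℝ := max |a| |b| with hM
  have habs : ∀ᵐ ω ∂P, ∀ i, |W i ω| ≤ M := by
    filter_upwards [hbd'] with ω hω i
    rw [abs_le]
    refine ⟨?_, (hω i).2.trans ((le_abs_self b).trans (le_max_right _ _))⟩
    calc -M ≤ -|a| := by simp [hM]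
      _ ≤ a := neg_abs_le a
      _ ≤ W i ω := (hω i).1
  have hint : Integrable (fun ω => Real.exp (t * S ω)) P := by
    refine Integrable.mono' (integrable_const (Real.exp (t * (m * M))))
      ((hSmeas.const_mul t).exp).aestronglyMeasurable ?_
    filter_upwards [habs] with ω hω
    rw [Real.norm_eq_abs, abs_of_pos (Real.exp_pos _), Real.exp_le_exp]
    refine mul_le_mul_of_nonneg_left ?_ ht0
    rw [hSapp]
    calc ∑ i, W i ω ≤ ∑ i, |W i ω| := Finset.sum_le_sum fun i _ => le_abs_self _
      _ ≤ ∑ _i : Fin m, M := Finset.sum_le_sum fun i _ => hω i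
      _ = m * M := by simp [mul_comm]
  have hmgf : mgf S P t ≤ Real.exp ((m : ℝ) * (t ^ 2 * d / 8)) := by
    rw [hS, hindep.mgf_sum hmeas]
    calc ∏ i : Fin m, mgf (W i) P t ≤ ∏ _i : Fin m, Real.exp (t ^ 2 * d / 8) := by
          refine Finset.prod_le_prod (fun i _ => mgf_nonneg) fun i _ => ?_
          rw [hd]
          exact hoeffding_mgf P (W i) (hmeas i) a b t (hbd i) (hmean i)
      _ = Real.exp ((m : ℝ) * (t ^ 2 * d / 8)) := by
          rw [Finset.prod_const, ← Real.exp_nat_mul]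
          simp
  have hchern := measure_ge_le_exp_mul_mgf (μ := P) (X := S) ((m : ℝ) * ε) ht0 hint
  have hbound : Real.exp (-t * ((m : ℝ) * ε)) * mgf S P t ≤
      Real.exp (-(2 * m * ε ^ 2 / d)) := by
    calc Real.exp (-t * ((m : ℝ) * ε)) * mgf S P t
        ≤ Real.exp (-t * ((m : ℝ) * ε)) * Real.exp ((m : ℝ) * (t ^ 2 * d / 8)) :=
          mul_le_mul_of_nonneg_left hmgf (Real.exp_pos _).le
      _ = Real.exp (-t * ((m : ℝ) * ε) + (m : ℝ) * (t ^ 2 * d / 8)) := (Real.exp_add _ _).symm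
      _ = Real.exp (-(2 * m * ε ^ 2 / d)) := by
          congr 1
          rw [ht]
          field_simp
          ring
  have hfin : (P {ω | (m : ℝ) * ε ≤ S ω}).toReal ≤ Real.exp (-(2 * m * ε ^ 2 / d)) :=
    hchern.trans hbound
  have : {ω | (m : ℝ) * ε ≤ ∑ i, W i ω} = {ω | (m : ℝ) * ε ≤ S ω} := by
    ext ω; simp only [Set.mem_setOf_eq, hSapp]
  rw [this, ENNReal.le_ofReal_iff_toReal_le (measure_ne_top P _) (Real.exp_pos _).le]
  exact hfin

lemma bdd_integrable {Ω : Type*} [MeasurableSpace Ω] {P : Measure Ω} [IsProbabilityMeasure P]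
    {f : Ω → ℝ} (hfm : AEStronglyMeasurable f P) (C : ℝ) (hC : ∀ᵐ ω ∂P, |f ω| ≤ C) :
    Integrable f P :=
  Integrable.mono' (integrable_const C) hfm
    (by filter_upwards [hC] with ω h using by rwa [Real.norm_eq_abs])

lemma cross_zero {Ω 𝒳 : Type*} [MeasurableSpace Ω] [MeasurableSpace 𝒳]
    (P : Measure Ω) [IsProbabilityMeasure P]
    (X : Ω → 𝒳) (Y0 Y1 Z : Ω → ℝ)
    (hX : Measurable X) (hY0 : Measurable Y0) (hY1 : Measurable Y1) (hZ : Measurable Z)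
    (hZval : ∀ ω, Z ω = 0 ∨ Z ω = 1)
    (p : ℝ) (hp : p ∈ Set.Ioo (0 : ℝ) 1)
    (hZp : P {ω | Z ω = 1} = ENNReal.ofReal p)
    (hindep : IndepFun Z (fun ω => (X ω, Y0 ω, Y1 ω)) P)
    (Y : Ω → ℝ) (hY : ∀ ω, Y ω = Z ω * Y1 ω + (1 - Z ω) * Y0 ω)
    (τ : 𝒳 → ℝ) (hτm : Measurable τ)
    (hτ : P[fun ω => Y1 ω - Y0 ω | MeasurableSpace.comap X inferInstance]
        =ᵐ[P] fun ω => τ (X ω))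
    (μ0 μ1 : 𝒳 → ℝ) (hμ0 : Measurable μ0) (hμ1 : Measurable μ1)
    (τhat : Ω → ℝ)
    (hτhat : ∀ ω, τhat ω = (μ1 (X ω) - μ0 (X ω))
        + (Y ω - μ1 (X ω)) * Z ω / p - (Y ω - μ0 (X ω)) * (1 - Z ω) / (1 - p))
    (L : ℝ) (hL : 0 < L)
    (hbY0 : ∀ᵐ ω ∂P, |Y0 ω| ≤ L) (hbY1 : ∀ᵐ ω ∂P, |Y1 ω| ≤ L)
    (hbτhat : ∀ᵐ ω ∂P, |τhat ω| ≤ L)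
    (g : 𝒳 → ℝ) (hg : Measurable g) (Cg : ℝ)
    (hgbd : ∀ᵐ ω ∂P, |g (X ω)| ≤ Cg) :
    ∫ ω, (τhat ω - τ (X ω)) * g (X ω) ∂P = 0 := by
  obtain ⟨hp0, hp1⟩ := hp
  have hpne : p ≠ 0 := ne_of_gt hp0
  have hpne1 : (1:ℝ) - p ≠ 0 := by linarith
  -- the triple (X, Y0, Y1)
  set T3 : Ω → 𝒳 × ℝ × ℝ := fun ω => (X ω, Y0 ω, Y1 ω) with hT3
  have hT3m : Measurable T3 := hX.prodMk (hY0.prodMk hY1)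
  -- U and V
  set ψU : 𝒳 × ℝ × ℝ → ℝ :=
    fun v => (μ1 v.1 - μ0 v.1) + (v.2.2 - μ1 v.1) / p with hψU
  set ψV : 𝒳 × ℝ × ℝ → ℝ :=
    fun v => (μ1 v.1 - μ0 v.1) - (v.2.1 - μ0 v.1) / (1 - p) with hψV
  have hψUm : Measurable ψU := by
    apply Measurable.add
    · exact (hμ1.comp measurable_fst).sub (hμ0.comp measurable_fst)
    · exact ((measurable_snd.comp measurable_snd).sub (hμ1.comp measurable_fst)).div_const p
  have hψVm : Measurable ψV := by
    apply Measurable.sub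
    · exact (hμ1.comp measurable_fst).sub (hμ0.comp measurable_fst)
    · exact ((measurable_fst.comp measurable_snd).sub (hμ0.comp measurable_fst)).div_const (1-p)
  set U : Ω → ℝ := fun ω => ψU (T3 ω) with hU
  set V : Ω → ℝ := fun ω => ψV (T3 ω) with hV
  have hUm : Measurable U := hψUm.comp hT3m
  have hVm : Measurable V := hψVm.comp hT3m
  -- pointwise representation of τhat
  have hrep : ∀ ω, τhat ω = Z ω * U ω + (1 - Z ω) * V ω := by
    intro ω
    rcases hZval ω with h0 | h1
    · rw [hτhat ω, hY ω, h0, hU, hψU, hV, hψV]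
      simp only
      field_simp
      simp only [hT3]; ring
    · rw [hτhat ω, hY ω, h1, hU, hψU, hV, hψV]
      simp only
      field_simp
      simp only [hT3]; ring
  have hτhatm : Measurable τhat := by
    have : τhat = fun ω => Z ω * U ω + (1 - Z ω) * V ω := funext hrep
    rw [this]
    exact (hZ.mul hUm).add ((measurable_const.sub hZ).mul hVm)
  -- measure of {Z = 1} and {Z = 0}
  have hmZ1 : MeasurableSet {ω | Z ω = 1} := hZ (measurableSet_singleton 1)
  have hmZ0 : MeasurableSet {ω | Z ω = 0} := hZ (measurableSet_singleton 0)
  -- a.e. bounds on U and V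
  have hbad : P {ω | L < |τhat ω|} = 0 := by
    have : {ω | L < |τhat ω|} = {ω | ¬ (|τhat ω| ≤ L)} := by
      ext ω; simp [not_le]
    rw [this]
    exact hbτhat
  have hUbd : ∀ᵐ ω ∂P, |U ω| ≤ L := by
    have hBm : MeasurableSet {v : 𝒳 × ℝ × ℝ | L < |ψU v|} :=
      measurableSet_lt measurable_const hψUm.abs
    have hkey : P ({ω | Z ω = 1} ∩ T3 ⁻¹' {v | L < |ψU v|})
        = P {ω | Z ω = 1} * P (T3 ⁻¹' {v | L < |ψU v|}) := by
      have := hindep.measure_inter_preimage_eq_mul {(1:ℝ)} {v | L < |ψU v|}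
        (measurableSet_singleton 1) hBm
      exact this
    have hsub : {ω | Z ω = 1} ∩ T3 ⁻¹' {v | L < |ψU v|} ⊆ {ω | L < |τhat ω|} := by
      intro ω hω
      obtain ⟨h1, h2⟩ := hω
      have : τhat ω = U ω := by
        rw [hrep ω, Set.mem_setOf_eq.mp h1]; ring
      simpa [this] using h2
    have h0 : P ({ω | Z ω = 1} ∩ T3 ⁻¹' {v | L < |ψU v|}) = 0 :=
      le_antisymm ((measure_mono hsub).trans hbad.le) zero_le
    rw [hkey, hZp] at h0
    have hPU : P (T3 ⁻¹' {v | L < |ψU v|}) = 0 := by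
      rcases mul_eq_zero.mp h0 with h | h
      · exact absurd h (by simp [ENNReal.ofReal_eq_zero]; linarith)
      · exact h
    have : ∀ᵐ ω ∂P, ¬ (L < |U ω|) := by
      rw [ae_iff]
      simpa [Set.preimage_setOf_eq, not_not] using hPU
    filter_upwards [this] with ω hω using not_lt.mp hω
  have hZ0 : P {ω | Z ω = 0} = ENNReal.ofReal (1 - p) := by
    have hunion : {ω | Z ω = 0} = {ω | Z ω = 1}ᶜ := by
      ext ω
      rcases hZval ω with h | h <;> simp [h]
    rw [hunion, measure_compl hmZ1 (measure_ne_top P _), hZp, measure_univ]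
    rw [← ENNReal.ofReal_one, ← ENNReal.ofReal_sub _ (le_of_lt hp0)]
  have hVbd : ∀ᵐ ω ∂P, |V ω| ≤ L := by
    have hBm : MeasurableSet {v : 𝒳 × ℝ × ℝ | L < |ψV v|} :=
      measurableSet_lt measurable_const hψVm.abs
    have hkey : P ({ω | Z ω = 0} ∩ T3 ⁻¹' {v | L < |ψV v|})
        = P {ω | Z ω = 0} * P (T3 ⁻¹' {v | L < |ψV v|}) := by
      have := hindep.measure_inter_preimage_eq_mul {(0:ℝ)} {v | L < |ψV v|}
        (measurableSet_singleton 0) hBm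
      exact this
    have hsub : {ω | Z ω = 0} ∩ T3 ⁻¹' {v | L < |ψV v|} ⊆ {ω | L < |τhat ω|} := by
      intro ω hω
      obtain ⟨h1, h2⟩ := hω
      have : τhat ω = V ω := by
        rw [hrep ω, Set.mem_setOf_eq.mp h1]; ring
      simpa [this] using h2
    have h0 : P ({ω | Z ω = 0} ∩ T3 ⁻¹' {v | L < |ψV v|}) = 0 :=
      le_antisymm ((measure_mono hsub).trans hbad.le) zero_le
    rw [hkey, hZ0] at h0
    have hPV : P (T3 ⁻¹' {v | L < |ψV v|}) = 0 := by
      rcases mul_eq_zero.mp h0 with h | h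
      · exact absurd h (by simp [ENNReal.ofReal_eq_zero]; linarith)
      · exact h
    have : ∀ᵐ ω ∂P, ¬ (L < |V ω|) := by
      rw [ae_iff]
      simpa [Set.preimage_setOf_eq, not_not] using hPV
    filter_upwards [this] with ω hω using not_lt.mp hω
  -- integral of Z
  have hZbd : ∀ ω, |Z ω| ≤ 1 := by
    intro ω; rcases hZval ω with h | h <;> simp [h]
  have hZint : Integrable Z P :=
    bdd_integrable hZ.aestronglyMeasurable 1 (Filter.Eventually.of_forall hZbd)
  have hintZ : ∫ ω, Z ω ∂P = p := by
    have hZind : Z = fun ω => Set.indicator {ω | Z ω = 1} (fun _ => (1:ℝ)) ω := by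
      funext ω
      by_cases hmem : ω ∈ {ω | Z ω = 1}
      · rw [Set.indicator_of_mem hmem]; exact hmem
      · rw [Set.indicator_of_notMem hmem]
        rcases hZval ω with h | h
        · exact h
        · exact absurd h hmem
    rw [hZind, integral_indicator_const (1:ℝ) hmZ1, measureReal_def, hZp, smul_eq_mul, mul_one,
      ENNReal.toReal_ofReal hp0.le]
  have hint1mZ : ∫ ω, (1 - Z ω) ∂P = 1 - p := by
    rw [integral_sub (integrable_const 1) hZint, hintZ, integral_const]
    simp
  -- measurability and integrability of auxiliary products
  have hgXm : Measurable (fun ω => g (X ω)) := hg.comp hX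
  have hτXm : Measurable (fun ω => τ (X ω)) := hτm.comp hX
  have hUg_int : Integrable (fun ω => U ω * g (X ω)) P := by
    refine bdd_integrable (hUm.mul hgXm).aestronglyMeasurable (L * Cg) ?_
    filter_upwards [hUbd, hgbd] with ω h1 h2
    rw [abs_mul]
    exact mul_le_mul h1 h2 (abs_nonneg _) hL.le
  have hVg_int : Integrable (fun ω => V ω * g (X ω)) P := by
    refine bdd_integrable (hVm.mul hgXm).aestronglyMeasurable (L * Cg) ?_
    filter_upwards [hVbd, hgbd] with ω h1 h2
    rw [abs_mul]
    exact mul_le_mul h1 h2 (abs_nonneg _) hL.le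
  have hZUg_int : Integrable (fun ω => Z ω * (U ω * g (X ω))) P := by
    refine bdd_integrable (hZ.mul (hUm.mul hgXm)).aestronglyMeasurable (1 * (L * Cg)) ?_
    filter_upwards [hUbd, hgbd] with ω h1 h2
    rw [abs_mul]
    have hv : |U ω * g (X ω)| ≤ L * Cg := by
      rw [abs_mul]; exact mul_le_mul h1 h2 (abs_nonneg _) hL.le
    exact mul_le_mul (hZbd ω) hv (abs_nonneg _) one_pos.le
  have h1mZVg_int : Integrable (fun ω => (1 - Z ω) * (V ω * g (X ω))) P := by
    refine bdd_integrable ((measurable_const.sub hZ).mul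
      (hVm.mul hgXm)).aestronglyMeasurable (2 * (L * Cg)) ?_
    filter_upwards [hVbd, hgbd] with ω h1 h2
    rw [abs_mul]
    have hz : |1 - Z ω| ≤ 2 := by
      have := hZbd ω; rw [abs_le] at this ⊢; constructor <;> linarith [this.1, this.2]
    have hv : |V ω * g (X ω)| ≤ L * Cg := by
      rw [abs_mul]; exact mul_le_mul h1 h2 (abs_nonneg _) hL.le
    exact mul_le_mul hz hv (abs_nonneg _) (by norm_num)
  -- independence applications
  have hZ_Ug : IndepFun Z (fun ω => U ω * g (X ω)) P := by
    have hφ : Measurable (fun v : 𝒳 × ℝ × ℝ => ψU v * g v.1) :=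
      hψUm.mul (hg.comp measurable_fst)
    exact hindep.comp measurable_id hφ
  have hZ_Vg : IndepFun (fun ω => 1 - Z ω) (fun ω => V ω * g (X ω)) P := by
    have hφ : Measurable (fun v : 𝒳 × ℝ × ℝ => ψV v * g v.1) :=
      hψVm.mul (hg.comp measurable_fst)
    exact hindep.comp (measurable_const.sub measurable_id) hφ
  have hstep1 : ∫ ω, Z ω * (U ω * g (X ω)) ∂P = p * ∫ ω, U ω * g (X ω) ∂P := by
    have := hZ_Ug.integral_fun_mul_eq_mul_integral hZint.aestronglyMeasurable hUg_int.aestronglyMeasurable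
    simpa [hintZ] using this
  have h1mZint : Integrable (fun ω => 1 - Z ω) P := (integrable_const 1).sub hZint
  have hstep2 : ∫ ω, (1 - Z ω) * (V ω * g (X ω)) ∂P
      = (1 - p) * ∫ ω, V ω * g (X ω) ∂P := by
    have := hZ_Vg.integral_fun_mul_eq_mul_integral h1mZint.aestronglyMeasurable hVg_int.aestronglyMeasurable
    simpa [hint1mZ] using this
  -- ∫ τhat g = ∫ (Y1 - Y0) g
  have hY10int : Integrable (fun ω => Y1 ω - Y0 ω) P := by
    refine bdd_integrable (hY1.sub hY0).aestronglyMeasurable (2 * L) ?_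
    filter_upwards [hbY0, hbY1] with ω h0 h1
    rw [abs_le] at h0 h1 ⊢
    constructor <;> linarith [h0.1, h0.2, h1.1, h1.2]
  have hY10g_int : Integrable (fun ω => (Y1 ω - Y0 ω) * g (X ω)) P := by
    refine bdd_integrable ((hY1.sub hY0).mul hgXm).aestronglyMeasurable (2 * L * Cg) ?_
    filter_upwards [hbY0, hbY1, hgbd] with ω h0 h1 h2
    rw [abs_mul]
    have hb : |Y1 ω - Y0 ω| ≤ 2 * L := by
      rw [abs_le] at h0 h1 ⊢
      constructor <;> linarith [h0.1, h0.2, h1.1, h1.2]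
    calc |Y1 ω - Y0 ω| * |g (X ω)| ≤ (2*L) * Cg :=
          mul_le_mul hb h2 (abs_nonneg _) (by linarith)
      _ = 2 * L * Cg := by ring
  have hmain1 : ∫ ω, τhat ω * g (X ω) ∂P = ∫ ω, (Y1 ω - Y0 ω) * g (X ω) ∂P := by
    have he : (fun ω => τhat ω * g (X ω))
        = fun ω => Z ω * (U ω * g (X ω)) + (1 - Z ω) * (V ω * g (X ω)) := by
      funext ω; rw [hrep ω]; ring
    rw [he, integral_add hZUg_int h1mZVg_int, hstep1, hstep2]
    have he2 : (fun ω => (Y1 ω - Y0 ω) * g (X ω))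
        = fun ω => p * (U ω * g (X ω)) + (1 - p) * (V ω * g (X ω)) := by
      funext ω
      rw [hU, hV, hψU, hψV, hT3]
      simp only
      field_simp
      ring
    rw [he2, integral_add (hUg_int.const_mul p) (hVg_int.const_mul (1-p)),
      integral_const_mul, integral_const_mul]
  -- conditional expectation step
  have hm' : MeasurableSpace.comap X inferInstance ≤ (inferInstance : MeasurableSpace Ω) :=
    hX.comap_le
  haveI : SigmaFinite (P.trim hm') := by infer_instance
  have hXm' : Measurable[MeasurableSpace.comap X inferInstance] X := fun s hs => ⟨s, hs, rfl⟩
  have hgXsm : StronglyMeasurable[MeasurableSpace.comap X inferInstance] (fun ω => g (X ω)) :=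
    (hg.comp hXm').stronglyMeasurable
  have hgY10_int : Integrable ((fun ω => g (X ω)) * (fun ω => Y1 ω - Y0 ω)) P := by
    have : ((fun ω => g (X ω)) * (fun ω => Y1 ω - Y0 ω))
        = fun ω => (Y1 ω - Y0 ω) * g (X ω) := by funext ω; simp [mul_comm]
    rw [this]; exact hY10g_int
  have hpull := condExp_mul_of_stronglyMeasurable_left hgXsm hgY10_int hY10int
  have hmain2 : ∫ ω, (Y1 ω - Y0 ω) * g (X ω) ∂P = ∫ ω, τ (X ω) * g (X ω) ∂P := by
    calc ∫ ω, (Y1 ω - Y0 ω) * g (X ω) ∂P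
        = ∫ ω, ((fun ω => g (X ω)) * fun ω => Y1 ω - Y0 ω) ω ∂P := by
          congr 1; funext ω; simp [mul_comm]
      _ = ∫ ω, (P[(fun ω => g (X ω)) * fun ω => Y1 ω - Y0 ω |
            MeasurableSpace.comap X inferInstance]) ω ∂P :=
          (integral_condExp (μ := P)
            (f := (fun ω => g (X ω)) * fun ω => Y1 ω - Y0 ω) hm').symm
      _ = ∫ ω, g (X ω) * τ (X ω) ∂P := by
          refine integral_congr_ae ?_
          filter_upwards [hpull, hτ] with ω h1 h2
          rw [h1]
          simp only [Pi.mul_apply]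
          rw [h2]
      _ = ∫ ω, τ (X ω) * g (X ω) ∂P := by congr 1; funext ω; ring
  -- bound on τ (X ω)
  have hτbd : ∀ᵐ ω ∂P, |τ (X ω)| ≤ 2 * L := by
    have hub : (fun ω => Y1 ω - Y0 ω) ≤ᵐ[P] fun _ => 2 * L := by
      filter_upwards [hbY0, hbY1] with ω h0 h1
      rw [abs_le] at h0 h1; show Y1 ω - Y0 ω ≤ 2 * L; linarith [h0.1, h0.2, h1.1, h1.2]
    have hlb : (fun _ => -(2 * L)) ≤ᵐ[P] fun ω => Y1 ω - Y0 ω := by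
      filter_upwards [hbY0, hbY1] with ω h0 h1
      rw [abs_le] at h0 h1; show -(2*L) ≤ Y1 ω - Y0 ω; linarith [h0.1, h0.2, h1.1, h1.2]
    have h1 := condExp_mono (μ := P) (m := MeasurableSpace.comap X inferInstance)
      hY10int (integrable_const (2*L)) hub
    have h2 := condExp_mono (μ := P) (m := MeasurableSpace.comap X inferInstance)
      (integrable_const (-(2*L))) hY10int hlb
    rw [condExp_const hm' (2*L)] at h1
    rw [condExp_const hm' (-(2*L))] at h2
    filter_upwards [h1, h2, hτ] with ω hh1 hh2 hh3
    rw [← hh3]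
    rw [abs_le]
    exact ⟨hh2, hh1⟩
  -- conclude
  have hτhatg_int : Integrable (fun ω => τhat ω * g (X ω)) P := by
    refine bdd_integrable (hτhatm.mul hgXm).aestronglyMeasurable (L * Cg) ?_
    filter_upwards [hbτhat, hgbd] with ω h1 h2
    rw [abs_mul]
    exact mul_le_mul h1 h2 (abs_nonneg _) hL.le
  have hτXg_int : Integrable (fun ω => τ (X ω) * g (X ω)) P := by
    refine bdd_integrable (hτXm.mul hgXm).aestronglyMeasurable (2 * L * Cg) ?_
    filter_upwards [hτbd, hgbd] with ω h1 h2
    rw [abs_mul]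
    calc |τ (X ω)| * |g (X ω)| ≤ (2*L) * Cg :=
          mul_le_mul h1 h2 (abs_nonneg _) (by linarith)
      _ = 2 * L * Cg := by ring
  have he : (fun ω => (τhat ω - τ (X ω)) * g (X ω))
      = fun ω => τhat ω * g (X ω) - τ (X ω) * g (X ω) := by
    funext ω; ring
  rw [he, integral_sub hτhatg_int hτXg_int, hmain1, hmain2, sub_self]

/-- coefficient vector `(1, -w)` used in the quadratic-form expansion of the stacking loss -/
def cvec {K : ℕ} (w : Fin K → ℝ) : Fin (K + 1) → ℝ :=
  Fin.cases 1 (fun k => -(w k))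

@[simp] lemma cvec_zero {K : ℕ} (w : Fin K → ℝ) : cvec w 0 = 1 := rfl

@[simp] lemma cvec_succ {K : ℕ} (w : Fin K → ℝ) (k : Fin K) : cvec w k.succ = -(w k) := by
  simp [cvec]

/-- expansion of a residual as a linear form in the `cvec` coefficients -/
lemma cvec_expand {K : ℕ} (w : Fin K → ℝ) (v : Fin (K + 1) → ℝ) :
    v 0 - ∑ k, w k * v k.succ = ∑ α, cvec w α * v α := by
  rw [Fin.sum_univ_succ]
  simp only [cvec_zero, cvec_succ, one_mul]
  rw [sub_eq_add_neg, ← Finset.sum_neg_distrib]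
  congr 1
  refine Finset.sum_congr rfl fun k _ => by ring

lemma cvec_abs_sum {K : ℕ} (w : Fin K → ℝ) (hw : ∀ k, 0 ≤ w k) (hs : ∑ k, w k = 1) :
    ∑ α, |cvec w α| = 2 := by
  rw [Fin.sum_univ_succ]
  simp only [cvec_zero, cvec_succ, abs_one, abs_neg]
  have : ∀ k : Fin K, |w k| = w k := fun k => abs_of_nonneg (hw k)
  rw [Finset.sum_congr rfl fun k _ => this k, hs]
  norm_num

/-- the key combinatorial bound: the ℓ¹ distance between the two rank-one
coefficient matrices is at most 6 -/
lemma cvec_diff_bound {K : ℕ} (w1 w2 : Fin K → ℝ)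
    (h1 : ∀ k, 0 ≤ w1 k) (hs1 : ∑ k, w1 k = 1)
    (h2 : ∀ k, 0 ≤ w2 k) (hs2 : ∑ k, w2 k = 1) :
    ∑ α, ∑ β, |cvec w1 α * cvec w1 β - cvec w2 α * cvec w2 β| ≤ 6 := by
  rw [Fin.sum_univ_succ]
  have hb1 : ∑ β, |cvec w1 0 * cvec w1 β - cvec w2 0 * cvec w2 β| ≤ 2 := by
    rw [Fin.sum_univ_succ]
    simp only [cvec_zero, cvec_succ, one_mul, mul_one, sub_self, abs_zero, mul_neg]
    rw [zero_add]
    calc ∑ k : Fin K, |-(w1 k) - -(w2 k)| ≤ ∑ k : Fin K, (w1 k + w2 k) := by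
          refine Finset.sum_le_sum fun k _ => ?_
          rw [abs_le]
          constructor <;> [linarith [h1 k, h2 k]; linarith [h1 k, h2 k]]
      _ = 2 := by rw [Finset.sum_add_distrib, hs1, hs2]; norm_num
  have hb2 : ∀ i : Fin K,
      ∑ β, |cvec w1 i.succ * cvec w1 β - cvec w2 i.succ * cvec w2 β|
        ≤ (w1 i + w2 i) + (∑ j, (w1 i * w1 j + w2 i * w2 j)) := by
    intro i
    rw [Fin.sum_univ_succ]
    simp only [cvec_zero, cvec_succ, mul_one, mul_neg, neg_mul, neg_neg]
    refine add_le_add ?_ ?_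
    · rw [abs_le]
      constructor <;> [linarith [h1 i, h2 i]; linarith [h1 i, h2 i]]
    · refine Finset.sum_le_sum fun j _ => ?_
      rw [abs_le]
      have q1 : 0 ≤ w1 i * w1 j := mul_nonneg (h1 i) (h1 j)
      have q2 : 0 ≤ w2 i * w2 j := mul_nonneg (h2 i) (h2 j)
      constructor <;> linarith
  calc (∑ β, |cvec w1 0 * cvec w1 β - cvec w2 0 * cvec w2 β|)
        + ∑ i : Fin K, ∑ β, |cvec w1 i.succ * cvec w1 β - cvec w2 i.succ * cvec w2 β|
      ≤ 2 + ∑ i : Fin K, ((w1 i + w2 i) + (∑ j, (w1 i * w1 j + w2 i * w2 j))) :=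
        add_le_add hb1 (Finset.sum_le_sum fun i _ => hb2 i)
    _ = 6 := by
        rw [Finset.sum_add_distrib, Finset.sum_add_distrib, hs1, hs2]
        have : ∑ i : Fin K, ∑ j : Fin K, (w1 i * w1 j + w2 i * w2 j) = 2 := by
          have e1 : ∀ (w : Fin K → ℝ), (∑ k, w k = 1) →
              ∑ i : Fin K, ∑ j : Fin K, w i * w j = 1 := by
            intro w hw
            rw [← Finset.sum_mul_sum]
            rw [hw]; norm_num
          calc ∑ i : Fin K, ∑ j : Fin K, (w1 i * w1 j + w2 i * w2 j)
              = (∑ i : Fin K, ∑ j : Fin K, w1 i * w1 j)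
                + ∑ i : Fin K, ∑ j : Fin K, w2 i * w2 j := by
                rw [← Finset.sum_add_distrib]
                refine Finset.sum_congr rfl fun i _ => by rw [← Finset.sum_add_distrib]
            _ = 2 := by rw [e1 w1 hs1, e1 w2 hs2]; norm_num
        rw [this]; norm_num

lemma quad_expand {K : ℕ} (w : Fin K → ℝ) (v : Fin (K + 1) → ℝ) :
    (v 0 - ∑ k, w k * v k.succ) ^ 2 = ∑ α, ∑ β, cvec w α * cvec w β * (v α * v β) := by
  rw [cvec_expand w v, sq, Finset.sum_mul_sum]
  refine Finset.sum_congr rfl fun α _ => Finset.sum_congr rfl fun β _ => by ring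

set_option maxHeartbeats 2000000 in
/-- Proposition 1 (finite-sample bound for causal stacking): if the potential outcomes,
the pseudo-outcome and the candidate models are bounded by `L`, then with probability at
least `1 − δ` the stacked model `τ̂_s = Σ_k ŵ_k τ̂_k` obtained by minimizing the empirical
stacking loss over the simplex satisfies
`‖τ̂_s − τ‖₂² ≤ min_k ‖τ̂_k − τ‖₂² + 12 L² √(log(2(K+1)²/δ)/m)`. -/
theorem causal_stacking_finite_sample_bound
    {Ω 𝒳 : Type*} [MeasurableSpace Ω] [MeasurableSpace 𝒳]
    (P : Measure Ω) [IsProbabilityMeasure P]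
    (X : Ω → 𝒳) (Y0 Y1 Z : Ω → ℝ)
    (hX : Measurable X) (hY0 : Measurable Y0) (hY1 : Measurable Y1) (hZ : Measurable Z)
    (hZval : ∀ ω, Z ω = 0 ∨ Z ω = 1)
    (p : ℝ) (hp : p ∈ Set.Ioo (0 : ℝ) 1)
    (hZp : P {ω | Z ω = 1} = ENNReal.ofReal p)
    (hindep : IndepFun Z (fun ω => (X ω, Y0 ω, Y1 ω)) P)
    (Y : Ω → ℝ) (hY : ∀ ω, Y ω = Z ω * Y1 ω + (1 - Z ω) * Y0 ω)
    -- the CATE function: a measurable version of E[Y₁ − Y₀ | X]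
    (τ : 𝒳 → ℝ) (hτm : Measurable τ)
    (hτ : P[fun ω => Y1 ω - Y0 ω | MeasurableSpace.comap X inferInstance]
        =ᵐ[P] fun ω => τ (X ω))
    (μ0 μ1 : 𝒳 → ℝ) (hμ0 : Measurable μ0) (hμ1 : Measurable μ1)
    (K : ℕ) (hK : 0 < K)
    (τk : Fin K → 𝒳 → ℝ) (hτk : ∀ k, Measurable (τk k))
    -- the pseudo-outcome built from the generic sample `(X, Y, Z)`
    (τhat : Ω → ℝ)
    (hτhat : ∀ ω, τhat ω = (μ1 (X ω) - μ0 (X ω))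
        + (Y ω - μ1 (X ω)) * Z ω / p - (Y ω - μ0 (X ω)) * (1 - Z ω) / (1 - p))
    -- boundedness: |Y₀|, |Y₁|, |τ̂| ≤ L and |τ̂_k(X)| ≤ L almost surely
    (L : ℝ) (hL : 0 < L)
    (hbY0 : ∀ᵐ ω ∂P, |Y0 ω| ≤ L) (hbY1 : ∀ᵐ ω ∂P, |Y1 ω| ≤ L)
    (hbτhat : ∀ᵐ ω ∂P, |τhat ω| ≤ L)
    (hbτk : ∀ k, ∀ᵐ ω ∂P, |τk k (X ω)| ≤ L)
    -- the i.i.d. samples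
    (m : ℕ) (hm : 0 < m)
    (Xs : Fin m → Ω → 𝒳) (Ys Zs : Fin m → Ω → ℝ)
    (hXs : ∀ i, Measurable (Xs i)) (hYs : ∀ i, Measurable (Ys i))
    (hZs : ∀ i, Measurable (Zs i))
    (hiid : iIndepFun (fun i ω => (Xs i ω, Ys i ω, Zs i ω)) P)
    (hident : ∀ i, Measure.map (fun ω => (Xs i ω, Ys i ω, Zs i ω)) P
        = Measure.map (fun ω => (X ω, Y ω, Z ω)) P)
    -- the per-sample pseudo-outcomes
    (τhats : Fin m → Ω → ℝ)
    (hτhats : ∀ i ω, τhats i ω = (μ1 (Xs i ω) - μ0 (Xs i ω))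
        + (Ys i ω - μ1 (Xs i ω)) * Zs i ω / p
        - (Ys i ω - μ0 (Xs i ω)) * (1 - Zs i ω) / (1 - p))
    -- ŵ is any minimizer of the empirical stacking loss over the simplex Δ_K
    (what : Ω → Fin K → ℝ)
    (hwhat_mem : ∀ ω, (∀ k, 0 ≤ what ω k) ∧ ∑ k, what ω k = 1)
    (hwhat_min : ∀ ω, ∀ w : Fin K → ℝ, (∀ k, 0 ≤ w k) → (∑ k, w k = 1) →
      (1 / (m : ℝ)) * ∑ i, (τhats i ω - ∑ k, what ω k * τk k (Xs i ω)) ^ 2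
        ≤ (1 / (m : ℝ)) * ∑ i, (τhats i ω - ∑ k, w k * τk k (Xs i ω)) ^ 2)
    (δ : ℝ) (hδ : δ ∈ Set.Ioo (0 : ℝ) 1) :
    1 - ENNReal.ofReal δ ≤
      P {ω | ∫ ω', (∑ k, what ω k * τk k (X ω') - τ (X ω')) ^ 2 ∂P
        ≤ (⨅ k : Fin K, ∫ ω', (τk k (X ω') - τ (X ω')) ^ 2 ∂P)
          + 12 * L ^ 2 * Real.sqrt (Real.log (2 * (K + 1) ^ 2 / δ) / m)} := by
  classical
  obtain ⟨hp0, hp1⟩ := hp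
  obtain ⟨hδ0, hδ1⟩ := hδ
  have hm0 : (m : ℝ) ≠ 0 := Nat.cast_ne_zero.mpr hm.ne'
  have hmpos : (0:ℝ) < m := Nat.cast_pos.mpr hm
  have hYm : Measurable Y := by
    have hYe : Y = fun ω => Z ω * Y1 ω + (1 - Z ω) * Y0 ω := funext hY
    rw [hYe]; exact (hZ.mul hY1).add ((measurable_const.sub hZ).mul hY0)
  -- triple maps
  have hTm : Measurable (fun ω => (X ω, Y ω, Z ω)) := hX.prodMk (hYm.prodMk hZ)
  have hTim : ∀ i, Measurable (fun ω => (Xs i ω, Ys i ω, Zs i ω)) :=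
    fun i => (hXs i).prodMk ((hYs i).prodMk (hZs i))
  -- feature functions on the triple space
  set f0 : 𝒳 × ℝ × ℝ → ℝ := fun v => (μ1 v.1 - μ0 v.1)
      + (v.2.1 - μ1 v.1) * v.2.2 / p - (v.2.1 - μ0 v.1) * (1 - v.2.2) / (1 - p) with hf0def
  have hf0m : Measurable f0 := by
    apply Measurable.sub
    apply Measurable.add
    · exact (hμ1.comp measurable_fst).sub (hμ0.comp measurable_fst)
    · exact (((measurable_fst.comp measurable_snd).sub
        (hμ1.comp measurable_fst)).mul (measurable_snd.comp measurable_snd)).div_const p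
    · exact (((measurable_fst.comp measurable_snd).sub (hμ0.comp measurable_fst)).mul
        (measurable_const.sub (measurable_snd.comp measurable_snd))).div_const (1 - p)
  set F : Fin (K + 1) → 𝒳 × ℝ × ℝ → ℝ :=
    Fin.cases f0 (fun k v => τk k v.1) with hFdef
  have hF0 : ∀ v, F 0 v = f0 v := fun v => rfl
  have hFs : ∀ (k : Fin K) v, F k.succ v = τk k v.1 := by
    intro k v
    rw [hFdef]
    simp
  have hFm : ∀ α, Measurable (F α) := by
    intro α
    induction α using Fin.cases with
    | zero => simpa [hFdef] using hf0m
    | succ k =>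
        have : F k.succ = fun v => τk k v.1 := funext fun v => hFs k v
        rw [this]
        exact (hτk k).comp measurable_fst
  -- pointwise identifications
  have hF0T : ∀ ω, F 0 (X ω, Y ω, Z ω) = τhat ω := by
    intro ω; rw [hF0, hf0def, hτhat ω]
  have hF0Ti : ∀ i ω, F 0 (Xs i ω, Ys i ω, Zs i ω) = τhats i ω := by
    intro i ω; rw [hF0, hf0def, hτhats i ω]
  -- a.e. bounds for features along the generic triple
  have hFbd : ∀ α, ∀ᵐ ω ∂P, |F α (X ω, Y ω, Z ω)| ≤ L := by
    intro α
    induction α using Fin.cases with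
    | zero => filter_upwards [hbτhat] with ω h using by rwa [hF0T ω]
    | succ k => filter_upwards [hbτk k] with ω h using by rwa [hFs k _]
  -- transfer to the samples
  have hFbdi : ∀ α i, ∀ᵐ ω ∂P, |F α (Xs i ω, Ys i ω, Zs i ω)| ≤ L := by
    intro α i
    have hset : MeasurableSet {v : 𝒳 × ℝ × ℝ | |F α v| ≤ L} :=
      measurableSet_le (hFm α).abs measurable_const
    have h1 : ∀ᵐ v ∂(Measure.map (fun ω => (X ω, Y ω, Z ω)) P), |F α v| ≤ L :=
      (ae_map_iff hTm.aemeasurable hset).2 (hFbd α)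
    rw [← hident i] at h1
    exact (ae_map_iff (hTim i).aemeasurable hset).1 h1
  -- transfer of means
  have hmean_transfer : ∀ (φ : 𝒳 × ℝ × ℝ → ℝ), Measurable φ → ∀ i,
      ∫ ω, φ (Xs i ω, Ys i ω, Zs i ω) ∂P = ∫ ω, φ (X ω, Y ω, Z ω) ∂P := by
    intro φ hφ i
    rw [← integral_map (hTim i).aemeasurable hφ.aestronglyMeasurable, hident i,
      integral_map hTm.aemeasurable hφ.aestronglyMeasurable]
  -- Gram matrices
  set G : Fin (K + 1) → Fin (K + 1) → ℝ :=
    fun α β => ∫ ω, F α (X ω, Y ω, Z ω) * F β (X ω, Y ω, Z ω) ∂P with hGdef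
  set Ge : Fin (K + 1) → Fin (K + 1) → Ω → ℝ :=
    fun α β ω => (1 / (m : ℝ)) * ∑ i, F α (Xs i ω, Ys i ω, Zs i ω)
      * F β (Xs i ω, Ys i ω, Zs i ω) with hGedef
  have hGem : ∀ α β, Measurable (Ge α β) := by
    intro α β
    apply Measurable.const_mul
    exact Finset.measurable_sum _ fun i _ =>
      (((hFm α).comp (hTim i)).mul ((hFm β).comp (hTim i)))
  -- constants
  set lam : ℝ := Real.log (2 * (K + 1) ^ 2 / δ) / m with hlamdef
  have hR1 : (1:ℝ) < 2 * (K + 1) ^ 2 / δ := by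
    rw [lt_div_iff₀ hδ0]
    have : (1:ℝ) ≤ (K + 1 : ℝ) ^ 2 := by
      have : (1:ℝ) ≤ (K + 1 : ℝ) := by
        have : (0:ℝ) ≤ (K:ℝ) := Nat.cast_nonneg K
        linarith
      nlinarith
    nlinarith
  have hlam_pos : 0 < lam := div_pos (Real.log_pos hR1) hmpos
  set ε : ℝ := 2 * L ^ 2 * Real.sqrt lam with hεdef
  have hε0 : 0 ≤ ε := by positivity
  -- the concentration bound for a single entry
  have hL2 : (0:ℝ) < L ^ 2 := by positivity
  have hconc : ∀ α β,
      P ({ω | ε ≤ Ge α β ω - G α β} ∪ {ω | ε ≤ G α β - Ge α β ω})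
        ≤ ENNReal.ofReal (2 * Real.exp (-(2 * m * lam))) := by
    intro α β
    set φ : 𝒳 × ℝ × ℝ → ℝ := fun v => F α v * F β v with hφdef
    have hφm : Measurable φ := (hFm α).mul (hFm β)
    have hφbd : ∀ i, ∀ᵐ ω ∂P, |φ (Xs i ω, Ys i ω, Zs i ω)| ≤ L ^ 2 := by
      intro i
      filter_upwards [hFbdi α i, hFbdi β i] with ω h1 h2
      rw [hφdef]
      simp only
      rw [abs_mul, sq]
      exact mul_le_mul h1 h2 (abs_nonneg _) hL.le
    have hφmean : ∀ i, ∫ ω, φ (Xs i ω, Ys i ω, Zs i ω) ∂P = G α β :=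
      fun i => hmean_transfer φ hφm i
    have hexpeq : ∀ u : ℝ, (2 * (m:ℝ) * ε ^ 2 / ((u + L ^ 2) - (u - L ^ 2)) ^ 2)
        = 2 * m * lam := by
      intro u
      rw [hεdef, mul_pow, mul_pow, Real.sq_sqrt hlam_pos.le]
      have h4 : ((u + L ^ 2) - (u - L ^ 2)) = 2 * L ^ 2 := by ring
      rw [h4]
      field_simp
    -- upper tail
    have hup : P {ω | ε ≤ Ge α β ω - G α β} ≤
        ENNReal.ofReal (Real.exp (-(2 * m * lam))) := by
      have hevent : {ω | ε ≤ Ge α β ω - G α β} =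
          {ω | (m : ℝ) * ε ≤ ∑ i, (φ (Xs i ω, Ys i ω, Zs i ω) - G α β)} := by
        ext ω
        simp only [Set.mem_setOf_eq, hGedef]
        rw [Finset.sum_sub_distrib, Finset.sum_const, Finset.card_univ,
          Fintype.card_fin, nsmul_eq_mul]
        rw [one_div, ← div_eq_inv_mul, le_sub_iff_add_le, le_div_iff₀ hmpos,
          le_sub_iff_add_le]
        constructor <;> intro h <;> linarith
      rw [hevent]
      have hWmeas : ∀ i, Measurable (fun ω => φ (Xs i ω, Ys i ω, Zs i ω) - G α β) := by
        intro i
        have : Measurable (fun ω => φ (Xs i ω, Ys i ω, Zs i ω)) := hφm.comp (hTim i)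
        exact this.sub measurable_const
      have hWbd : ∀ i, ∀ᵐ ω ∂P, φ (Xs i ω, Ys i ω, Zs i ω) - G α β
          ∈ Set.Icc (- L ^ 2 - G α β) (L ^ 2 - G α β) := by
        intro i
        filter_upwards [hφbd i] with ω hω
        rw [abs_le] at hω
        exact ⟨by linarith [hω.1], by linarith [hω.2]⟩
      have hWmean : ∀ i, ∫ ω, (φ (Xs i ω, Ys i ω, Zs i ω) - G α β) ∂P = 0 := by
        intro i
        have hφTi : Measurable (fun ω => φ (Xs i ω, Ys i ω, Zs i ω)) := hφm.comp (hTim i)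
        rw [integral_sub (bdd_integrable hφTi.aestronglyMeasurable
          (L ^ 2) (hφbd i)) (integrable_const _), hφmean i, integral_const]
        simp
      have h := hoeffding_sum_tail P
        (fun i ω => φ (Xs i ω, Ys i ω, Zs i ω) - G α β)
        hWmeas
        (hiid.comp (fun _ v => φ v - G α β) (fun _ => hφm.sub measurable_const))
        (- L ^ 2 - G α β) (L ^ 2 - G α β) (by linarith)
        hWbd hWmean ε hε0
      refine h.trans (le_of_eq ?_)
      congr 2
      rw [neg_inj]
      have h2 := hexpeq (- G α β)
      calc 2 * (m:ℝ) * ε ^ 2 / ((L ^ 2 - G α β) - (-L ^ 2 - G α β)) ^ 2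
          = 2 * (m:ℝ) * ε ^ 2 / (((- G α β) + L ^ 2) - ((- G α β) - L ^ 2)) ^ 2 := by
            ring_nf
        _ = 2 * m * lam := h2
    -- lower tail
    have hlo : P {ω | ε ≤ G α β - Ge α β ω} ≤
        ENNReal.ofReal (Real.exp (-(2 * m * lam))) := by
      have hevent : {ω | ε ≤ G α β - Ge α β ω} =
          {ω | (m : ℝ) * ε ≤ ∑ i, (G α β - φ (Xs i ω, Ys i ω, Zs i ω))} := by
        ext ω
        simp only [Set.mem_setOf_eq, hGedef]
        rw [Finset.sum_sub_distrib, Finset.sum_const, Finset.card_univ,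
          Fintype.card_fin, nsmul_eq_mul]
        rw [one_div, ← div_eq_inv_mul, le_sub_comm, div_le_iff₀ hmpos]
        constructor <;> intro h <;> linarith
      rw [hevent]
      have hWmeas : ∀ i, Measurable (fun ω => G α β - φ (Xs i ω, Ys i ω, Zs i ω)) := by
        intro i
        have : Measurable (fun ω => φ (Xs i ω, Ys i ω, Zs i ω)) := hφm.comp (hTim i)
        exact measurable_const.sub this
      have hWbd : ∀ i, ∀ᵐ ω ∂P, G α β - φ (Xs i ω, Ys i ω, Zs i ω)
          ∈ Set.Icc (G α β - L ^ 2) (G α β + L ^ 2) := by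
        intro i
        filter_upwards [hφbd i] with ω hω
        rw [abs_le] at hω
        exact ⟨by linarith [hω.2], by linarith [hω.1]⟩
      have hWmean : ∀ i, ∫ ω, (G α β - φ (Xs i ω, Ys i ω, Zs i ω)) ∂P = 0 := by
        intro i
        have hφTi : Measurable (fun ω => φ (Xs i ω, Ys i ω, Zs i ω)) := hφm.comp (hTim i)
        rw [integral_sub (integrable_const _)
          (bdd_integrable hφTi.aestronglyMeasurable (L ^ 2) (hφbd i)),
          hφmean i, integral_const]
        simp
      have h := hoeffding_sum_tail P
        (fun i ω => G α β - φ (Xs i ω, Ys i ω, Zs i ω))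
        hWmeas
        (hiid.comp (fun _ v => G α β - φ v) (fun _ => measurable_const.sub hφm))
        (G α β - L ^ 2) (G α β + L ^ 2) (by linarith)
        hWbd hWmean ε hε0
      refine h.trans (le_of_eq ?_)
      congr 2
      rw [neg_inj]
      have h2 := hexpeq (G α β)
      calc 2 * (m:ℝ) * ε ^ 2 / ((G α β + L ^ 2) - (G α β - L ^ 2)) ^ 2
          = 2 * (m:ℝ) * ε ^ 2 / (((G α β) + L ^ 2) - ((G α β) - L ^ 2)) ^ 2 := by ring_nf
        _ = 2 * m * lam := h2
    calc P ({ω | ε ≤ Ge α β ω - G α β} ∪ {ω | ε ≤ G α β - Ge α β ω})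
        ≤ P {ω | ε ≤ Ge α β ω - G α β} + P {ω | ε ≤ G α β - Ge α β ω} :=
          measure_union_le _ _
      _ ≤ ENNReal.ofReal (Real.exp (-(2 * m * lam)))
          + ENNReal.ofReal (Real.exp (-(2 * m * lam))) := add_le_add hup hlo
      _ = ENNReal.ofReal (2 * Real.exp (-(2 * m * lam))) := by
          rw [← ENNReal.ofReal_add (Real.exp_pos _).le (Real.exp_pos _).le]
          ring_nf
  -- the bad event
  set Bad : Set Ω := ⋃ q ∈ (Finset.univ : Finset (Fin (K + 1) × Fin (K + 1))),
    ({ω | ε ≤ Ge q.1 q.2 ω - G q.1 q.2} ∪ {ω | ε ≤ G q.1 q.2 - Ge q.1 q.2 ω}) with hBaddef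
  have hBadMeas : MeasurableSet Bad := by
    refine MeasurableSet.biUnion (Finset.countable_toSet _) fun q _ => ?_
    refine MeasurableSet.union ?_ ?_
    · exact measurableSet_le measurable_const ((hGem q.1 q.2).sub measurable_const)
    · exact measurableSet_le measurable_const (measurable_const.sub (hGem q.1 q.2))
  have hPBad : P Bad ≤ ENNReal.ofReal δ := by
    have hRpos : (0:ℝ) < 2 * (K + 1) ^ 2 / δ := by positivity
    have hA1 : (1:ℝ) ≤ ((K:ℝ) + 1) ^ 2 := by
      have : (0:ℝ) ≤ (K:ℝ) := Nat.cast_nonneg K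
      nlinarith
    have hexp : Real.exp (-(2 * m * lam)) = (δ / (2 * ((K:ℝ) + 1) ^ 2)) ^ 2 := by
      have hmlam : (m : ℝ) * lam = Real.log (2 * ((K:ℝ) + 1) ^ 2 / δ) := by
        rw [hlamdef]; field_simp
      rw [show -(2 * (m:ℝ) * lam) = (-((m:ℝ) * lam)) + (-((m:ℝ) * lam)) by ring,
        Real.exp_add, Real.exp_neg, hmlam, Real.exp_log hRpos, inv_div, sq]
      ring
    have hnum : ((K + 1) * (K + 1) : ℝ) * (2 * Real.exp (-(2 * m * lam))) ≤ δ := by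
      rw [hexp]
      have heq : (((K:ℝ) + 1) * ((K:ℝ) + 1)) * (2 * (δ / (2 * ((K:ℝ) + 1) ^ 2)) ^ 2)
          = δ ^ 2 / (2 * ((K:ℝ) + 1) ^ 2) := by
        field_simp
      rw [heq, div_le_iff₀ (by positivity)]
      nlinarith [hA1, hδ0.le, hδ1.le]
    calc P Bad ≤ ∑ q ∈ (Finset.univ : Finset (Fin (K + 1) × Fin (K + 1))),
          P ({ω | ε ≤ Ge q.1 q.2 ω - G q.1 q.2} ∪ {ω | ε ≤ G q.1 q.2 - Ge q.1 q.2 ω}) :=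
          measure_biUnion_finset_le _ _
      _ ≤ ∑ _q ∈ (Finset.univ : Finset (Fin (K + 1) × Fin (K + 1))),
          ENNReal.ofReal (2 * Real.exp (-(2 * m * lam))) :=
          Finset.sum_le_sum fun q _ => hconc q.1 q.2
      _ = ((K + 1) * (K + 1) : ℕ) * ENNReal.ofReal (2 * Real.exp (-(2 * m * lam))) := by
          rw [Finset.sum_const, Finset.card_univ, Fintype.card_prod, Fintype.card_fin,
            nsmul_eq_mul]
      _ = ENNReal.ofReal (((K + 1) * (K + 1) : ℝ) * (2 * Real.exp (-(2 * m * lam)))) := by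
          rw [← ENNReal.ofReal_natCast ((K + 1) * (K + 1)),
            ← ENNReal.ofReal_mul (by positivity)]
          congr 1
          push_cast
          ring
      _ ≤ ENNReal.ofReal δ := ENNReal.ofReal_le_ofReal hnum
  -- on the good event the oracle inequality holds
  -- measurability of τhat and bound for τ (X ·)
  have hτhatm : Measurable τhat := by
    have he : τhat = fun ω => F 0 (X ω, Y ω, Z ω) := funext fun ω => (hF0T ω).symm
    rw [he]; exact (hFm 0).comp hTm
  have hm' : MeasurableSpace.comap X inferInstance ≤ (inferInstance : MeasurableSpace Ω) :=
    hX.comap_le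
  haveI : SigmaFinite (P.trim hm') := by infer_instance
  have hY10int : Integrable (fun ω => Y1 ω - Y0 ω) P := by
    refine bdd_integrable (hY1.sub hY0).aestronglyMeasurable (2 * L) ?_
    filter_upwards [hbY0, hbY1] with ω h0 h1
    rw [abs_le] at h0 h1 ⊢
    constructor <;> linarith [h0.1, h0.2, h1.1, h1.2]
  have hτbd : ∀ᵐ ω ∂P, |τ (X ω)| ≤ 2 * L := by
    have hub : (fun ω => Y1 ω - Y0 ω) ≤ᵐ[P] fun _ => 2 * L := by
      filter_upwards [hbY0, hbY1] with ω h0 h1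
      rw [abs_le] at h0 h1; show Y1 ω - Y0 ω ≤ 2 * L; linarith [h0.1, h0.2, h1.1, h1.2]
    have hlb : (fun _ => -(2 * L)) ≤ᵐ[P] fun ω => Y1 ω - Y0 ω := by
      filter_upwards [hbY0, hbY1] with ω h0 h1
      rw [abs_le] at h0 h1; show -(2 * L) ≤ Y1 ω - Y0 ω; linarith [h0.1, h0.2, h1.1, h1.2]
    have h1 := condExp_mono (μ := P) (m := MeasurableSpace.comap X inferInstance)
      hY10int (integrable_const (2 * L)) hub
    have h2 := condExp_mono (μ := P) (m := MeasurableSpace.comap X inferInstance)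
      (integrable_const (-(2 * L))) hY10int hlb
    rw [condExp_const hm' (2 * L)] at h1
    rw [condExp_const hm' (-(2 * L))] at h2
    filter_upwards [h1, h2, hτ] with ω hh1 hh2 hh3
    rw [← hh3, abs_le]
    exact ⟨hh2, hh1⟩
  -- integrability of feature products along the generic triple
  have hFTm : ∀ α, Measurable (fun ω' => F α (X ω', Y ω', Z ω')) :=
    fun α => (hFm α).comp hTm
  have hFFint : ∀ α β, Integrable
      (fun ω' => F α (X ω', Y ω', Z ω') * F β (X ω', Y ω', Z ω')) P := by
    intro α β
    refine bdd_integrable ((hFTm α).mul (hFTm β)).aestronglyMeasurable (L ^ 2) ?_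
    filter_upwards [hFbd α, hFbd β] with ω h1 h2
    rw [abs_mul, sq]
    exact mul_le_mul h1 h2 (abs_nonneg _) hL.le
  -- population quadratic expansion
  have claimB : ∀ w : Fin K → ℝ, ∫ ω', (τhat ω' - ∑ k, w k * τk k (X ω')) ^ 2 ∂P
      = ∑ α, ∑ β, cvec w α * cvec w β * G α β := by
    intro w
    have hpt : ∀ ω', (τhat ω' - ∑ k, w k * τk k (X ω')) ^ 2
        = ∑ α, ∑ β, cvec w α * cvec w β
          * (F α (X ω', Y ω', Z ω') * F β (X ω', Y ω', Z ω')) := by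
      intro ω'
      have h := quad_expand w (fun α => F α (X ω', Y ω', Z ω'))
      rw [hF0T ω'] at h
      simp only [hFs] at h
      exact h
    have hint1 : ∀ α β : Fin (K + 1), Integrable (fun ω' => cvec w α * cvec w β
        * (F α (X ω', Y ω', Z ω') * F β (X ω', Y ω', Z ω'))) P :=
      fun α β => (hFFint α β).const_mul _
    calc ∫ ω', (τhat ω' - ∑ k, w k * τk k (X ω')) ^ 2 ∂P
        = ∫ ω', ∑ α, ∑ β, cvec w α * cvec w β
            * (F α (X ω', Y ω', Z ω') * F β (X ω', Y ω', Z ω')) ∂P :=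
          integral_congr_ae (Filter.Eventually.of_forall fun ω' => hpt ω')
      _ = ∑ α, ∫ ω', ∑ β, cvec w α * cvec w β
            * (F α (X ω', Y ω', Z ω') * F β (X ω', Y ω', Z ω')) ∂P :=
          integral_finset_sum _ fun α _ => integrable_finset_sum _ fun β _ => hint1 α β
      _ = ∑ α, ∑ β, ∫ ω', cvec w α * cvec w β
            * (F α (X ω', Y ω', Z ω') * F β (X ω', Y ω', Z ω')) ∂P :=
          Finset.sum_congr rfl fun α _ => integral_finset_sum _ fun β _ => hint1 α β
      _ = ∑ α, ∑ β, cvec w α * cvec w β * G α β := by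
          refine Finset.sum_congr rfl fun α _ => Finset.sum_congr rfl fun β _ => ?_
          rw [integral_const_mul]
  -- empirical quadratic expansion
  have claimA : ∀ (w : Fin K → ℝ) (ω : Ω),
      (1 / (m : ℝ)) * ∑ i, (τhats i ω - ∑ k, w k * τk k (Xs i ω)) ^ 2
      = ∑ α, ∑ β, cvec w α * cvec w β * Ge α β ω := by
    intro w ω
    have hpt : ∀ i, (τhats i ω - ∑ k, w k * τk k (Xs i ω)) ^ 2
        = ∑ α, ∑ β, cvec w α * cvec w β
          * (F α (Xs i ω, Ys i ω, Zs i ω) * F β (Xs i ω, Ys i ω, Zs i ω)) := by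
      intro i
      have h := quad_expand w (fun α => F α (Xs i ω, Ys i ω, Zs i ω))
      rw [hF0Ti i ω] at h
      simp only [hFs] at h
      exact h
    calc (1 / (m : ℝ)) * ∑ i, (τhats i ω - ∑ k, w k * τk k (Xs i ω)) ^ 2
        = (1 / (m : ℝ)) * ∑ i, ∑ α, ∑ β, cvec w α * cvec w β
            * (F α (Xs i ω, Ys i ω, Zs i ω) * F β (Xs i ω, Ys i ω, Zs i ω)) := by
          rw [Finset.sum_congr rfl fun i _ => hpt i]
      _ = (1 / (m : ℝ)) * ∑ α, ∑ β, ∑ i, cvec w α * cvec w β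
            * (F α (Xs i ω, Ys i ω, Zs i ω) * F β (Xs i ω, Ys i ω, Zs i ω)) := by
          congr 1
          rw [Finset.sum_comm]
          exact Finset.sum_congr rfl fun α _ => Finset.sum_comm
      _ = ∑ α, ∑ β, cvec w α * cvec w β * Ge α β ω := by
          rw [Finset.mul_sum]
          refine Finset.sum_congr rfl fun α _ => ?_
          rw [Finset.mul_sum]
          refine Finset.sum_congr rfl fun β _ => ?_
          rw [← Finset.mul_sum, hGedef]
          simp only
          ring
  -- the loss decomposition
  have claimC : ∀ w : Fin K → ℝ, (∀ k, 0 ≤ w k) → (∑ k, w k = 1) →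
      (∑ α, ∑ β, cvec w α * cvec w β * G α β)
      = (∫ ω', (τhat ω' - τ (X ω')) ^ 2 ∂P)
        + ∫ ω', (∑ k, w k * τk k (X ω') - τ (X ω')) ^ 2 ∂P := by
    intro w hw hs
    rw [← claimB w]
    have hgm : Measurable (fun x => τ x - ∑ k, w k * τk k x) :=
      hτm.sub (Finset.measurable_sum _ fun k _ => (hτk k).const_mul (w k))
    have hfw_bd : ∀ᵐ ω' ∂P, |∑ k, w k * τk k (X ω')| ≤ L := by
      have hall : ∀ᵐ ω' ∂P, ∀ k, |τk k (X ω')| ≤ L := ae_all_iff.2 hbτk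
      filter_upwards [hall] with ω' h
      calc |∑ k, w k * τk k (X ω')| ≤ ∑ k, |w k * τk k (X ω')| :=
            Finset.abs_sum_le_sum_abs _ _
        _ ≤ ∑ k, w k * L := by
            refine Finset.sum_le_sum fun k _ => ?_
            rw [abs_mul, abs_of_nonneg (hw k)]
            exact mul_le_mul_of_nonneg_left (h k) (hw k)
        _ = 1 * L := by rw [← Finset.sum_mul, hs]
        _ = L := one_mul L
    have hcross : ∫ ω', (τhat ω' - τ (X ω'))
        * (τ (X ω') - ∑ k, w k * τk k (X ω')) ∂P = 0 := by
      refine cross_zero P X Y0 Y1 Z hX hY0 hY1 hZ hZval p ⟨hp0, hp1⟩ hZp hindep Y hY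
        τ hτm hτ μ0 μ1 hμ0 hμ1 τhat hτhat L hL hbY0 hbY1 hbτhat
        (fun x => τ x - ∑ k, w k * τk k x) hgm (3 * L) ?_
      filter_upwards [hτbd, hfw_bd] with ω' h1 h2
      rw [abs_le] at h1 h2 ⊢
      constructor <;> [linarith [h1.1, h2.2]; linarith [h1.2, h2.1]]
    have hfwXm : Measurable (fun ω' => ∑ k, w k * τk k (X ω')) :=
      Finset.measurable_sum _ fun k _ => ((hτk k).comp hX).const_mul (w k)
    have hτXm : Measurable (fun ω' => τ (X ω')) := hτm.comp hX
    have I1 : Integrable (fun ω' => (τhat ω' - τ (X ω')) ^ 2) P := by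
      refine bdd_integrable ((hτhatm.sub hτXm).pow_const 2).aestronglyMeasurable
        ((3 * L) ^ 2) ?_
      filter_upwards [hbτhat, hτbd] with ω' h1 h2
      rw [abs_le] at h1 h2
      rw [abs_le]
      constructor
      · nlinarith [sq_nonneg (τhat ω' - τ (X ω')), hL.le]
      · nlinarith [h1.1, h1.2, h2.1, h2.2, hL.le]
    have I2 : Integrable (fun ω' => (∑ k, w k * τk k (X ω') - τ (X ω')) ^ 2) P := by
      refine bdd_integrable ((hfwXm.sub hτXm).pow_const 2).aestronglyMeasurable
        ((3 * L) ^ 2) ?_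
      filter_upwards [hfw_bd, hτbd] with ω' h1 h2
      rw [abs_le] at h1 h2
      rw [abs_le]
      constructor
      · nlinarith [sq_nonneg (∑ k, w k * τk k (X ω') - τ (X ω')), hL.le]
      · nlinarith [h1.1, h1.2, h2.1, h2.2, hL.le]
    have I3 : Integrable (fun ω' => (τhat ω' - τ (X ω'))
        * (τ (X ω') - ∑ k, w k * τk k (X ω'))) P := by
      refine bdd_integrable ((hτhatm.sub hτXm).mul
        (hτXm.sub hfwXm)).aestronglyMeasurable ((3 * L) * (3 * L)) ?_
      filter_upwards [hbτhat, hτbd, hfw_bd] with ω' h1 h2 h3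
      rw [abs_mul]
      have b1 : |τhat ω' - τ (X ω')| ≤ 3 * L := by
        rw [abs_le] at h1 h2 ⊢; constructor <;> linarith [h1.1, h1.2, h2.1, h2.2]
      have b2 : |τ (X ω') - ∑ k, w k * τk k (X ω')| ≤ 3 * L := by
        rw [abs_le] at h2 h3 ⊢; constructor <;> linarith [h2.1, h2.2, h3.1, h3.2]
      exact mul_le_mul b1 b2 (abs_nonneg _) (by linarith)
    calc ∫ ω', (τhat ω' - ∑ k, w k * τk k (X ω')) ^ 2 ∂P
        = ∫ ω', ((τhat ω' - τ (X ω')) ^ 2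
            + (∑ k, w k * τk k (X ω') - τ (X ω')) ^ 2
            + 2 * ((τhat ω' - τ (X ω'))
              * (τ (X ω') - ∑ k, w k * τk k (X ω')))) ∂P :=
          integral_congr_ae (Filter.Eventually.of_forall fun ω' => by ring)
      _ = (∫ ω', ((τhat ω' - τ (X ω')) ^ 2
            + (∑ k, w k * τk k (X ω') - τ (X ω')) ^ 2) ∂P)
            + ∫ ω', 2 * ((τhat ω' - τ (X ω'))
              * (τ (X ω') - ∑ k, w k * τk k (X ω'))) ∂P :=
          integral_add (I1.add I2) (I3.const_mul 2)
      _ = (∫ ω', (τhat ω' - τ (X ω')) ^ 2 ∂P)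
            + (∫ ω', (∑ k, w k * τk k (X ω') - τ (X ω')) ^ 2 ∂P)
            + 2 * ∫ ω', (τhat ω' - τ (X ω'))
              * (τ (X ω') - ∑ k, w k * τk k (X ω')) ∂P := by
          rw [integral_add I1 I2, integral_const_mul]
      _ = (∫ ω', (τhat ω' - τ (X ω')) ^ 2 ∂P)
            + ∫ ω', (∑ k, w k * τk k (X ω') - τ (X ω')) ^ 2 ∂P := by
          rw [hcross]; ring
  -- vertex weights
  set evtx : Fin K → Fin K → ℝ := fun k0 j => if j = k0 then 1 else 0 with hevdef
  have hev_nonneg : ∀ k0 j, 0 ≤ evtx k0 j := by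
    intro k0 j; rw [hevdef]; dsimp only; split <;> norm_num
  have hev_sum : ∀ k0, ∑ j, evtx k0 j = 1 := by
    intro k0; rw [hevdef]; simp
  have hev_val : ∀ (k0 : Fin K) (x : 𝒳), ∑ j, evtx k0 j * τk j x = τk k0 x := by
    intro k0 x; rw [hevdef]; simp [ite_mul]
  have hεeq : 6 * ε = 12 * L ^ 2 * Real.sqrt lam := by rw [hεdef]; ring
  have hgood : Badᶜ ⊆ {ω | ∫ ω', (∑ k, what ω k * τk k (X ω') - τ (X ω')) ^ 2 ∂P
        ≤ (⨅ k : Fin K, ∫ ω', (τk k (X ω') - τ (X ω')) ^ 2 ∂P)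
          + 12 * L ^ 2 * Real.sqrt (Real.log (2 * (K + 1) ^ 2 / δ) / m)} := by
    intro ω hω
    have hdev : ∀ α β, |G α β - Ge α β ω| ≤ ε := by
      intro α β
      have hq : ω ∉ ({ω | ε ≤ Ge α β ω - G α β} ∪ {ω | ε ≤ G α β - Ge α β ω}) := by
        intro hmem
        exact hω (Set.mem_biUnion
          (Finset.mem_univ ((α, β) : Fin (K + 1) × Fin (K + 1))) hmem)
      rw [Set.mem_union] at hq
      push_neg at hq
      obtain ⟨h1, h2⟩ := hq
      rw [Set.mem_setOf_eq, not_le] at h1 h2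
      rw [abs_sub_le_iff]
      exact ⟨le_of_lt h2, le_of_lt h1⟩
    obtain ⟨hwnn, hwsum⟩ := hwhat_mem ω
    have hkey : ∀ k0 : Fin K,
        ∫ ω', (∑ k, what ω k * τk k (X ω') - τ (X ω')) ^ 2 ∂P
        ≤ (∫ ω', (τk k0 (X ω') - τ (X ω')) ^ 2 ∂P) + 6 * ε := by
      intro k0
      have h1 := claimC (what ω) hwnn hwsum
      have h2 := claimC (evtx k0) (hev_nonneg k0) (hev_sum k0)
      have h3 : ∫ ω', (∑ k, evtx k0 k * τk k (X ω') - τ (X ω')) ^ 2 ∂P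
          = ∫ ω', (τk k0 (X ω') - τ (X ω')) ^ 2 ∂P := by
        congr 1; funext ω'; rw [hev_val k0 (X ω')]
      rw [h3] at h2
      -- empirical comparison
      have hemp : (∑ α, ∑ β, cvec (what ω) α * cvec (what ω) β * Ge α β ω)
          ≤ ∑ α, ∑ β, cvec (evtx k0) α * cvec (evtx k0) β * Ge α β ω := by
        have hmin := hwhat_min ω (evtx k0) (hev_nonneg k0) (hev_sum k0)
        rw [claimA (what ω) ω, claimA (evtx k0) ω] at hmin
        exact hmin
      -- deviation bound on the gap
      have hbound : (∑ α, ∑ β, (cvec (what ω) α * cvec (what ω) β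
            - cvec (evtx k0) α * cvec (evtx k0) β) * (G α β - Ge α β ω)) ≤ 6 * ε := by
        calc (∑ α, ∑ β, (cvec (what ω) α * cvec (what ω) β
              - cvec (evtx k0) α * cvec (evtx k0) β) * (G α β - Ge α β ω))
            ≤ ∑ α, ∑ β, |cvec (what ω) α * cvec (what ω) β
              - cvec (evtx k0) α * cvec (evtx k0) β| * ε := by
              refine Finset.sum_le_sum fun α _ => Finset.sum_le_sum fun β _ => ?_
              calc (cvec (what ω) α * cvec (what ω) β
                    - cvec (evtx k0) α * cvec (evtx k0) β) * (G α β - Ge α β ω)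
                  ≤ |(cvec (what ω) α * cvec (what ω) β
                    - cvec (evtx k0) α * cvec (evtx k0) β) * (G α β - Ge α β ω)| :=
                    le_abs_self _
                _ = |cvec (what ω) α * cvec (what ω) β
                    - cvec (evtx k0) α * cvec (evtx k0) β| * |G α β - Ge α β ω| :=
                    abs_mul _ _
                _ ≤ |cvec (what ω) α * cvec (what ω) β
                    - cvec (evtx k0) α * cvec (evtx k0) β| * ε :=
                    mul_le_mul_of_nonneg_left (hdev α β) (abs_nonneg _)
          _ = (∑ α, ∑ β, |cvec (what ω) α * cvec (what ω) β
              - cvec (evtx k0) α * cvec (evtx k0) β|) * ε := by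
              rw [Finset.sum_mul]
              exact Finset.sum_congr rfl fun α _ => (Finset.sum_mul _ _ _).symm
          _ ≤ 6 * ε := by
              refine mul_le_mul_of_nonneg_right ?_ hε0
              exact cvec_diff_bound (what ω) (evtx k0) hwnn hwsum
                (hev_nonneg k0) (hev_sum k0)
      have houter : (∑ α, ∑ β, cvec (what ω) α * cvec (what ω) β * G α β)
            - (∑ α, ∑ β, cvec (what ω) α * cvec (what ω) β * Ge α β ω)
            + ((∑ α, ∑ β, cvec (evtx k0) α * cvec (evtx k0) β * Ge α β ω)
            - (∑ α, ∑ β, cvec (evtx k0) α * cvec (evtx k0) β * G α β))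
          = ∑ α, ∑ β, (cvec (what ω) α * cvec (what ω) β
            - cvec (evtx k0) α * cvec (evtx k0) β) * (G α β - Ge α β ω) := by
        simp only [sub_mul, mul_sub, Finset.sum_sub_distrib]
        ring
      linarith [h1, h2, hemp, hbound, houter.ge, houter.le]
    rw [Set.mem_setOf_eq, ← hlamdef]
    have hinf : ∫ ω', (∑ k, what ω k * τk k (X ω') - τ (X ω')) ^ 2 ∂P
        - 12 * L ^ 2 * Real.sqrt lam
        ≤ ⨅ k : Fin K, ∫ ω', (τk k (X ω') - τ (X ω')) ^ 2 ∂P := by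
      haveI : Nonempty (Fin K) := ⟨⟨0, hK⟩⟩
      refine le_ciInf fun k0 => ?_
      have := hkey k0
      rw [hεeq] at this
      linarith
    linarith [hinf]
  calc 1 - ENNReal.ofReal δ ≤ 1 - P Bad := tsub_le_tsub_left hPBad 1
    _ = P Badᶜ := (prob_compl_eq_one_sub hBadMeas).symm
    _ ≤ P _ := measure_mono hgood
end

section
/- Let L > 0 and suppose that almost surely |τ̂| ≤ L and |τ̂_k(X)| ≤ L for every k ∈ {1,…,K}. Let (X_i, Y_i, Z_i), i = 1,…,m, be i.i.d. copies of (X, Y, Z), and let ŵ be any minimizer of the empirical stacking loss ℓ̂ over the simplex Δ_K. Then for every δ ∈ (0,1), with probability at least 1 − δ, ‖Σ_k ŵ_k τ̂_k − τ‖₂² ≤ min_{w ∈ Δ_K} ‖Σ_k w_k τ̂_k − τ‖₂² + 8√2 · L² √(log(2(K+1)²/δ)/m). In particular the stacked model is competitive with the best convex combination of the candidate models, not merely the best single candidate. -/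
open MeasureTheory ProbabilityTheory Real

private lemma cso_quad (c u : ℝ) : c * u - c * c ≤ 1 / 4 * u ^ 2 := by
  nlinarith [sq_nonneg (u - 2 * c)]

private lemma cso_u_pos (θ : ℝ) (hθ0 : 0 ≤ θ) (hθ1 : θ ≤ 1) (x : ℝ) :
    0 < 1 - θ + θ * Real.exp x := by
  rcases lt_or_eq_of_le hθ1 with h | h
  · nlinarith [Real.exp_pos x, mul_nonneg hθ0 (Real.exp_pos x).le]
  · subst h; simpa using Real.exp_pos x

private lemma cso_phi_nonneg (θ : ℝ) (hθ0 : 0 ≤ θ) (hθ1 : θ ≤ 1) (h : ℝ) :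
    0 ≤ h ^ 2 / 8 + θ * h - Real.log (1 - θ + θ * Real.exp h) := by
  set u : ℝ → ℝ := fun x => 1 - θ + θ * Real.exp x with hu_def
  have hu : ∀ x, 0 < u x := cso_u_pos θ hθ0 hθ1
  set φ : ℝ → ℝ := fun x => x ^ 2 / 8 + θ * x - Real.log (u x) with hφ_def
  set ψ : ℝ → ℝ := fun x => x / 4 + θ - θ * Real.exp x / u x with hψ_def
  have hdu : ∀ x, HasDerivAt u (θ * Real.exp x) x := fun x =>
    ((Real.hasDerivAt_exp x).const_mul θ).const_add (1 - θ)
  have hdφ : ∀ x, HasDerivAt φ (ψ x) x := by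
    intro x
    have h1 : HasDerivAt (fun x : ℝ => x ^ 2 / 8 + θ * x) (x / 4 + θ) x := by
      have := ((hasDerivAt_pow 2 x).div_const 8).add ((hasDerivAt_id x).const_mul θ)
      refine this.congr_deriv ?_; push_cast; ring
    have h3 : HasDerivAt (fun x => Real.log (u x)) (θ * Real.exp x / u x) x :=
      (hdu x).log (hu x).ne'
    exact h1.sub h3
  have hdψ : ∀ x, HasDerivAt ψ
      (1 / 4 - (θ * Real.exp x * u x - θ * Real.exp x * (θ * Real.exp x)) / (u x) ^ 2) x := by
    intro x
    have h1 : HasDerivAt (fun x : ℝ => x / 4 + θ) (1 / 4) x := by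
      simpa using ((hasDerivAt_id x).div_const 4).add_const θ
    have h2 : HasDerivAt (fun x => θ * Real.exp x / u x)
        ((θ * Real.exp x * u x - θ * Real.exp x * (θ * Real.exp x)) / (u x) ^ 2) x :=
      ((Real.hasDerivAt_exp x).const_mul θ).div (hdu x) (hu x).ne'
    exact h1.sub h2
  have hψ_deriv_nonneg : ∀ x, 0 ≤ deriv ψ x := by
    intro x
    rw [(hdψ x).deriv]
    have hux := hu x
    rw [sub_nonneg, div_le_iff₀ (by positivity)]
    have := cso_quad (θ * Real.exp x) (u x)
    nlinarith [this]
  have hψ_mono : Monotone ψ :=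
    monotone_of_deriv_nonneg (fun x => (hdψ x).differentiableAt) hψ_deriv_nonneg
  have hψ0 : ψ 0 = 0 := by
    simp only [hψ_def, hu_def]
    rw [Real.exp_zero]
    field_simp
    ring
  have hφdiff : Differentiable ℝ φ := fun x => (hdφ x).differentiableAt
  have hderivφ : ∀ x, deriv φ x = ψ x := fun x => (hdφ x).deriv
  have hφ0 : φ 0 = 0 := by
    simp only [hφ_def, hu_def]
    rw [Real.exp_zero]
    norm_num
  have hmonoIci : MonotoneOn φ (Set.Ici 0) := by
    refine monotoneOn_of_deriv_nonneg (convex_Ici 0) hφdiff.continuous.continuousOn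
      (hφdiff.differentiableOn) ?_
    intro x hx
    rw [interior_Ici] at hx
    rw [hderivφ x, ← hψ0]
    exact hψ_mono hx.le
  have hantiIic : AntitoneOn φ (Set.Iic 0) := by
    refine antitoneOn_of_deriv_nonpos (convex_Iic 0) hφdiff.continuous.continuousOn
      (hφdiff.differentiableOn) ?_
    intro x hx
    rw [interior_Iic] at hx
    rw [hderivφ x, ← hψ0]
    exact hψ_mono hx.le
  have hφh : 0 ≤ φ h := by
    rcases le_total 0 h with hh | hh
    · rw [← hφ0]; exact hmonoIci Set.self_mem_Ici hh hh
    · rw [← hφ0]; exact hantiIic hh Set.self_mem_Iic hh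
  simpa [hφ_def, hu_def] using hφh

/-- The key scalar inequality in Hoeffding's lemma. -/

private lemma cso_key_ineq (θ h : ℝ) (hθ0 : 0 ≤ θ) (hθ1 : θ ≤ 1) :
    (1 - θ) * Real.exp (-θ * h) + θ * Real.exp ((1 - θ) * h) ≤ Real.exp (h ^ 2 / 8) := by
  have hu := cso_u_pos θ hθ0 hθ1 h
  have hφ := cso_phi_nonneg θ hθ0 hθ1 h
  have h1 : (1 - θ) * Real.exp (-θ * h) + θ * Real.exp ((1 - θ) * h)
      = Real.exp (-θ * h) * (1 - θ + θ * Real.exp h) := by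
    rw [show (1 - θ) * h = -θ * h + h by ring, Real.exp_add]
    ring
  rw [h1]
  have h2 : (1 - θ + θ * Real.exp h) ≤ Real.exp (h ^ 2 / 8 + θ * h) := by
    rw [← Real.exp_log hu]
    exact Real.exp_le_exp.2 (by linarith)
  calc Real.exp (-θ * h) * (1 - θ + θ * Real.exp h)
      ≤ Real.exp (-θ * h) * Real.exp (h ^ 2 / 8 + θ * h) :=
        mul_le_mul_of_nonneg_left h2 (Real.exp_pos _).le
    _ = Real.exp (h ^ 2 / 8) := by rw [← Real.exp_add]; ring_nf

private lemma cso_abs_le_of_mem {x a b : ℝ} (h1 : a ≤ x) (h2 : x ≤ b) : |x| ≤ |a| ⊔ |b| := by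
  refine abs_le.2 ⟨?_, ?_⟩
  · have ha := neg_abs_le a
    have : -(|a| ⊔ |b|) ≤ -|a| := neg_le_neg le_sup_left
    linarith
  · have hb := le_abs_self b
    have : |b| ≤ |a| ⊔ |b| := le_sup_right
    linarith

private lemma cso_integrable_of_bound {Ω : Type*} [MeasurableSpace Ω] (P : Measure Ω)
    [IsProbabilityMeasure P] (f : Ω → ℝ) (hf : AEStronglyMeasurable f P) (C : ℝ)
    (hb : ∀ᵐ ω ∂P, |f ω| ≤ C) : Integrable f P :=
  (integrable_const C).mono' hf (by simpa using hb)

/-- Hoeffding's lemma. -/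

private lemma cso_hoeffding_lemma {Ω : Type*} [MeasurableSpace Ω] (P : Measure Ω)
    [IsProbabilityMeasure P] (V : Ω → ℝ) (hV : Measurable V) (a b : ℝ) (hab : a < b)
    (hmem : ∀ᵐ ω ∂P, V ω ∈ Set.Icc a b) (hmean : ∫ ω, V ω ∂P = 0) (t : ℝ) :
    mgf V P t ≤ Real.exp (t ^ 2 * (b - a) ^ 2 / 8) := by
  have hVint : Integrable V P :=
    cso_integrable_of_bound P V hV.aestronglyMeasurable (|a| ⊔ |b|)
      (hmem.mono fun ω h => cso_abs_le_of_mem h.1 h.2)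
  have ha0 : a ≤ 0 := by
    have := integral_mono_ae (integrable_const a) hVint (hmem.mono fun ω h => h.1)
    simpa [hmean] using this
  have hb0 : 0 ≤ b := by
    have := integral_mono_ae hVint (integrable_const b) (hmem.mono fun ω h => h.2)
    simpa [hmean] using this
  set e1 := Real.exp (t * a) with he1
  set e2 := Real.exp (t * b) with he2
  have hba : (0:ℝ) < b - a := by linarith
  -- pointwise convexity bound
  have hpt : ∀ᵐ ω ∂P, Real.exp (t * V ω)
      ≤ ((e2 - e1) / (b - a)) * V ω + (b * e1 - a * e2) / (b - a) := by
    filter_upwards [hmem] with ω hω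
    obtain ⟨h1, h2⟩ := hω
    have hl1 : (0:ℝ) ≤ (b - V ω) / (b - a) := div_nonneg (by linarith) hba.le
    have hl2 : (0:ℝ) ≤ (V ω - a) / (b - a) := div_nonneg (by linarith) hba.le
    have hsum : (b - V ω) / (b - a) + (V ω - a) / (b - a) = 1 := by field_simp; ring
    have hcx := convexOn_exp.2 (Set.mem_univ (t * a)) (Set.mem_univ (t * b)) hl1 hl2 hsum
    have harg : ((b - V ω) / (b - a)) • (t * a) + ((V ω - a) / (b - a)) • (t * b) = t * V ω := by
      simp only [smul_eq_mul]; field_simp; ring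
    rw [harg] at hcx
    calc Real.exp (t * V ω) ≤ (b - V ω) / (b - a) * e1 + (V ω - a) / (b - a) * e2 := by
          simpa [smul_eq_mul] using hcx
      _ = ((e2 - e1) / (b - a)) * V ω + (b * e1 - a * e2) / (b - a) := by field_simp; ring
  have hexp_int : Integrable (fun ω => Real.exp (t * V ω)) P := by
    refine cso_integrable_of_bound P _ ((hV.const_mul t).exp).aestronglyMeasurable
      (Real.exp (|t| * (|a| ⊔ |b|))) ?_
    filter_upwards [hmem] with ω hω
    rw [abs_of_pos (Real.exp_pos _)]
    apply Real.exp_le_exp.2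
    calc t * V ω ≤ |t * V ω| := le_abs_self _
      _ = |t| * |V ω| := abs_mul _ _
      _ ≤ |t| * (|a| ⊔ |b|) :=
          mul_le_mul_of_nonneg_left (cso_abs_le_of_mem hω.1 hω.2) (abs_nonneg t)
  have hrhs_int : Integrable
      (fun ω => ((e2 - e1) / (b - a)) * V ω + (b * e1 - a * e2) / (b - a)) P :=
    (hVint.const_mul _).add (integrable_const _)
  have hmgf : mgf V P t ≤ (b * e1 - a * e2) / (b - a) := by
    have h1 : mgf V P t ≤ ∫ ω, (((e2 - e1) / (b - a)) * V ω + (b * e1 - a * e2) / (b - a)) ∂P :=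
      integral_mono_ae hexp_int hrhs_int hpt
    rwa [integral_add (hVint.const_mul _) (integrable_const _), integral_const_mul, hmean,
      mul_zero, zero_add, integral_const, probReal_univ, one_smul] at h1
  -- now apply the key inequality with θ = -a/(b-a), h = t*(b-a)
  set θ := -a / (b - a) with hθ
  have hθ0 : 0 ≤ θ := div_nonneg (by linarith) hba.le
  have hθ1 : θ ≤ 1 := by
    rw [hθ, div_le_one hba]; linarith
  have hkey := cso_key_ineq θ (t * (b - a)) hθ0 hθ1
  have hne : b - a ≠ 0 := hba.ne'
  have hid1 : -θ * (t * (b - a)) = t * a := by rw [hθ]; field_simp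
  have hid2 : (1 - θ) * (t * (b - a)) = t * b := by rw [hθ]; field_simp; ring
  have hrewrite : (1 - θ) * Real.exp (-θ * (t * (b - a))) + θ * Real.exp ((1 - θ) * (t * (b - a)))
      = (b * e1 - a * e2) / (b - a) := by
    rw [hid1, hid2, hθ, he1, he2]; field_simp; ring
  have hexp_eq : (t * (b - a)) ^ 2 / 8 = t ^ 2 * (b - a) ^ 2 / 8 := by ring
  rw [hrewrite, hexp_eq] at hkey
  exact hmgf.trans hkey

/-- Hoeffding's inequality, one-sided, for centered independent bounded r.v.s. -/

private lemma cso_hoeffding_tail {Ω : Type*} [MeasurableSpace Ω] (P : Measure Ω)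
    [IsProbabilityMeasure P] {m : ℕ} (hm : 0 < m) (W : Fin m → Ω → ℝ)
    (hW : ∀ i, Measurable (W i))
    (hind : iIndepFun W P) (a b : ℝ) (hab : a < b)
    (hmem : ∀ i, ∀ᵐ ω ∂P, W i ω ∈ Set.Icc a b) (hmean : ∀ i, ∫ ω, W i ω ∂P = 0)
    (u : ℝ) (hu : 0 < u) :
    P {ω | u ≤ ∑ i, W i ω} ≤ ENNReal.ofReal (Real.exp (-2 * u ^ 2 / (m * (b - a) ^ 2))) := by
  have hba : (0:ℝ) < b - a := by linarith
  set t : ℝ := 4 * u / (m * (b - a) ^ 2) with ht_def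
  have ht : 0 < t := by positivity
  have hint : ∀ i, Integrable (fun ω => Real.exp (t * W i ω)) P := by
    intro i
    refine cso_integrable_of_bound P _ (((hW i).const_mul t).exp).aestronglyMeasurable
      (Real.exp (|t| * (|a| ⊔ |b|))) ?_
    filter_upwards [hmem i] with ω hω
    rw [abs_of_pos (Real.exp_pos _)]
    apply Real.exp_le_exp.2
    calc t * W i ω ≤ |t * W i ω| := le_abs_self _
      _ = |t| * |W i ω| := abs_mul _ _
      _ ≤ |t| * (|a| ⊔ |b|) :=
          mul_le_mul_of_nonneg_left (cso_abs_le_of_mem hω.1 hω.2) (abs_nonneg t)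
  have hSint : Integrable (fun ω => Real.exp (t * (∑ i, W i) ω)) P :=
    hind.integrable_exp_mul_sum hW (fun i _ => hint i)
  have hchern := measure_ge_le_exp_mul_mgf (X := ∑ i, W i) (μ := P) u ht.le hSint
  have hmgf_sum : mgf (∑ i, W i) P t = ∏ i, mgf (W i) P t := hind.mgf_sum hW Finset.univ
  have hmgf_each : ∀ i, mgf (W i) P t ≤ Real.exp (t ^ 2 * (b - a) ^ 2 / 8) := fun i =>
    cso_hoeffding_lemma P (W i) (hW i) a b hab (hmem i) (hmean i) t
  have hprod : (∏ i : Fin m, mgf (W i) P t) ≤ Real.exp (t ^ 2 * (b - a) ^ 2 / 8) ^ m := by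
    calc (∏ i : Fin m, mgf (W i) P t) ≤ ∏ _i : Fin m, Real.exp (t ^ 2 * (b - a) ^ 2 / 8) :=
          Finset.prod_le_prod (fun i _ => mgf_nonneg) (fun i _ => hmgf_each i)
      _ = Real.exp (t ^ 2 * (b - a) ^ 2 / 8) ^ m := by
          rw [Finset.prod_const, Finset.card_univ, Fintype.card_fin]
  have hcalc : Real.exp (-t * u) * Real.exp (t ^ 2 * (b - a) ^ 2 / 8) ^ m
      = Real.exp (-2 * u ^ 2 / (m * (b - a) ^ 2)) := by
    rw [← Real.exp_nat_mul, ← Real.exp_add]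
    congr 1
    rw [ht_def]
    have hm' : (m : ℝ) ≠ 0 := Nat.cast_ne_zero.2 hm.ne'
    field_simp
    ring
  have htoReal : (P {ω | u ≤ (∑ i, W i) ω}).toReal
      ≤ Real.exp (-2 * u ^ 2 / (m * (b - a) ^ 2)) := by
    calc (P {ω | u ≤ (∑ i, W i) ω}).toReal ≤ Real.exp (-t * u) * mgf (∑ i, W i) P t := hchern
      _ ≤ Real.exp (-t * u) * Real.exp (t ^ 2 * (b - a) ^ 2 / 8) ^ m := by
          rw [hmgf_sum]
          exact mul_le_mul_of_nonneg_left hprod (Real.exp_pos _).le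
      _ = _ := hcalc
  have hset : {ω | u ≤ ∑ i, W i ω} = {ω | u ≤ (∑ i, W i) ω} := by
    ext ω; simp [Finset.sum_apply]
  rw [hset, ← ENNReal.ofReal_toReal (measure_ne_top P _)]
  exact ENNReal.ofReal_le_ofReal htoReal

/-- Two-sided Hoeffding deviation bound for the empirical mean. -/

private lemma cso_dev_bound {Ω : Type*} [MeasurableSpace Ω] (P : Measure Ω)
    [IsProbabilityMeasure P] {m : ℕ} (hm : 0 < m) (V : Fin m → Ω → ℝ)
    (hV : ∀ i, Measurable (V i))
    (hind : iIndepFun V P) (a b : ℝ) (hab : a < b)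
    (hmem : ∀ i, ∀ᵐ ω ∂P, V i ω ∈ Set.Icc a b) (μf : ℝ) (hmean : ∀ i, ∫ ω, V i ω ∂P = μf)
    (D : ℝ) (hD : 0 < D) :
    P {ω | D < |(1 / (m:ℝ)) * ∑ i, V i ω - μf|}
      ≤ 2 * ENNReal.ofReal (Real.exp (-2 * m * D ^ 2 / (b - a) ^ 2)) := by
  have hm' : (0:ℝ) < m := Nat.cast_pos.2 hm
  have hVint : ∀ i, Integrable (V i) P := fun i =>
    cso_integrable_of_bound P _ (hV i).aestronglyMeasurable (|a| ⊔ |b|)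
      ((hmem i).mono fun ω h => cso_abs_le_of_mem h.1 h.2)
  have hmuab : a ≤ μf ∧ μf ≤ b := by
    constructor
    · have := integral_mono_ae (integrable_const a) (hVint ⟨0, hm⟩)
        ((hmem ⟨0, hm⟩).mono fun ω h => h.1)
      simpa [hmean ⟨0, hm⟩] using this
    · have := integral_mono_ae (hVint ⟨0, hm⟩) (integrable_const b)
        ((hmem ⟨0, hm⟩).mono fun ω h => h.2)
      simpa [hmean ⟨0, hm⟩] using this
  have hexp_eq : -2 * ((m:ℝ) * D) ^ 2 / (m * (b - a) ^ 2) = -2 * m * D ^ 2 / (b - a) ^ 2 := by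
    have : b - a ≠ 0 := by intro h; nlinarith
    field_simp
  have key1 : P {ω | (m:ℝ) * D ≤ ∑ i, (V i ω - μf)}
      ≤ ENNReal.ofReal (Real.exp (-2 * m * D ^ 2 / (b - a) ^ 2)) := by
    have hWmeas : ∀ i, Measurable (fun ω => V i ω - μf) := fun i => (hV i).sub_const μf
    have hWind : iIndepFun (fun i ω => V i ω - μf) P :=
      hind.comp (fun _ => fun x : ℝ => x - μf) (fun _ => measurable_id.sub_const μf)
    have hWmean : ∀ i, ∫ ω, (V i ω - μf) ∂P = 0 := by
      intro i
      rw [integral_sub (hVint i) (integrable_const μf), hmean i,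
        integral_const, probReal_univ, one_smul, sub_self]
    have hmemW : ∀ i, ∀ᵐ ω ∂P, V i ω - μf ∈ Set.Icc (a - μf) (b - μf) := by
      intro i
      filter_upwards [hmem i] with ω hω
      exact ⟨by linarith [hω.1], by linarith [hω.2]⟩
    have := cso_hoeffding_tail P hm _ hWmeas hWind (a - μf) (b - μf) (by linarith)
      hmemW hWmean ((m:ℝ) * D) (by positivity)
    have h2 : b - μf - (a - μf) = b - a := by ring
    rw [h2, hexp_eq] at this
    exact this
  have key2 : P {ω | (m:ℝ) * D ≤ ∑ i, (μf - V i ω)}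
      ≤ ENNReal.ofReal (Real.exp (-2 * m * D ^ 2 / (b - a) ^ 2)) := by
    have hWmeas : ∀ i, Measurable (fun ω => μf - V i ω) := fun i => (hV i).const_sub μf
    have hWind : iIndepFun (fun i ω => μf - V i ω) P :=
      hind.comp (fun _ => fun x : ℝ => μf - x) (fun _ => measurable_id.const_sub μf)
    have hWmean : ∀ i, ∫ ω, (μf - V i ω) ∂P = 0 := by
      intro i
      rw [integral_sub (integrable_const μf) (hVint i), hmean i,
        integral_const, probReal_univ, one_smul, sub_self]
    have hmemW : ∀ i, ∀ᵐ ω ∂P, μf - V i ω ∈ Set.Icc (μf - b) (μf - a) := by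
      intro i
      filter_upwards [hmem i] with ω hω
      exact ⟨by linarith [hω.2], by linarith [hω.1]⟩
    have := cso_hoeffding_tail P hm _ hWmeas hWind (μf - b) (μf - a) (by linarith)
      hmemW hWmean ((m:ℝ) * D) (by positivity)
    have h2 : μf - a - (μf - b) = b - a := by ring
    rw [h2, hexp_eq] at this
    exact this
  have hsub : {ω | D < |(1 / (m:ℝ)) * ∑ i, V i ω - μf|}
      ⊆ {ω | (m:ℝ) * D ≤ ∑ i, (V i ω - μf)} ∪ {ω | (m:ℝ) * D ≤ ∑ i, (μf - V i ω)} := by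
    intro ω hω
    simp only [Set.mem_setOf_eq, Set.mem_union] at hω ⊢
    have hsum1 : ∑ i, (V i ω - μf) = (∑ i, V i ω) - m * μf := by
      simp [Finset.sum_sub_distrib, Finset.card_univ]
    have hsum2 : ∑ i, (μf - V i ω) = (m:ℝ) * μf - (∑ i, V i ω) := by
      simp [Finset.sum_sub_distrib, Finset.card_univ]
    rcases lt_or_ge ((1 / (m:ℝ)) * ∑ i, V i ω - μf) 0 with hneg | hpos
    · right
      rw [hsum2]
      rw [abs_of_neg hneg] at hω
      have : D + (1 / (m:ℝ)) * ∑ i, V i ω < μf := by linarith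
      have h3 : (m:ℝ) * D + ∑ i, V i ω < m * μf := by
        have := (mul_lt_mul_iff_right₀ hm').2 this
        rw [mul_add] at this
        calc (m:ℝ) * D + ∑ i, V i ω
            = (m:ℝ) * D + (m:ℝ) * ((1 / (m:ℝ)) * ∑ i, V i ω) := by
              field_simp
          _ < (m:ℝ) * μf := this
      linarith
    · left
      rw [hsum1]
      rw [abs_of_nonneg hpos] at hω
      have : μf + D < (1 / (m:ℝ)) * ∑ i, V i ω := by linarith
      have h3 : (m:ℝ) * μf + (m:ℝ) * D < ∑ i, V i ω := by
        have := (mul_lt_mul_iff_right₀ hm').2 this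
        rw [mul_add] at this
        calc (m:ℝ) * μf + (m:ℝ) * D < (m:ℝ) * ((1 / (m:ℝ)) * ∑ i, V i ω) := this
          _ = ∑ i, V i ω := by field_simp
      linarith
  calc P {ω | D < |(1 / (m:ℝ)) * ∑ i, V i ω - μf|}
      ≤ P ({ω | (m:ℝ) * D ≤ ∑ i, (V i ω - μf)} ∪ {ω | (m:ℝ) * D ≤ ∑ i, (μf - V i ω)}) :=
        measure_mono hsub
    _ ≤ P {ω | (m:ℝ) * D ≤ ∑ i, (V i ω - μf)} + P {ω | (m:ℝ) * D ≤ ∑ i, (μf - V i ω)} :=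
        measure_union_le _ _
    _ ≤ ENNReal.ofReal (Real.exp (-2 * m * D ^ 2 / (b - a) ^ 2))
        + ENNReal.ofReal (Real.exp (-2 * m * D ^ 2 / (b - a) ^ 2)) := add_le_add key1 key2
    _ = 2 * ENNReal.ofReal (Real.exp (-2 * m * D ^ 2 / (b - a) ^ 2)) := (two_mul _).symm

/-- The population identity `E[τ̂ g(X)] = E[τ(X) g(X)]` for a.s.-bounded `g ∘ X`,
together with the a.s. bound `|τ(X)| ≤ L`. -/

private lemma cso_population_identity
    {Ω 𝒳 : Type*} [MeasurableSpace Ω] [MeasurableSpace 𝒳]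
    (P : Measure Ω) [IsProbabilityMeasure P]
    (X : Ω → 𝒳) (Y0 Y1 Z : Ω → ℝ)
    (hX : Measurable X) (hY0 : Measurable Y0) (hY1 : Measurable Y1) (hZ : Measurable Z)
    (hZval : ∀ ω, Z ω = 0 ∨ Z ω = 1)
    (p : ℝ) (hp : p ∈ Set.Ioo (0 : ℝ) 1)
    (hZp : P {ω | Z ω = 1} = ENNReal.ofReal p)
    (hindep : IndepFun Z (fun ω => (X ω, Y0 ω, Y1 ω)) P)
    (Y : Ω → ℝ) (hY : ∀ ω, Y ω = Z ω * Y1 ω + (1 - Z ω) * Y0 ω)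
    (τ : 𝒳 → ℝ) (hτm : Measurable τ)
    (hτ : P[fun ω => Y1 ω - Y0 ω | MeasurableSpace.comap X inferInstance]
        =ᵐ[P] fun ω => τ (X ω))
    (μ0 μ1 : 𝒳 → ℝ) (hμ0 : Measurable μ0) (hμ1 : Measurable μ1)
    (τhat : Ω → ℝ)
    (hτhat : ∀ ω, τhat ω = (μ1 (X ω) - μ0 (X ω))
        + (Y ω - μ1 (X ω)) * Z ω / p - (Y ω - μ0 (X ω)) * (1 - Z ω) / (1 - p))
    (L : ℝ) (hL : 0 < L)
    (hbτhat : ∀ᵐ ω ∂P, |τhat ω| ≤ L) :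
    (∀ᵐ ω ∂P, |τ (X ω)| ≤ L) ∧
    ∀ g : 𝒳 → ℝ, Measurable g → (∀ᵐ ω ∂P, |g (X ω)| ≤ L) →
      ∫ ω, τhat ω * g (X ω) ∂P = ∫ ω, τ (X ω) * g (X ω) ∂P := by
  obtain ⟨hp0, hp1⟩ := hp
  have hp1' : (0:ℝ) < 1 - p := by linarith
  -- the two "potential pseudo-outcomes"
  set A : Ω → ℝ := fun ω => (μ1 (X ω) - μ0 (X ω)) + (Y1 ω - μ1 (X ω)) / p with hA
  set B : Ω → ℝ := fun ω => (μ1 (X ω) - μ0 (X ω)) - (Y0 ω - μ0 (X ω)) / (1 - p) with hB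
  have hAmeas : Measurable A := by fun_prop
  have hBmeas : Measurable B := by fun_prop
  have hτhatAB : ∀ ω, τhat ω = Z ω * A ω + (1 - Z ω) * B ω := by
    intro ω
    rcases hZval ω with h | h <;> rw [hτhat, hY, h] <;> simp [hA, hB] <;> ring
  -- Z as indicator
  have hZset : MeasurableSet {ω | Z ω = 1} := hZ (measurableSet_singleton 1)
  have hZset0 : {ω | Z ω = 0} = {ω | Z ω = 1}ᶜ := by
    ext ω; rcases hZval ω with h | h <;> simp [h]
  have hZp0 : P {ω | Z ω = 0} = ENNReal.ofReal (1 - p) := by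
    rw [hZset0, measure_compl hZset (measure_ne_top _ _), hZp, measure_univ]
    rw [ENNReal.ofReal_sub _ hp0.le]
    simp [ENNReal.ofReal_one]
  -- a.s. bounds on A and B via independence
  have hτhat_null : P {ω | L < |τhat ω|} = 0 := by
    have := ae_iff.1 hbτhat
    simpa [not_le] using this
  have habs : ∀ (c : ℝ) (q : ℝ), 0 < q → P {ω | Z ω = c} = ENNReal.ofReal q →
      ∀ (W : Ω → ℝ) (ψ : 𝒳 × ℝ × ℝ → ℝ), Measurable ψ →
      (∀ ω, W ω = ψ (X ω, Y0 ω, Y1 ω)) → (∀ ω, Z ω = c → τhat ω = W ω) →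
      (∀ᵐ ω ∂P, |W ω| ≤ L) := by
    intro c q hq hPc W ψ hψ hWψ hτW
    have hT : MeasurableSet {v : 𝒳 × ℝ × ℝ | L < |ψ v|} :=
      measurableSet_lt measurable_const (hψ.abs)
    have hkey := hindep.measure_inter_preimage_eq_mul {c} _ (measurableSet_singleton c) hT
    have hpre1 : Z ⁻¹' {c} = {ω | Z ω = c} := rfl
    have hpre2 : (fun ω => (X ω, Y0 ω, Y1 ω)) ⁻¹' {v : 𝒳 × ℝ × ℝ | L < |ψ v|}
        = {ω | L < |W ω|} := by
      ext ω; simp [hWψ ω]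
    rw [hpre1, hpre2, hPc] at hkey
    have hzero : P ({ω | Z ω = c} ∩ {ω | L < |W ω|}) = 0 := by
      refine measure_mono_null ?_ hτhat_null
      rintro ω ⟨h1, h2⟩
      simp only [Set.mem_setOf_eq] at *
      rwa [hτW ω h1]
    rw [hzero] at hkey
    have hPN : P {ω | L < |W ω|} = 0 := by
      rcases mul_eq_zero.1 hkey.symm with h | h
      · exact absurd h (by simp [ENNReal.ofReal_eq_zero, not_le, hq])
      · exact h
    have : ∀ᵐ ω ∂P, ¬ (L < |W ω|) := by
      rw [ae_iff]; simpa using hPN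
    filter_upwards [this] with ω hω using not_lt.1 hω
  -- a.s. bounds on A, B
  have hbA : ∀ᵐ ω ∂P, |A ω| ≤ L := by
    refine habs 1 p hp0 hZp A
      (fun v => (μ1 v.1 - μ0 v.1) + (v.2.2 - μ1 v.1) / p) (by fun_prop) (fun ω => rfl) ?_
    intro ω h
    rw [hτhatAB ω, h]; ring
  have hbB : ∀ᵐ ω ∂P, |B ω| ≤ L := by
    refine habs 0 (1 - p) hp1' hZp0 B
      (fun v => (μ1 v.1 - μ0 v.1) - (v.2.1 - μ0 v.1) / (1 - p)) (by fun_prop) (fun ω => rfl) ?_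
    intro ω h
    rw [hτhatAB ω, h]; ring
  have hptD : ∀ ω, p * A ω + (1 - p) * B ω = Y1 ω - Y0 ω := by
    intro ω
    simp only [hA, hB]
    field_simp
    ring
  have hY10 : ∀ᵐ ω ∂P, |Y1 ω - Y0 ω| ≤ L := by
    filter_upwards [hbA, hbB] with ω h1 h2
    rw [← hptD ω]
    calc |p * A ω + (1 - p) * B ω| ≤ |p * A ω| + |(1 - p) * B ω| := abs_add_le _ _
      _ = p * |A ω| + (1 - p) * |B ω| := by
          rw [abs_mul, abs_mul, abs_of_pos hp0, abs_of_pos hp1']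
      _ ≤ p * L + (1 - p) * L := by
          exact add_le_add (mul_le_mul_of_nonneg_left h1 hp0.le)
            (mul_le_mul_of_nonneg_left h2 hp1'.le)
      _ = L := by ring
  have hDmeas : Measurable (fun ω => Y1 ω - Y0 ω) := hY1.sub hY0
  have hDint : Integrable (fun ω => Y1 ω - Y0 ω) P :=
    cso_integrable_of_bound P _ hDmeas.aestronglyMeasurable L hY10
  have hm' : MeasurableSpace.comap X inferInstance ≤ _ := hX.comap_le
  -- the τ bound
  have hτbound : ∀ᵐ ω ∂P, |τ (X ω)| ≤ L := by
    have hub : (fun ω => Y1 ω - Y0 ω) ≤ᵐ[P] fun _ => L :=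
      hY10.mono fun ω h => (abs_le.1 h).2
    have hlb : (fun _ => -L : Ω → ℝ) ≤ᵐ[P] fun ω => Y1 ω - Y0 ω :=
      hY10.mono fun ω h => (abs_le.1 h).1
    have h1 := condExp_mono (m := MeasurableSpace.comap X inferInstance) hDint (integrable_const L) hub
    have h2 := condExp_mono (m := MeasurableSpace.comap X inferInstance) (integrable_const (-L)) hDint hlb
    rw [condExp_const hm'] at h1
    rw [condExp_const hm'] at h2
    filter_upwards [h1, h2, hτ] with ω hu hl he
    rw [← he]
    exact abs_le.2 ⟨hl, hu⟩
  refine ⟨hτbound, ?_⟩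
  intro g hg hbg
  have hgX : Measurable (fun ω => g (X ω)) := hg.comp hX
  have hZabs : ∀ ω, |Z ω| ≤ 1 := by
    intro ω; rcases hZval ω with h | h <;> simp [h]
  have hZint : Integrable Z P :=
    cso_integrable_of_bound P Z hZ.aestronglyMeasurable 1 (ae_of_all _ hZabs)
  have habs_mul : ∀ (W : Ω → ℝ), (∀ᵐ ω ∂P, |W ω| ≤ L) →
      ∀ᵐ ω ∂P, |W ω * g (X ω)| ≤ L * L := by
    intro W hW
    filter_upwards [hW, hbg] with ω h1 h2
    rw [abs_mul]
    exact mul_le_mul h1 h2 (abs_nonneg _) hL.le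
  have intAg : Integrable (fun ω => A ω * g (X ω)) P :=
    cso_integrable_of_bound P _ (hAmeas.mul hgX).aestronglyMeasurable (L * L) (habs_mul A hbA)
  have intBg : Integrable (fun ω => B ω * g (X ω)) P :=
    cso_integrable_of_bound P _ (hBmeas.mul hgX).aestronglyMeasurable (L * L) (habs_mul B hbB)
  have intZAg : Integrable (fun ω => Z ω * (A ω * g (X ω))) P := by
    refine cso_integrable_of_bound P _ (hZ.mul (hAmeas.mul hgX)).aestronglyMeasurable
      (L * L) ?_
    filter_upwards [habs_mul A hbA] with ω h1
    rw [abs_mul]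
    calc |Z ω| * |A ω * g (X ω)| ≤ 1 * (L * L) :=
          mul_le_mul (hZabs ω) h1 (abs_nonneg _) one_pos.le
      _ = L * L := one_mul _
  have intZ1Bg : Integrable (fun ω => (1 - Z ω) * (B ω * g (X ω))) P := by
    refine cso_integrable_of_bound P _
      (((measurable_const.sub hZ)).mul (hBmeas.mul hgX)).aestronglyMeasurable (L * L) ?_
    filter_upwards [habs_mul B hbB] with ω h1
    rw [abs_mul]
    have : |1 - Z ω| ≤ 1 := by rcases hZval ω with h | h <;> simp [h]
    calc |1 - Z ω| * |B ω * g (X ω)| ≤ 1 * (L * L) :=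
          mul_le_mul this h1 (abs_nonneg _) one_pos.le
      _ = L * L := one_mul _
  -- independence of Z from A*g(X) and B*g(X)
  have hindep_comp : ∀ (ψ : 𝒳 × ℝ × ℝ → ℝ), Measurable ψ →
      IndepFun Z (fun ω => ψ (X ω, Y0 ω, Y1 ω)) P := by
    intro ψ hψ
    exact hindep.comp measurable_id hψ
  have hiAg : IndepFun Z (fun ω => A ω * g (X ω)) P :=
    hindep_comp (fun v => ((μ1 v.1 - μ0 v.1) + (v.2.2 - μ1 v.1) / p) * g v.1) (by fun_prop)
  have hiBg : IndepFun Z (fun ω => B ω * g (X ω)) P :=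
    hindep_comp (fun v => ((μ1 v.1 - μ0 v.1) - (v.2.1 - μ0 v.1) / (1 - p)) * g v.1)
      (by fun_prop)
  -- ∫ Z = p
  have hZmean : ∫ ω, Z ω ∂P = p := by
    have hind : ∀ ω, Z ω = Set.indicator {ω | Z ω = 1} (fun _ => (1:ℝ)) ω := by
      intro ω
      rcases hZval ω with h | h
      · rw [Set.indicator_of_notMem (by simp [h]), h]
      · rw [Set.indicator_of_mem (by simp [h]), h]
    rw [integral_congr_ae (ae_of_all _ hind), integral_indicator_const _ hZset, measureReal_def, hZp]
    simp [ENNReal.toReal_ofReal hp0.le]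
  have hZ1int : Integrable (fun ω => 1 - Z ω) P := (integrable_const 1).sub hZint
  have hi1Bg : IndepFun (fun ω => 1 - Z ω) (fun ω => B ω * g (X ω)) P :=
    hiBg.comp (measurable_id.const_sub 1) measurable_id
  have hZ1mean : ∫ ω, (1 - Z ω) ∂P = 1 - p := by
    rw [integral_sub (integrable_const 1) hZint, hZmean, integral_const]
    simp
  have hsplit : ∀ ω, τhat ω * g (X ω)
      = Z ω * (A ω * g (X ω)) + (1 - Z ω) * (B ω * g (X ω)) := by
    intro ω; rw [hτhatAB ω]; ring
  have hmulZ : ∫ ω, Z ω * (A ω * g (X ω)) ∂P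
      = (∫ ω, Z ω ∂P) * ∫ ω, A ω * g (X ω) ∂P :=
    hiAg.integral_mul_eq_mul_integral hZint.aestronglyMeasurable intAg.aestronglyMeasurable
  have hmulZ1 : ∫ ω, (1 - Z ω) * (B ω * g (X ω)) ∂P
      = (∫ ω, (1 - Z ω) ∂P) * ∫ ω, B ω * g (X ω) ∂P :=
    hi1Bg.integral_mul_eq_mul_integral hZ1int.aestronglyMeasurable intBg.aestronglyMeasurable
  have step1 : ∫ ω, τhat ω * g (X ω) ∂P
      = p * (∫ ω, A ω * g (X ω) ∂P) + (1 - p) * (∫ ω, B ω * g (X ω) ∂P) := by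
    rw [integral_congr_ae (ae_of_all _ hsplit), integral_add intZAg intZ1Bg, hmulZ, hmulZ1,
      hZmean, hZ1mean]
  have step3 : p * (∫ ω, A ω * g (X ω) ∂P) + (1 - p) * (∫ ω, B ω * g (X ω) ∂P)
      = ∫ ω, (Y1 ω - Y0 ω) * g (X ω) ∂P := by
    rw [← integral_const_mul, ← integral_const_mul,
      ← integral_add ((intAg.const_mul p)) ((intBg.const_mul (1 - p)))]
    refine integral_congr_ae (ae_of_all _ fun ω => ?_)
    dsimp only
    rw [← hptD ω]
    ring
  -- conditional expectation step
  have hgsm : StronglyMeasurable[MeasurableSpace.comap X inferInstance] (fun ω => g (X ω)) := by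
    have hXm : Measurable[MeasurableSpace.comap X inferInstance] X := fun s hs => ⟨s, hs, rfl⟩
    exact (hg.comp hXm).stronglyMeasurable
  have hfgint : Integrable ((fun ω => g (X ω)) * fun ω => Y1 ω - Y0 ω) P := by
    refine cso_integrable_of_bound P _ (hgX.mul hDmeas).aestronglyMeasurable (L * L) ?_
    filter_upwards [hbg, hY10] with ω h1 h2
    rw [Pi.mul_apply, abs_mul]
    exact mul_le_mul h1 h2 (abs_nonneg _) hL.le
  have hpull := condExp_mul_of_stronglyMeasurable_left (μ := P) hgsm hfgint hDint
  have step4 : ∫ ω, (Y1 ω - Y0 ω) * g (X ω) ∂P = ∫ ω, τ (X ω) * g (X ω) ∂P := by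
    have e1 : ∫ ω, (Y1 ω - Y0 ω) * g (X ω) ∂P
        = ∫ ω, ((fun ω => g (X ω)) * fun ω => Y1 ω - Y0 ω) ω ∂P := by
      refine integral_congr_ae (ae_of_all _ fun ω => ?_)
      simp [mul_comm]
    have e2 : ∫ ω, ((fun ω => g (X ω)) * fun ω => Y1 ω - Y0 ω) ω ∂P
        = ∫ ω, (P[(fun ω => g (X ω)) * fun ω => Y1 ω - Y0 ω|MeasurableSpace.comap X inferInstance]) ω ∂P :=
      (integral_condExp hm').symm
    have e3 : ∫ ω, (P[(fun ω => g (X ω)) * fun ω => Y1 ω - Y0 ω|MeasurableSpace.comap X inferInstance]) ω ∂P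
        = ∫ ω, g (X ω) * (P[fun ω => Y1 ω - Y0 ω|MeasurableSpace.comap X inferInstance]) ω ∂P := by
      refine integral_congr_ae (hpull.mono fun ω h => ?_)
      rw [h]; rfl
    have e4 : ∫ ω, g (X ω) * (P[fun ω => Y1 ω - Y0 ω|MeasurableSpace.comap X inferInstance]) ω ∂P
        = ∫ ω, τ (X ω) * g (X ω) ∂P := by
      refine integral_congr_ae (hτ.mono fun ω h => ?_)
      dsimp only
      rw [h]; ring
    rw [e1, e2, e3, e4]
  rw [step1, step3, step4]

private lemma cso_sq_expand {K : ℕ} (a : ℝ) (v y : Fin K → ℝ) :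
    (a - ∑ k, v k * y k) ^ 2
      = a ^ 2 - 2 * ∑ k, v k * (a * y k) + ∑ k, ∑ l, v k * v l * (y k * y l) := by
  have h1 : (∑ k, v k * y k) ^ 2 = ∑ k, ∑ l, v k * v l * (y k * y l) := by
    rw [sq, Finset.sum_mul_sum]
    exact Finset.sum_congr rfl fun k _ => Finset.sum_congr rfl fun l _ => by ring
  have h2 : a * ∑ k, v k * y k = ∑ k, v k * (a * y k) := by
    rw [Finset.mul_sum]
    exact Finset.sum_congr rfl fun k _ => by ring
  linear_combination h1 - 2 * h2

private lemma cso_emp_expand {K m : ℕ} (a : Fin m → ℝ) (y : Fin m → Fin K → ℝ)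
    (v : Fin K → ℝ) :
    (1 / (m:ℝ)) * ∑ i, (a i - ∑ k, v k * y i k) ^ 2
      = (1 / (m:ℝ)) * (∑ i, (a i) ^ 2)
        - 2 * ∑ k, v k * ((1 / (m:ℝ)) * ∑ i, a i * y i k)
        + ∑ k, ∑ l, v k * v l * ((1 / (m:ℝ)) * ∑ i, y i k * y i l) := by
  have e0 : ∑ i, (a i - ∑ k, v k * y i k) ^ 2
      = ∑ i, ((a i) ^ 2 - 2 * ∑ k, v k * (a i * y i k)
          + ∑ k, ∑ l, v k * v l * (y i k * y i l)) :=
    Finset.sum_congr rfl fun i _ => cso_sq_expand (a i) v (y i)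
  have e1 : ∑ i, ∑ k, v k * (a i * y i k) = ∑ k, v k * ∑ i, a i * y i k := by
    rw [Finset.sum_comm]
    exact Finset.sum_congr rfl fun k _ => (Finset.mul_sum _ _ _).symm
  have e2 : ∑ i : Fin m, ∑ k : Fin K, ∑ l : Fin K, v k * v l * (y i k * y i l)
      = ∑ k : Fin K, ∑ l : Fin K, v k * v l * ∑ i, y i k * y i l := by
    rw [Finset.sum_comm]
    refine Finset.sum_congr rfl fun k _ => ?_
    rw [Finset.sum_comm]
    refine Finset.sum_congr rfl fun l _ => ?_
    rw [Finset.mul_sum]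
  have r1 : ∑ k, v k * ((1 / (m:ℝ)) * ∑ i, a i * y i k)
      = (1 / (m:ℝ)) * ∑ k, v k * ∑ i, a i * y i k := by
    rw [Finset.mul_sum]
    exact Finset.sum_congr rfl fun k _ => by ring
  have r2 : ∑ k : Fin K, ∑ l : Fin K, v k * v l * ((1 / (m:ℝ)) * ∑ i, y i k * y i l)
      = (1 / (m:ℝ)) * ∑ k : Fin K, ∑ l : Fin K, v k * v l * ∑ i, y i k * y i l := by
    rw [Finset.mul_sum]
    refine Finset.sum_congr rfl fun k _ => ?_
    rw [Finset.mul_sum]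
    exact Finset.sum_congr rfl fun l _ => by ring
  rw [e0, Finset.sum_add_distrib, Finset.sum_sub_distrib, ← Finset.mul_sum, e1, e2, r1, r2]
  ring

private lemma cso_int_expand {Ω : Type*} [MeasurableSpace Ω] (P : Measure Ω)
    [IsProbabilityMeasure P] {K : ℕ} (u : Ω → ℝ) (w : Fin K → Ω → ℝ)
    (hu : Measurable u) (hw : ∀ k, Measurable (w k)) (L : ℝ) (hL : 0 < L)
    (hbu : ∀ᵐ ω ∂P, |u ω| ≤ L) (hbw : ∀ k, ∀ᵐ ω ∂P, |w k ω| ≤ L) (v : Fin K → ℝ) :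
    ∫ ω, (u ω - ∑ k, v k * w k ω) ^ 2 ∂P
      = ∫ ω, (u ω) ^ 2 ∂P - 2 * ∑ k, v k * ∫ ω, u ω * w k ω ∂P
        + ∑ k, ∑ l, v k * v l * ∫ ω, w k ω * w l ω ∂P := by
  have hmul : ∀ (f g : Ω → ℝ), Measurable f → Measurable g →
      (∀ᵐ ω ∂P, |f ω| ≤ L) → (∀ᵐ ω ∂P, |g ω| ≤ L) →
      Integrable (fun ω => f ω * g ω) P := by
    intro f g hf hg hbf hbg
    refine cso_integrable_of_bound P _ (hf.mul hg).aestronglyMeasurable (L * L) ?_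
    filter_upwards [hbf, hbg] with ω h1 h2
    rw [abs_mul]
    exact mul_le_mul h1 h2 (abs_nonneg _) hL.le
  have int_u2 : Integrable (fun ω => (u ω) ^ 2) P := by
    have := hmul u u hu hu hbu hbu
    simpa [sq] using this
  have int_uw : ∀ k, Integrable (fun ω => u ω * w k ω) P :=
    fun k => hmul u (w k) hu (hw k) hbu (hbw k)
  have int_ww : ∀ k l, Integrable (fun ω => w k ω * w l ω) P :=
    fun k l => hmul (w k) (w l) (hw k) (hw l) (hbw k) (hbw l)
  have g1int : Integrable (fun ω => 2 * ∑ k, v k * (u ω * w k ω)) P := by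
    refine Integrable.const_mul ?_ 2
    exact integrable_finset_sum _ fun k _ => (int_uw k).const_mul (v k)
  have g2int : Integrable (fun ω => ∑ k, ∑ l, v k * v l * (w k ω * w l ω)) P :=
    integrable_finset_sum _ fun k _ =>
      integrable_finset_sum _ fun l _ => (int_ww k l).const_mul _
  have e0 : ∫ ω, (u ω - ∑ k, v k * w k ω) ^ 2 ∂P
      = ∫ ω, ((u ω) ^ 2 - 2 * ∑ k, v k * (u ω * w k ω)
          + ∑ k, ∑ l, v k * v l * (w k ω * w l ω)) ∂P :=
    integral_congr_ae (ae_of_all _ fun ω => cso_sq_expand (u ω) v (fun k => w k ω))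
  have hfg : Integrable (fun ω => (u ω) ^ 2 - 2 * ∑ k, v k * (u ω * w k ω)) P :=
    int_u2.sub g1int
  rw [e0, integral_add hfg g2int, integral_sub int_u2 g1int]
  congr 1
  · congr 1
    rw [integral_const_mul]
    congr 1
    rw [integral_finset_sum _ fun k _ => (int_uw k).const_mul (v k)]
    exact Finset.sum_congr rfl fun k _ => integral_const_mul _ _
  · rw [integral_finset_sum _ fun k _ =>
      integrable_finset_sum _ fun l _ => (int_ww k l).const_mul _]
    refine Finset.sum_congr rfl fun k _ => ?_
    rw [integral_finset_sum _ fun l _ => (int_ww k l).const_mul _]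
    exact Finset.sum_congr rfl fun l _ => integral_const_mul _ _

set_option maxHeartbeats 2000000 in

/-- Intermediate oracle inequality in the proof of Proposition 1: with probability at
least `1 − δ`, the stacked model is competitive with the best *convex combination* of the
candidate models:
`‖Σ_k ŵ_k τ̂_k − τ‖₂² ≤ min_{w ∈ Δ_K} ‖Σ_k w_k τ̂_k − τ‖₂² + 8√2 L² √(log(2(K+1)²/δ)/m)`,
stated as: the bound holds simultaneously for every `w ∈ Δ_K` on the right-hand side. -/

theorem causal_stacking_convex_oracle_inequality
    {Ω 𝒳 : Type*} [MeasurableSpace Ω] [MeasurableSpace 𝒳]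
    (P : Measure Ω) [IsProbabilityMeasure P]
    (X : Ω → 𝒳) (Y0 Y1 Z : Ω → ℝ)
    (hX : Measurable X) (hY0 : Measurable Y0) (hY1 : Measurable Y1) (hZ : Measurable Z)
    (hZval : ∀ ω, Z ω = 0 ∨ Z ω = 1)
    (p : ℝ) (hp : p ∈ Set.Ioo (0 : ℝ) 1)
    (hZp : P {ω | Z ω = 1} = ENNReal.ofReal p)
    (hindep : IndepFun Z (fun ω => (X ω, Y0 ω, Y1 ω)) P)
    (Y : Ω → ℝ) (hY : ∀ ω, Y ω = Z ω * Y1 ω + (1 - Z ω) * Y0 ω)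
    -- the CATE function: a measurable version of E[Y₁ − Y₀ | X]
    (τ : 𝒳 → ℝ) (hτm : Measurable τ)
    (hτ : P[fun ω => Y1 ω - Y0 ω | MeasurableSpace.comap X inferInstance]
        =ᵐ[P] fun ω => τ (X ω))
    (μ0 μ1 : 𝒳 → ℝ) (hμ0 : Measurable μ0) (hμ1 : Measurable μ1)
    (K : ℕ) (hK : 0 < K)
    (τk : Fin K → 𝒳 → ℝ) (hτk : ∀ k, Measurable (τk k))
    -- the pseudo-outcome built from the generic sample `(X, Y, Z)`
    (τhat : Ω → ℝ)
    (hτhat : ∀ ω, τhat ω = (μ1 (X ω) - μ0 (X ω))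
        + (Y ω - μ1 (X ω)) * Z ω / p - (Y ω - μ0 (X ω)) * (1 - Z ω) / (1 - p))
    -- boundedness: |τ̂| ≤ L and |τ̂_k(X)| ≤ L almost surely
    (L : ℝ) (hL : 0 < L)
    (hbτhat : ∀ᵐ ω ∂P, |τhat ω| ≤ L)
    (hbτk : ∀ k, ∀ᵐ ω ∂P, |τk k (X ω)| ≤ L)
    -- the i.i.d. samples
    (m : ℕ) (hm : 0 < m)
    (Xs : Fin m → Ω → 𝒳) (Ys Zs : Fin m → Ω → ℝ)
    (hXs : ∀ i, Measurable (Xs i)) (hYs : ∀ i, Measurable (Ys i))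
    (hZs : ∀ i, Measurable (Zs i))
    (hiid : iIndepFun (fun i ω => (Xs i ω, Ys i ω, Zs i ω)) P)
    (hident : ∀ i, Measure.map (fun ω => (Xs i ω, Ys i ω, Zs i ω)) P
        = Measure.map (fun ω => (X ω, Y ω, Z ω)) P)
    -- the per-sample pseudo-outcomes
    (τhats : Fin m → Ω → ℝ)
    (hτhats : ∀ i ω, τhats i ω = (μ1 (Xs i ω) - μ0 (Xs i ω))
        + (Ys i ω - μ1 (Xs i ω)) * Zs i ω / p
        - (Ys i ω - μ0 (Xs i ω)) * (1 - Zs i ω) / (1 - p))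
    -- ŵ is any minimizer of the empirical stacking loss over the simplex Δ_K
    (what : Ω → Fin K → ℝ)
    (hwhat_mem : ∀ ω, (∀ k, 0 ≤ what ω k) ∧ ∑ k, what ω k = 1)
    (hwhat_min : ∀ ω, ∀ w : Fin K → ℝ, (∀ k, 0 ≤ w k) → (∑ k, w k = 1) →
      (1 / (m : ℝ)) * ∑ i, (τhats i ω - ∑ k, what ω k * τk k (Xs i ω)) ^ 2
        ≤ (1 / (m : ℝ)) * ∑ i, (τhats i ω - ∑ k, w k * τk k (Xs i ω)) ^ 2)
    (δ : ℝ) (hδ : δ ∈ Set.Ioo (0 : ℝ) 1) :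
    1 - ENNReal.ofReal δ ≤
      P {ω | ∀ w : Fin K → ℝ, (∀ k, 0 ≤ w k) → (∑ k, w k = 1) →
        ∫ ω', (∑ k, what ω k * τk k (X ω') - τ (X ω')) ^ 2 ∂P
          ≤ (∫ ω', (∑ k, w k * τk k (X ω') - τ (X ω')) ^ 2 ∂P)
            + 8 * Real.sqrt 2 * L ^ 2
              * Real.sqrt (Real.log (2 * (K + 1) ^ 2 / δ) / m)} := by

  have hδ0 : (0:ℝ) < δ := hδ.1
  have hδ1 : δ < 1 := hδ.2
  have hp0 : (0:ℝ) < p := hp.1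
  have hL2 : (0:ℝ) < L ^ 2 := by positivity
  have hm0 : (0:ℝ) < m := Nat.cast_pos.2 hm
  have hK1 : (1:ℝ) ≤ ((K:ℝ) + 1) ^ 2 := by nlinarith [Nat.cast_nonneg (α := ℝ) K]
  set s : ℝ := Real.sqrt (Real.log (2 * ((K:ℝ) + 1) ^ 2 / δ) / m) with hs_def
  set R : ℝ := 2 * ((K:ℝ) + 1) ^ 2 / δ with hR_def
  have hRpos : 0 < R := by positivity
  have hR1 : 1 < R := by
    rw [hR_def, lt_div_iff₀ hδ0]
    nlinarith
  have hlogR : 0 < Real.log R := Real.log_pos hR1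
  have hs_pos : 0 < s := Real.sqrt_pos.2 (by positivity)
  have hs_sq : s ^ 2 = Real.log R / m := Real.sq_sqrt (by positivity)
  have hsqrt2 : (0:ℝ) < Real.sqrt 2 := Real.sqrt_pos.2 (by norm_num)
  have hsqrt2sq : Real.sqrt 2 * Real.sqrt 2 = 2 := Real.mul_self_sqrt (by norm_num)
  -- the three families of functions on the triple space
  set F : 𝒳 × ℝ × ℝ → ℝ := fun v => (μ1 v.1 - μ0 v.1)
    + (v.2.1 - μ1 v.1) * v.2.2 / p - (v.2.1 - μ0 v.1) * (1 - v.2.2) / (1 - p) with hF_def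
  have hFmeas : Measurable F := by
    apply Measurable.sub
    apply Measurable.add
    · exact ((hμ1.comp measurable_fst).sub (hμ0.comp measurable_fst))
    · exact (((measurable_fst.comp measurable_snd).sub
        (hμ1.comp measurable_fst)).mul (measurable_snd.comp measurable_snd)).div_const p
    · exact (((measurable_fst.comp measurable_snd).sub (hμ0.comp measurable_fst)).mul
        (measurable_const.sub (measurable_snd.comp measurable_snd))).div_const (1 - p)
  have hYmeas : Measurable Y := by
    have : Y = fun ω => Z ω * Y1 ω + (1 - Z ω) * Y0 ω := funext hY
    rw [this]
    exact (hZ.mul hY1).add ((measurable_const.sub hZ).mul hY0)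
  have htm : ∀ i, Measurable (fun ω => (Xs i ω, Ys i ω, Zs i ω)) :=
    fun i => (hXs i).prodMk ((hYs i).prodMk (hZs i))
  have htm0 : Measurable (fun ω => (X ω, Y ω, Z ω)) := hX.prodMk (hYmeas.prodMk hZ)
  have hτhatF : ∀ ω, τhat ω = F (X ω, Y ω, Z ω) := fun ω => hτhat ω
  have hτhatsF : ∀ i ω, τhats i ω = F (Xs i ω, Ys i ω, Zs i ω) := fun i ω => hτhats i ω
  -- transfer lemmas between samples and population
  have htrans : ∀ f : 𝒳 × ℝ × ℝ → ℝ, Measurable f → ∀ i,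
      ∫ ω, f (Xs i ω, Ys i ω, Zs i ω) ∂P = ∫ ω, f (X ω, Y ω, Z ω) ∂P := by
    intro f hf i
    rw [← integral_map (htm i).aemeasurable hf.aestronglyMeasurable, hident i,
      integral_map htm0.aemeasurable hf.aestronglyMeasurable]
  have hnull_trans : ∀ S : Set (𝒳 × ℝ × ℝ), MeasurableSet S →
      P ((fun ω => (X ω, Y ω, Z ω)) ⁻¹' S) = 0 → ∀ i,
      P ((fun ω => (Xs i ω, Ys i ω, Zs i ω)) ⁻¹' S) = 0 := by
    intro S hS h0 i
    have e1 : P ((fun ω => (Xs i ω, Ys i ω, Zs i ω)) ⁻¹' S)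
        = Measure.map (fun ω => (Xs i ω, Ys i ω, Zs i ω)) P S :=
      (Measure.map_apply (htm i) hS).symm
    rw [e1, hident i, Measure.map_apply htm0 hS, h0]
  have hIcc_trans : ∀ (f : 𝒳 × ℝ × ℝ → ℝ), Measurable f → ∀ a b : ℝ,
      (∀ᵐ ω ∂P, f (X ω, Y ω, Z ω) ∈ Set.Icc a b) → ∀ i,
      (∀ᵐ ω ∂P, f (Xs i ω, Ys i ω, Zs i ω) ∈ Set.Icc a b) := by
    intro f hf a b hae i
    have hS : MeasurableSet ({v : 𝒳 × ℝ × ℝ | f v ∈ Set.Icc a b}ᶜ) :=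
      (hf measurableSet_Icc).compl
    have h0 : P ((fun ω => (X ω, Y ω, Z ω)) ⁻¹' {v : 𝒳 × ℝ × ℝ | f v ∈ Set.Icc a b}ᶜ) = 0 := by
      rw [ae_iff] at hae
      exact hae
    have := hnull_trans _ hS h0 i
    rw [ae_iff]
    exact this
  have hind_trans : ∀ f : 𝒳 × ℝ × ℝ → ℝ, Measurable f →
      iIndepFun (fun i ω => f (Xs i ω, Ys i ω, Zs i ω)) P :=
    fun f hf => hiid.comp (fun _ => f) (fun _ => hf)
  -- population boundedness
  have hbF : ∀ᵐ ω ∂P, |F (X ω, Y ω, Z ω)| ≤ L := by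
    filter_upwards [hbτhat] with ω h
    rwa [← hτhatF ω]
  -- population identity
  obtain ⟨hbτX, hpopid⟩ := cso_population_identity P X Y0 Y1 Z hX hY0 hY1 hZ hZval p hp
    hZp hindep Y hY τ hτm hτ μ0 μ1 hμ0 hμ1 τhat hτhat L hL hbτhat
  -- the function families
  set f0 : 𝒳 × ℝ × ℝ → ℝ := fun v => F v ^ 2 with hf0_def
  set fk : Fin K → 𝒳 × ℝ × ℝ → ℝ := fun k v => F v * τk k v.1 with hfk_def
  set fkl : Fin K → Fin K → 𝒳 × ℝ × ℝ → ℝ := fun k l v => τk k v.1 * τk l v.1 with hfkl_def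
  have hf0meas : Measurable f0 := hFmeas.pow_const 2
  have hfkmeas : ∀ k, Measurable (fk k) := fun k => hFmeas.mul ((hτk k).comp measurable_fst)
  have hfklmeas : ∀ k l, Measurable (fkl k l) :=
    fun k l => ((hτk k).comp measurable_fst).mul ((hτk l).comp measurable_fst)
  have hb0 : ∀ᵐ ω ∂P, f0 (X ω, Y ω, Z ω) ∈ Set.Icc 0 (L ^ 2) := by
    filter_upwards [hbF] with ω h
    refine ⟨sq_nonneg _, ?_⟩
    calc F (X ω, Y ω, Z ω) ^ 2 = |F (X ω, Y ω, Z ω)| ^ 2 := (sq_abs _).symm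
      _ ≤ L ^ 2 := by nlinarith [abs_nonneg (F (X ω, Y ω, Z ω))]
  have hbk : ∀ k, ∀ᵐ ω ∂P, fk k (X ω, Y ω, Z ω) ∈ Set.Icc (-(L^2)) (L ^ 2) := by
    intro k
    filter_upwards [hbF, hbτk k] with ω h1 h2
    have : |fk k (X ω, Y ω, Z ω)| ≤ L ^ 2 := by
      rw [hfk_def]
      calc |F (X ω, Y ω, Z ω) * τk k (X ω)| = |F (X ω, Y ω, Z ω)| * |τk k (X ω)| := abs_mul _ _
        _ ≤ L * L := mul_le_mul h1 h2 (abs_nonneg _) hL.le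
        _ = L ^ 2 := (sq L).symm
    exact abs_le.1 this
  have hbkl : ∀ k l, ∀ᵐ ω ∂P, fkl k l (X ω, Y ω, Z ω) ∈ Set.Icc (-(L^2)) (L ^ 2) := by
    intro k l
    filter_upwards [hbτk k, hbτk l] with ω h1 h2
    have : |fkl k l (X ω, Y ω, Z ω)| ≤ L ^ 2 := by
      rw [hfkl_def]
      calc |τk k (X ω) * τk l (X ω)| = |τk k (X ω)| * |τk l (X ω)| := abs_mul _ _
        _ ≤ L * L := mul_le_mul h1 h2 (abs_nonneg _) hL.le
        _ = L ^ 2 := (sq L).symm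
    exact abs_le.1 this
  -- deviation bounds
  have hdev : ∀ f : 𝒳 × ℝ × ℝ → ℝ, Measurable f → ∀ a b : ℝ, a < b →
      (∀ᵐ ω ∂P, f (X ω, Y ω, Z ω) ∈ Set.Icc a b) → ∀ D : ℝ, 0 < D →
      P {ω | D < |(1 / (m:ℝ)) * (∑ i, f (Xs i ω, Ys i ω, Zs i ω))
          - ∫ ω', f (X ω', Y ω', Z ω') ∂P|}
        ≤ 2 * ENNReal.ofReal (Real.exp (-2 * m * D ^ 2 / (b - a) ^ 2)) :=
    fun f hf a b hab hae D hD =>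
      cso_dev_bound P hm (fun i ω => f (Xs i ω, Ys i ω, Zs i ω))
        (fun i => hf.comp (htm i)) (hind_trans f hf) a b hab (hIcc_trans f hf a b hae)
        (∫ ω', f (X ω', Y ω', Z ω') ∂P) (htrans f hf) D hD
  set D0 : ℝ := L ^ 2 * s / Real.sqrt 2 with hD0_def
  set D1 : ℝ := Real.sqrt 2 * (L ^ 2 * s) with hD1_def
  have hD0pos : 0 < D0 := by positivity
  have hD1pos : 0 < D1 := by positivity
  have hexp_e : Real.exp (-Real.log R) = δ / (2 * ((K:ℝ) + 1) ^ 2) := by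
    rw [Real.exp_neg, Real.exp_log hRpos, hR_def]
    rw [inv_div]
  have hexp0 : -2 * (m:ℝ) * D0 ^ 2 / (L ^ 2 - 0) ^ 2 = -Real.log R := by
    rw [hD0_def, div_pow, mul_pow, hs_sq]
    rw [sq (Real.sqrt 2), hsqrt2sq]
    field_simp
    ring
  have hexp1 : -2 * (m:ℝ) * D1 ^ 2 / (L ^ 2 - -(L ^ 2)) ^ 2 = -Real.log R := by
    rw [hD1_def, mul_pow, mul_pow, hs_sq]
    rw [sq (Real.sqrt 2), hsqrt2sq]
    field_simp
    ring
  -- the bad events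
  set q : ENNReal := ENNReal.ofReal (δ / (2 * ((K:ℝ) + 1) ^ 2)) with hq_def
  set Em : (𝒳 × ℝ × ℝ → ℝ) → Ω → ℝ :=
    fun f ω => (1 / (m:ℝ)) * (∑ i, f (Xs i ω, Ys i ω, Zs i ω)) with hEm_def
  set Ip : (𝒳 × ℝ × ℝ → ℝ) → ℝ := fun f => ∫ ω', f (X ω', Y ω', Z ω') ∂P with hIp_def
  have hEm_meas : ∀ f : 𝒳 × ℝ × ℝ → ℝ, Measurable f → Measurable (Em f) := by
    intro f hf
    rw [hEm_def]
    exact (Finset.measurable_sum _ (fun i _ => hf.comp (htm i))).const_mul _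
  set bad0 : Set Ω := {ω | D0 < |Em f0 ω - Ip f0|} with hbad0_def
  set badk : Fin K → Set Ω := fun k => {ω | D1 < |Em (fk k) ω - Ip (fk k)|} with hbadk_def
  set badkl : Fin K → Fin K → Set Ω :=
    fun k l => {ω | D1 < |Em (fkl k l) ω - Ip (fkl k l)|} with hbadkl_def
  set bad : Set Ω := bad0 ∪ ((⋃ k, badk k) ∪ ⋃ k, ⋃ l, badkl k l) with hbad_def
  have hbad0_bound : P bad0 ≤ 2 * q := by
    have := hdev f0 hf0meas 0 (L ^ 2) (by positivity) hb0 D0 hD0pos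
    rw [hexp0, hexp_e] at this
    exact this
  have hbadk_bound : ∀ k, P (badk k) ≤ 2 * q := by
    intro k
    have := hdev (fk k) (hfkmeas k) (-(L^2)) (L ^ 2) (neg_lt_self hL2) (hbk k) D1 hD1pos
    rw [hexp1, hexp_e] at this
    exact this
  have hbadkl_bound : ∀ k l, P (badkl k l) ≤ 2 * q := by
    intro k l
    have := hdev (fkl k l) (hfklmeas k l) (-(L^2)) (L ^ 2) (neg_lt_self hL2) (hbkl k l) D1 hD1pos
    rw [hexp1, hexp_e] at this
    exact this
  have hbad_meas : MeasurableSet bad := by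
    have h1 : ∀ f : 𝒳 × ℝ × ℝ → ℝ, Measurable f → ∀ D c : ℝ,
        MeasurableSet {ω | D < |Em f ω - c|} := by
      intro f hf D c
      exact measurableSet_lt measurable_const (((hEm_meas f hf).sub_const c).abs)
    exact ((h1 f0 hf0meas D0 _).union (((MeasurableSet.iUnion fun k => h1 (fk k) (hfkmeas k) D1 _)).union
      (MeasurableSet.iUnion fun k => MeasurableSet.iUnion fun l => h1 (fkl k l) (hfklmeas k l) D1 _)))
  have hPbad : P bad ≤ ENNReal.ofReal δ := by
    have hub : P bad ≤ 2 * q + ((K:ENNReal) * (2 * q) + (K:ENNReal) * ((K:ENNReal) * (2 * q))) := by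
      refine le_trans (measure_union_le _ _) (add_le_add hbad0_bound ?_)
      refine le_trans (measure_union_le _ _) (add_le_add ?_ ?_)
      · refine le_trans (measure_iUnion_fintype_le _ _) ?_
        calc ∑ k, P (badk k) ≤ ∑ _k : Fin K, 2 * q :=
              Finset.sum_le_sum fun k _ => hbadk_bound k
          _ = (K:ENNReal) * (2 * q) := by
              rw [Finset.sum_const, Finset.card_univ, Fintype.card_fin, nsmul_eq_mul]
      · refine le_trans (measure_iUnion_fintype_le _ _) ?_
        calc ∑ k, P (⋃ l, badkl k l) ≤ ∑ k : Fin K, (K:ENNReal) * (2 * q) := by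
              refine Finset.sum_le_sum fun k _ => ?_
              refine le_trans (measure_iUnion_fintype_le _ _) ?_
              calc ∑ l, P (badkl k l) ≤ ∑ _l : Fin K, 2 * q :=
                    Finset.sum_le_sum fun l _ => hbadkl_bound k l
                _ = (K:ENNReal) * (2 * q) := by
                    rw [Finset.sum_const, Finset.card_univ, Fintype.card_fin, nsmul_eq_mul]
          _ = (K:ENNReal) * ((K:ENNReal) * (2 * q)) := by
              rw [Finset.sum_const, Finset.card_univ, Fintype.card_fin, nsmul_eq_mul]
    refine hub.trans ?_
    have hscale : ∀ x : ℝ, 0 ≤ x →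
        (K:ENNReal) * ENNReal.ofReal x = ENNReal.ofReal ((K:ℝ) * x) := by
      intro x hx
      rw [← ENNReal.ofReal_natCast K, ← ENNReal.ofReal_mul (Nat.cast_nonneg K)]
    have hr0 : (0:ℝ) ≤ δ / (2 * ((K:ℝ) + 1) ^ 2) := by positivity
    have h2q : (2:ENNReal) * q = ENNReal.ofReal (2 * (δ / (2 * ((K:ℝ) + 1) ^ 2))) := by
      rw [hq_def, ENNReal.ofReal_mul (by norm_num : (0:ℝ) ≤ 2)]
      congr 1
      exact (ENNReal.ofReal_ofNat 2).symm
    rw [h2q, hscale _ (by positivity), hscale _ (by positivity),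
      ← ENNReal.ofReal_add (by positivity) (by positivity),
      ← ENNReal.ofReal_add (by positivity) (by positivity)]
    refine ENNReal.ofReal_le_ofReal ?_
    have hc : 2 * (δ / (2 * ((K:ℝ) + 1) ^ 2)) = δ / ((K:ℝ) + 1) ^ 2 := by
      field_simp
    rw [hc]
    have hKK : (1:ℝ) + ((K:ℝ) + (K:ℝ) * (K:ℝ)) ≤ ((K:ℝ) + 1) ^ 2 := by
      nlinarith [Nat.cast_nonneg (α := ℝ) K]
    have hdpos : 0 < δ / ((K:ℝ) + 1) ^ 2 := by positivity
    calc δ / ((K:ℝ) + 1) ^ 2 + ((K:ℝ) * (δ / ((K:ℝ) + 1) ^ 2) + (K:ℝ) * ((K:ℝ) * (δ / ((K:ℝ) + 1) ^ 2)))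
        = (1 + ((K:ℝ) + (K:ℝ) * (K:ℝ))) * (δ / ((K:ℝ) + 1) ^ 2) := by ring
      _ ≤ (((K:ℝ) + 1) ^ 2) * (δ / ((K:ℝ) + 1) ^ 2) :=
          mul_le_mul_of_nonneg_right hKK hdpos.le
      _ = δ := by field_simp
  -- population expansions
  have hτhatMeas : Measurable τhat := by
    rw [show τhat = fun ω => F (X ω, Y ω, Z ω) from funext hτhatF]
    exact hFmeas.comp htm0
  have hτkXmeas : ∀ k, Measurable fun ω' => τk k (X ω') := fun k => (hτk k).comp hX
  have hIp0 : ∫ ω', τhat ω' ^ 2 ∂P = Ip f0 :=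
    integral_congr_ae (ae_of_all _ fun ω' => by
      simp only [hf0_def, hτhatF ω'])
  have hIpk : ∀ k, ∫ ω', τhat ω' * τk k (X ω') ∂P = Ip (fk k) :=
    fun k => integral_congr_ae (ae_of_all _ fun ω' => by
      simp only [hfk_def, hτhatF ω'])
  have hIpkl : ∀ k l, ∫ ω', τk k (X ω') * τk l (X ω') ∂P = Ip (fkl k l) :=
    fun k l => integral_congr_ae (ae_of_all _ fun ω' => by simp only [hfkl_def])
  have hΛ : ∀ v' : Fin K → ℝ, ∫ ω', (τhat ω' - ∑ k, v' k * τk k (X ω')) ^ 2 ∂P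
      = Ip f0 - 2 * ∑ k, v' k * Ip (fk k) + ∑ k, ∑ l, v' k * v' l * Ip (fkl k l) := by
    intro v'
    rw [cso_int_expand P τhat (fun k ω' => τk k (X ω')) hτhatMeas hτkXmeas L hL hbτhat hbτk v',
      hIp0]
    simp only [hIpk, hIpkl]
  have hJ : ∀ k, Ip (fk k) = ∫ ω', τ (X ω') * τk k (X ω') ∂P :=
    fun k => (hIpk k).symm.trans (hpopid (τk k) (hτk k) (hbτk k))
  have hLp : ∀ v' : Fin K → ℝ, ∫ ω', (∑ k, v' k * τk k (X ω') - τ (X ω')) ^ 2 ∂P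
      = (∫ ω', τ (X ω') ^ 2 ∂P) - 2 * ∑ k, v' k * ∫ ω', τ (X ω') * τk k (X ω') ∂P
        + ∑ k, ∑ l, v' k * v' l * Ip (fkl k l) := by
    intro v'
    have hflip : ∀ ω', (∑ k, v' k * τk k (X ω') - τ (X ω')) ^ 2
        = (τ (X ω') - ∑ k, v' k * τk k (X ω')) ^ 2 := fun ω' => by ring
    rw [integral_congr_ae (ae_of_all _ hflip),
      cso_int_expand P (fun ω' => τ (X ω')) (fun k ω' => τk k (X ω')) (hτm.comp hX)
        hτkXmeas L hL hbτX hbτk v']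
  have hdiff : ∀ v1 v2 : Fin K → ℝ,
      (∫ ω', (∑ k, v1 k * τk k (X ω') - τ (X ω')) ^ 2 ∂P)
        - ∫ ω', (∑ k, v2 k * τk k (X ω') - τ (X ω')) ^ 2 ∂P
      = (Ip f0 - 2 * ∑ k, v1 k * Ip (fk k) + ∑ k, ∑ l, v1 k * v1 l * Ip (fkl k l))
        - (Ip f0 - 2 * ∑ k, v2 k * Ip (fk k) + ∑ k, ∑ l, v2 k * v2 l * Ip (fkl k l)) := by
    intro v1 v2
    rw [hLp v1, hLp v2]
    simp only [hJ]
    ring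
  -- empirical expansion
  have hLe : ∀ (v' : Fin K → ℝ) (ω : Ω),
      (1 / (m:ℝ)) * ∑ i, (τhats i ω - ∑ k, v' k * τk k (Xs i ω)) ^ 2
      = Em f0 ω - 2 * ∑ k, v' k * Em (fk k) ω + ∑ k, ∑ l, v' k * v' l * Em (fkl k l) ω := by
    intro v' ω
    rw [cso_emp_expand (fun i => τhats i ω) (fun i k => τk k (Xs i ω)) v']
    have e0 : (1 / (m:ℝ)) * (∑ i, (τhats i ω) ^ 2) = Em f0 ω := by
      rw [hEm_def]
      congr 1
      exact Finset.sum_congr rfl fun i _ => by rw [hτhatsF i ω]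
    have ek : ∀ k, (1 / (m:ℝ)) * (∑ i, τhats i ω * τk k (Xs i ω)) = Em (fk k) ω := by
      intro k
      rw [hEm_def]
      congr 1
      exact Finset.sum_congr rfl fun i _ => by rw [hτhatsF i ω]
    have ekl : ∀ k l, (1 / (m:ℝ)) * (∑ i, τk k (Xs i ω) * τk l (Xs i ω))
        = Em (fkl k l) ω := fun k l => rfl
    rw [e0]
    simp only [ek, ekl]
  -- the good event is contained in the target event
  have hgood : (1:ENNReal) - ENNReal.ofReal δ ≤ P badᶜ := by
    rw [prob_compl_eq_one_sub hbad_meas]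
    exact tsub_le_tsub_left hPbad 1
  refine hgood.trans (measure_mono ?_)
  intro ω hω
  rw [hbad_def] at hω
  simp only [Set.mem_compl_iff, Set.mem_union, Set.mem_iUnion, not_or, not_exists] at hω
  obtain ⟨h0, hk, hkl⟩ := hω
  have g0 : |Em f0 ω - Ip f0| ≤ D0 := by
    have := h0; rw [hbad0_def] at this; exact not_lt.1 this
  have gk : ∀ k, |Em (fk k) ω - Ip (fk k)| ≤ D1 := by
    intro k; have := hk k; rw [hbadk_def] at this; exact not_lt.1 this
  have gkl : ∀ k l, |Em (fkl k l) ω - Ip (fkl k l)| ≤ D1 := by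
    intro k l; have := hkl k l; rw [hbadkl_def] at this; exact not_lt.1 this
  -- the uniform deviation bound over the simplex
  have hDev : ∀ v' : Fin K → ℝ, (∀ k, 0 ≤ v' k) → (∑ k, v' k = 1) →
      |(Ip f0 - 2 * ∑ k, v' k * Ip (fk k) + ∑ k, ∑ l, v' k * v' l * Ip (fkl k l))
        - (Em f0 ω - 2 * ∑ k, v' k * Em (fk k) ω
            + ∑ k, ∑ l, v' k * v' l * Em (fkl k l) ω)| ≤ D0 + 3 * D1 := by
    intro v' hv'0 hv'1
    have s1 : ∑ k, v' k * (Ip (fk k) - Em (fk k) ω)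
        = ∑ k, v' k * Ip (fk k) - ∑ k, v' k * Em (fk k) ω := by
      rw [← Finset.sum_sub_distrib]
      exact Finset.sum_congr rfl fun k _ => by ring
    have s2 : ∑ k : Fin K, ∑ l : Fin K, v' k * v' l * (Ip (fkl k l) - Em (fkl k l) ω)
        = ∑ k : Fin K, ∑ l : Fin K, v' k * v' l * Ip (fkl k l)
          - ∑ k : Fin K, ∑ l : Fin K, v' k * v' l * Em (fkl k l) ω := by
      rw [← Finset.sum_sub_distrib]
      refine Finset.sum_congr rfl fun k _ => ?_
      rw [← Finset.sum_sub_distrib]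
      exact Finset.sum_congr rfl fun l _ => by ring
    have hid : (Ip f0 - 2 * ∑ k, v' k * Ip (fk k) + ∑ k, ∑ l, v' k * v' l * Ip (fkl k l))
        - (Em f0 ω - 2 * ∑ k, v' k * Em (fk k) ω
            + ∑ k, ∑ l, v' k * v' l * Em (fkl k l) ω)
        = (Ip f0 - Em f0 ω) - 2 * ∑ k, v' k * (Ip (fk k) - Em (fk k) ω)
          + ∑ k, ∑ l, v' k * v' l * (Ip (fkl k l) - Em (fkl k l) ω) := by
      rw [s1, s2]
      ring
    rw [hid]
    have b1 : |∑ k, v' k * (Ip (fk k) - Em (fk k) ω)| ≤ D1 := by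
      calc |∑ k, v' k * (Ip (fk k) - Em (fk k) ω)|
          ≤ ∑ k, |v' k * (Ip (fk k) - Em (fk k) ω)| := Finset.abs_sum_le_sum_abs _ _
        _ ≤ ∑ k, v' k * D1 := by
            refine Finset.sum_le_sum fun k _ => ?_
            rw [abs_mul, abs_of_nonneg (hv'0 k)]
            refine mul_le_mul_of_nonneg_left ?_ (hv'0 k)
            rw [abs_sub_comm]
            exact gk k
        _ = D1 := by rw [← Finset.sum_mul, hv'1, one_mul]
    have b2 : |∑ k : Fin K, ∑ l : Fin K, v' k * v' l * (Ip (fkl k l) - Em (fkl k l) ω)| ≤ D1 := by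
      calc |∑ k : Fin K, ∑ l : Fin K, v' k * v' l * (Ip (fkl k l) - Em (fkl k l) ω)|
          ≤ ∑ k : Fin K, |∑ l : Fin K, v' k * v' l * (Ip (fkl k l) - Em (fkl k l) ω)| :=
            Finset.abs_sum_le_sum_abs _ _
        _ ≤ ∑ k, v' k * D1 := by
            refine Finset.sum_le_sum fun k _ => ?_
            calc |∑ l : Fin K, v' k * v' l * (Ip (fkl k l) - Em (fkl k l) ω)|
                ≤ ∑ l : Fin K, |v' k * v' l * (Ip (fkl k l) - Em (fkl k l) ω)| :=
                  Finset.abs_sum_le_sum_abs _ _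
              _ ≤ ∑ l, v' k * v' l * D1 := by
                  refine Finset.sum_le_sum fun l _ => ?_
                  rw [abs_mul, abs_mul, abs_of_nonneg (hv'0 k), abs_of_nonneg (hv'0 l),
                    abs_sub_comm]
                  exact mul_le_mul_of_nonneg_left (gkl k l)
                    (mul_nonneg (hv'0 k) (hv'0 l))
              _ = v' k * D1 := by
                  calc ∑ l, v' k * v' l * D1 = ∑ l, v' l * (v' k * D1) :=
                        Finset.sum_congr rfl fun l _ => by ring
                    _ = (∑ l, v' l) * (v' k * D1) := (Finset.sum_mul _ _ _).symm
                    _ = v' k * D1 := by rw [hv'1, one_mul]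
        _ = D1 := by rw [← Finset.sum_mul, hv'1, one_mul]
    have habs : ∀ a b c : ℝ, |a - 2 * b + c| ≤ |a| + 2 * |b| + |c| := by
      intro a b c
      have h1 := abs_add_le (a - 2 * b) c
      have h2 : |a - 2 * b| ≤ |a| + |2 * b| := by
        calc |a - 2 * b| = |a + -(2 * b)| := by ring_nf
          _ ≤ |a| + |-(2 * b)| := abs_add_le _ _
          _ = |a| + |2 * b| := by rw [abs_neg]
      have h3 : |2 * b| = 2 * |b| := by rw [abs_mul]; norm_num
      linarith
    calc |(Ip f0 - Em f0 ω) - 2 * ∑ k, v' k * (Ip (fk k) - Em (fk k) ω)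
          + ∑ k, ∑ l, v' k * v' l * (Ip (fkl k l) - Em (fkl k l) ω)|
        ≤ |Ip f0 - Em f0 ω| + 2 * |∑ k, v' k * (Ip (fk k) - Em (fk k) ω)|
          + |∑ k, ∑ l, v' k * v' l * (Ip (fkl k l) - Em (fkl k l) ω)| := habs _ _ _
      _ ≤ D0 + 2 * D1 + D1 := by
          have ha : |Ip f0 - Em f0 ω| ≤ D0 := by rw [abs_sub_comm]; exact g0
          have hb : |∑ k, v' k * (Ip (fk k) - Em (fk k) ω)| ≤ D1 := b1
          linarith
      _ = D0 + 3 * D1 := by ring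
  -- now the final chain
  simp only [Set.mem_setOf_eq]
  intro w hw0 hw1
  obtain ⟨hv0, hv1⟩ := hwhat_mem ω
  have hΛv := hDev (what ω) hv0 hv1
  have hΛw := hDev w hw0 hw1
  have hmin := hwhat_min ω w hw0 hw1
  rw [hLe (what ω) ω, hLe w ω] at hmin
  have hdd := hdiff (what ω) w
  have h78 : 2 * (D0 + 3 * D1) ≤ 8 * Real.sqrt 2 * L ^ 2 * s := by
    have e1 : 2 * D0 = Real.sqrt 2 * (L ^ 2 * s) := by
      rw [hD0_def, mul_div_assoc', div_eq_iff hsqrt2.ne']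
      linear_combination (-(L ^ 2 * s)) * hsqrt2sq
    have hnn : 0 ≤ Real.sqrt 2 * (L ^ 2 * s) := by positivity
    rw [hD1_def]
    nlinarith [hnn, e1]
  have hav := abs_le.1 hΛv
  have haw := abs_le.1 hΛw
  linarith [hav.2, haw.1, hmin, hdd, h78]
end

section
/- Suppose Y₀, Y₁ are integrable, μ̂₀ and μ̂₁ are bounded measurable functions, and Z is independent of (X, Y₀, Y₁) with P(Z = 1) = p ∈ (0,1). Then the pseudo-outcome τ̂ is conditionally unbiased for the CATE: E[τ̂ | X] = τ(X) almost surely, i.e., E[ μ̂₁(X) − μ̂₀(X) + (Y − μ̂₁(X))·Z/p − (Y − μ̂₀(X))·(1−Z)/(1−p) | X ] = E[Y₁ − Y₀ | X] almost surely. This holds for any choice of the functions μ̂₀ and μ̂₁. -/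
open MeasureTheory ProbabilityTheory

theorem aux_pseudo_outcome
    {Ω 𝒳 : Type*} {m mW : MeasurableSpace Ω}
    [mΩ : MeasurableSpace Ω] [m𝒳 : MeasurableSpace 𝒳]
    (P : Measure Ω) [IsProbabilityMeasure P]
    (X : Ω → 𝒳) (Y0 Y1 Z : Ω → ℝ)
    (hm : m ≤ mΩ) (hmW : mW ≤ mΩ) (hm_mW : m ≤ mW)
    (hXm : Measurable[m] X) (hXmW : Measurable[mW] X)
    (hY0mW : Measurable[mW] Y0) (hY1mW : Measurable[mW] Y1)
    (hZ : Measurable Z)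
    (hY0int : Integrable Y0 P) (hY1int : Integrable Y1 P)
    (hZval : ∀ ω, Z ω = 0 ∨ Z ω = 1)
    (p : ℝ) (hp0 : 0 < p) (hp1 : p < 1)
    (hZp : P {ω | Z ω = 1} = ENNReal.ofReal p)
    (hindep : Indep (MeasurableSpace.comap Z inferInstance) mW P)
    (μ0 μ1 : 𝒳 → ℝ) (hμ0 : Measurable μ0) (hμ1 : Measurable μ1)
    (C0 C1 : ℝ) (hb0 : ∀ x, |μ0 x| ≤ C0) (hb1 : ∀ x, |μ1 x| ≤ C1)
    (X_meas : Measurable X)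
    (Y : Ω → ℝ) (hY : ∀ ω, Y ω = Z ω * Y1 ω + (1 - Z ω) * Y0 ω)
    (τ : 𝒳 → ℝ)
    (hτ : P[fun ω => Y1 ω - Y0 ω | m] =ᵐ[P] fun ω => τ (X ω))
    (τhat : Ω → ℝ)
    (hτhat : ∀ ω, τhat ω = (μ1 (X ω) - μ0 (X ω))
        + (Y ω - μ1 (X ω)) * Z ω / p - (Y ω - μ0 (X ω)) * (1 - Z ω) / (1 - p)) :
    P[τhat | m] =ᵐ[P] fun ω => τ (X ω) := by
  have hpne : p ≠ 0 := hp0.ne'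
  have h1pne : (1 : ℝ) - p ≠ 0 := sub_ne_zero.mpr hp1.ne'
  -- Z integrable, bounded by 1
  have hZbd : ∀ ω, ‖Z ω‖ ≤ 1 := fun ω => by
    rcases hZval ω with h | h <;> simp [h]
  have hZint : Integrable Z P :=
    (integrable_const (1 : ℝ)).mono' hZ.aestronglyMeasurable (ae_of_all _ hZbd)
  -- E[Z] = p
  have hZmeas1 : MeasurableSet {ω | Z ω = 1} := hZ (measurableSet_singleton 1)
  have EZ : ∫ ω, Z ω ∂P = p := by
    have h := integral_indicator_const (μ := P) (1 : ℝ) hZmeas1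
    rw [measureReal_def, hZp, ENNReal.toReal_ofReal hp0.le, smul_eq_mul, mul_one] at h
    rw [← h]
    refine integral_congr_ae (ae_of_all _ fun ω => ?_)
    rcases hZval ω with h0 | h1
    · have : ω ∉ {ω | Z ω = 1} := by simp [Set.mem_setOf_eq, h0]
      simp [Set.indicator_of_notMem this, h0]
    · have : ω ∈ {ω | Z ω = 1} := h1
      simp [Set.indicator_of_mem this, h1]
  -- key lemma: E[Z * g | m] = p * E[g | m] for mW-measurable integrable g
  have key : ∀ g : Ω → ℝ, Integrable g P → StronglyMeasurable[mW] g →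
      P[fun ω => Z ω * g ω | m] =ᵐ[P] fun ω => p * (P[g|m]) ω := by
    intro g hg hgm
    have hZg : Integrable (fun ω => Z ω * g ω) P :=
      hg.bdd_mul hZ.aestronglyMeasurable (ae_of_all _ hZbd)
    have hgZ : Integrable (fun ω => g ω * Z ω) P := by
      simpa [mul_comm] using hZg
    have h1 : P[fun ω => g ω * Z ω | mW] =ᵐ[P] g * P[Z|mW] :=
      condExp_mul_of_stronglyMeasurable_left hgm hgZ hZint
    have hZsm : StronglyMeasurable[MeasurableSpace.comap Z inferInstance] Z :=
      (measurable_iff_comap_le.mpr le_rfl).stronglyMeasurable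
    have h2 : P[Z|mW] =ᵐ[P] fun _ => ∫ ω, Z ω ∂P :=
      condExp_indep_eq hZ.comap_le hmW hZsm hindep
    have h3 : P[fun ω => Z ω * g ω | mW] =ᵐ[P] fun ω => p * g ω := by
      have hcomm : (fun ω => Z ω * g ω) = fun ω => g ω * Z ω := by
        funext ω; ring
      rw [hcomm]
      filter_upwards [h1, h2] with ω h1ω h2ω
      simp only [Pi.mul_apply] at h1ω
      rw [h1ω, h2ω, EZ, mul_comm]
    have h4 : P[fun ω => Z ω * g ω | m] =ᵐ[P] P[fun ω => p * g ω | m] :=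
      ((condExp_condExp_of_le hm_mW hmW).symm).trans (condExp_congr_ae h3)
    have h5 : P[fun ω => p * g ω | m] =ᵐ[P] fun ω => p * (P[g|m]) ω := by
      have := condExp_smul (μ := P) (m := m) p g
      exact this
    exact h4.trans h5
  -- integrability of the regression functions composed with X
  have hμ1X : Integrable (fun ω => μ1 (X ω)) P :=
    (integrable_const C1).mono' (hμ1.comp X_meas).aestronglyMeasurable
      (ae_of_all _ fun ω => by simpa [Real.norm_eq_abs] using hb1 (X ω))
  have hμ0X : Integrable (fun ω => μ0 (X ω)) P :=
    (integrable_const C0).mono' (hμ0.comp X_meas).aestronglyMeasurable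
      (ae_of_all _ fun ω => by simpa [Real.norm_eq_abs] using hb0 (X ω))
  -- A, B and their properties
  set A : Ω → ℝ := fun ω => Y1 ω - μ1 (X ω) with hA_def
  set B : Ω → ℝ := fun ω => Y0 ω - μ0 (X ω) with hB_def
  have hA : Integrable A P := hY1int.sub hμ1X
  have hB : Integrable B P := hY0int.sub hμ0X
  have hAmW : StronglyMeasurable[mW] A :=
    Measurable.stronglyMeasurable (by exact hY1mW.sub (hμ1.comp hXmW))
  have hBmW : StronglyMeasurable[mW] B :=
    Measurable.stronglyMeasurable (by exact hY0mW.sub (hμ0.comp hXmW))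
  have hZA : Integrable (fun ω => Z ω * A ω) P :=
    hA.bdd_mul hZ.aestronglyMeasurable (ae_of_all _ hZbd)
  have hZB : Integrable (fun ω => Z ω * B ω) P :=
    hB.bdd_mul hZ.aestronglyMeasurable (ae_of_all _ hZbd)
  -- decompose τhat
  set F1 : Ω → ℝ := fun ω => μ1 (X ω) - μ0 (X ω) with hF1_def
  set F2 : Ω → ℝ := fun ω => Z ω * A ω with hF2_def
  set F3 : Ω → ℝ := fun ω => B ω - Z ω * B ω with hF3_def
  have hF1 : Integrable F1 P := hμ1X.sub hμ0X
  have hF3int : Integrable F3 P := hB.sub hZB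
  have hτeq : τhat = F1 + p⁻¹ • F2 - (1 - p)⁻¹ • F3 := by
    funext ω
    simp only [Pi.sub_apply, Pi.add_apply, Pi.smul_apply, smul_eq_mul, hF1_def, hF2_def,
      hF3_def, hA_def, hB_def]
    rw [hτhat ω, hY ω]
    rcases hZval ω with h | h <;> rw [h] <;> field_simp <;> try ring
  -- conditional expectations of the pieces
  have hF1sm : StronglyMeasurable[m] F1 :=
    Measurable.stronglyMeasurable (by exact (hμ1.comp hXm).sub (hμ0.comp hXm))
  have eF1 : P[F1|m] = F1 := condExp_of_stronglyMeasurable hm hF1sm hF1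
  have hμ1Xsm : StronglyMeasurable[m] (fun ω => μ1 (X ω)) :=
    Measurable.stronglyMeasurable (by exact hμ1.comp hXm)
  have hμ0Xsm : StronglyMeasurable[m] (fun ω => μ0 (X ω)) :=
    Measurable.stronglyMeasurable (by exact hμ0.comp hXm)
  have eμ1X : P[(fun ω => μ1 (X ω))|m] = fun ω => μ1 (X ω) :=
    condExp_of_stronglyMeasurable hm hμ1Xsm hμ1X
  have eμ0X : P[(fun ω => μ0 (X ω))|m] = fun ω => μ0 (X ω) :=
    condExp_of_stronglyMeasurable hm hμ0Xsm hμ0X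
  have eA : P[A|m] =ᵐ[P] fun ω => (P[Y1|m]) ω - μ1 (X ω) := by
    have h' : P[A|m] =ᵐ[P] P[Y1|m] - P[(fun ω => μ1 (X ω))|m] :=
      condExp_sub (m := m) hY1int hμ1X
    rw [eμ1X] at h'
    exact h'
  have eB : P[B|m] =ᵐ[P] fun ω => (P[Y0|m]) ω - μ0 (X ω) := by
    have h' : P[B|m] =ᵐ[P] P[Y0|m] - P[(fun ω => μ0 (X ω))|m] :=
      condExp_sub (m := m) hY0int hμ0X
    rw [eμ0X] at h'
    exact h'
  have eF2 : P[F2|m] =ᵐ[P] fun ω => p * (P[A|m]) ω := key A hA hAmW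
  have eZB : P[(fun ω => Z ω * B ω)|m] =ᵐ[P] fun ω => p * (P[B|m]) ω := key B hB hBmW
  have eF3 : P[F3|m] =ᵐ[P] fun ω => (P[B|m]) ω - p * (P[B|m]) ω := by
    have h : P[F3|m] =ᵐ[P] P[B|m] - P[(fun ω => Z ω * B ω)|m] :=
      condExp_sub (m := m) hB hZB
    filter_upwards [h, eZB] with ω hω h2ω
    rw [hω]
    simp only [Pi.sub_apply]
    rw [h2ω]
  -- conditional expectation of Y1 - Y0
  have eY10 : P[(fun ω => Y1 ω - Y0 ω)|m] =ᵐ[P] P[Y1|m] - P[Y0|m] :=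
    condExp_sub (m := m) hY1int hY0int
  -- assemble
  have main : P[τhat|m] =ᵐ[P] P[F1|m] + p⁻¹ • P[F2|m] - (1 - p)⁻¹ • P[F3|m] := by
    rw [hτeq]
    have s1 : P[F1 + p⁻¹ • F2 - (1 - p)⁻¹ • F3|m]
        =ᵐ[P] P[F1 + p⁻¹ • F2|m] - P[(1 - p)⁻¹ • F3|m] :=
      condExp_sub (hF1.add (hZA.smul p⁻¹)) (hF3int.smul ((1 - p)⁻¹)) m
    have s2 : P[F1 + p⁻¹ • F2|m] =ᵐ[P] P[F1|m] + P[p⁻¹ • F2|m] :=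
      condExp_add hF1 (hZA.smul p⁻¹) m
    have s3 : P[p⁻¹ • F2|m] =ᵐ[P] p⁻¹ • P[F2|m] := condExp_smul p⁻¹ F2 m
    have s4 : P[(1 - p)⁻¹ • F3|m] =ᵐ[P] (1 - p)⁻¹ • P[F3|m] := condExp_smul ((1 - p)⁻¹) F3 m
    filter_upwards [s1, s2, s3, s4] with ω h1 h2 h3 h4
    simp only [Pi.sub_apply, Pi.add_apply, Pi.smul_apply] at *
    rw [h1, h2, h3, h4]
  filter_upwards [main, eF2, eF3, eA, eB, eY10, hτ] with ω h1 h2 h3 h4 h5 h6 h7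
  simp only [Pi.sub_apply, Pi.add_apply, Pi.smul_apply, smul_eq_mul] at h1 h5 h6
  rw [h1, h2, h3, h4, h5, eF1]
  rw [← h7, h6]
  simp only [hF1_def]
  field_simp
  ring

/-- Conditional unbiasedness of the AIPW pseudo-outcome: for any bounded measurable
regression functions `μ̂₀, μ̂₁`, we have `E[τ̂ | X] = τ(X) = E[Y₁ − Y₀ | X]` almost surely. -/
theorem pseudo_outcome_conditionally_unbiased
    {Ω 𝒳 : Type*} [MeasurableSpace Ω] [MeasurableSpace 𝒳]
    (P : Measure Ω) [IsProbabilityMeasure P]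
    (X : Ω → 𝒳) (Y0 Y1 Z : Ω → ℝ)
    (hX : Measurable X) (hY0 : Measurable Y0) (hY1 : Measurable Y1) (hZ : Measurable Z)
    (hY0int : Integrable Y0 P) (hY1int : Integrable Y1 P)
    (hZval : ∀ ω, Z ω = 0 ∨ Z ω = 1)
    (p : ℝ) (hp : p ∈ Set.Ioo (0 : ℝ) 1)
    (hZp : P {ω | Z ω = 1} = ENNReal.ofReal p)
    (hindep : IndepFun Z (fun ω => (X ω, Y0 ω, Y1 ω)) P)
    (μ0 μ1 : 𝒳 → ℝ) (hμ0 : Measurable μ0) (hμ1 : Measurable μ1)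
    (C0 C1 : ℝ) (hb0 : ∀ x, |μ0 x| ≤ C0) (hb1 : ∀ x, |μ1 x| ≤ C1)
    (Y : Ω → ℝ) (hY : ∀ ω, Y ω = Z ω * Y1 ω + (1 - Z ω) * Y0 ω)
    (τ : 𝒳 → ℝ) (hτm : Measurable τ)
    (hτ : P[fun ω => Y1 ω - Y0 ω | MeasurableSpace.comap X inferInstance]
        =ᵐ[P] fun ω => τ (X ω))
    (τhat : Ω → ℝ)
    (hτhat : ∀ ω, τhat ω = (μ1 (X ω) - μ0 (X ω))
        + (Y ω - μ1 (X ω)) * Z ω / p - (Y ω - μ0 (X ω)) * (1 - Z ω) / (1 - p)) :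
    P[τhat | MeasurableSpace.comap X inferInstance] =ᵐ[P] fun ω => τ (X ω) := by
  obtain ⟨hp0, hp1⟩ := hp
  have hW : Measurable (fun ω => (X ω, Y0 ω, Y1 ω)) := hX.prodMk (hY0.prodMk hY1)
  have hWm : Measurable[MeasurableSpace.comap (fun ω => (X ω, Y0 ω, Y1 ω)) inferInstance]
      (fun ω => (X ω, Y0 ω, Y1 ω)) := measurable_iff_comap_le.mpr le_rfl
  have hm_mW : MeasurableSpace.comap X inferInstance ≤
      MeasurableSpace.comap (fun ω => (X ω, Y0 ω, Y1 ω)) inferInstance := by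
    have hXW : X = (fun q : 𝒳 × ℝ × ℝ => q.1) ∘ (fun ω => (X ω, Y0 ω, Y1 ω)) := rfl
    conv_lhs => rw [hXW]
    rw [← MeasurableSpace.comap_comp]
    exact MeasurableSpace.comap_mono measurable_fst.comap_le
  exact aux_pseudo_outcome P X Y0 Y1 Z hX.comap_le hW.comap_le hm_mW
    (measurable_iff_comap_le.mpr le_rfl)
    (measurable_fst.comp hWm)
    ((measurable_fst.comp measurable_snd).comp hWm)
    ((measurable_snd.comp measurable_snd).comp hWm)
    hZ hY0int hY1int hZval p hp0 hp1 hZp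
    ((IndepFun_iff_Indep _ _ _).mp hindep)
    μ0 μ1 hμ0 hμ1 C0 C1 hb0 hb1 hX Y hY τ hτ τhat hτhat
end

section
/- Suppose Y₀, Y₁ are square-integrable, μ̂₀ and μ̂₁ are bounded measurable functions, Z is independent of (X, Y₀, Y₁) with P(Z = 1) = p ∈ (0,1), and g : 𝒳 → ℝ is any bounded measurable function. Then the cross term vanishes: E[(τ(X) − g(X)) · (τ̂ − τ(X))] = 0, where τ̂ is the pseudo-outcome and τ is the CATE function. -/
open MeasureTheory ProbabilityTheory

private lemma integrable_mul_of_memL2 {Ω : Type*} [MeasurableSpace Ω] {P : Measure Ω}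
    {f g : Ω → ℝ} (hf : MemLp f 2 P) (hg : MemLp g 2 P) :
    Integrable (fun ω => f ω * g ω) P := by
  have h : (1 : ENNReal) / 1 = 1 / 2 + 1 / 2 := by
    rw [ENNReal.div_add_div_same, one_add_one_eq_two,
      ENNReal.div_self two_ne_zero ENNReal.ofNat_ne_top]
    simp
  have := hg.smul (r := 1) hf
  rw [memLp_one_iff_integrable] at this
  exact this

private lemma memL2_condexp {Ω : Type*} {m : MeasurableSpace Ω} [m0 : MeasurableSpace Ω]
    {P : Measure Ω} [IsProbabilityMeasure P] (hm : m ≤ m0) {f : Ω → ℝ}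
    (hf : MemLp f 2 P) : MemLp (P[f|m]) 2 P := by
  haveI : SigmaFinite (P.trim hm) := inferInstance
  have hFmem : MemLp ((condExpL2 ℝ ℝ hm (hf.toLp f) : Lp ℝ 2 P) : Ω → ℝ) 2 P := Lp.memLp _
  have hEq : ((condExpL2 ℝ ℝ hm (hf.toLp f) : Lp ℝ 2 P) : Ω → ℝ) =ᵐ[P] P[f|m] := by
    refine ae_eq_condExp_of_forall_setIntegral_eq hm (hf.integrable one_le_two)
      (fun s _ _ => (hFmem.integrable one_le_two).integrableOn) (fun s hs hμs => ?_)
      (aestronglyMeasurable_condExpL2 hm _)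
    have h1 : ∫ x in s, ((condExpL2 ℝ ℝ hm (hf.toLp f) : Lp ℝ 2 P) : Ω → ℝ) x ∂P
        = ∫ x in s, (hf.toLp f : Ω → ℝ) x ∂P :=
      integral_condExpL2_eq hm (hf.toLp f) hs hμs.ne
    rw [h1]
    exact setIntegral_congr_ae (hm s hs) ((hf.coeFn_toLp).mono fun x hx _ => hx)
  exact hFmem.ae_eq hEq

/-- The cross term in the loss decomposition vanishes:
`E[(τ(X) − g(X)) (τ̂ − τ(X))] = 0` for any bounded measurable `g`. -/
theorem cross_term_vanishes
    {Ω 𝒳 : Type*} [MeasurableSpace Ω] [MeasurableSpace 𝒳]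
    (P : Measure Ω) [IsProbabilityMeasure P]
    (X : Ω → 𝒳) (Y0 Y1 Z : Ω → ℝ)
    (hX : Measurable X) (hY0 : Measurable Y0) (hY1 : Measurable Y1) (hZ : Measurable Z)
    (hY0sq : MemLp Y0 2 P) (hY1sq : MemLp Y1 2 P)
    (hZval : ∀ ω, Z ω = 0 ∨ Z ω = 1)
    (p : ℝ) (hp : p ∈ Set.Ioo (0 : ℝ) 1)
    (hZp : P {ω | Z ω = 1} = ENNReal.ofReal p)
    (hindep : IndepFun Z (fun ω => (X ω, Y0 ω, Y1 ω)) P)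
    (μ0 μ1 : 𝒳 → ℝ) (hμ0 : Measurable μ0) (hμ1 : Measurable μ1)
    (C0 C1 : ℝ) (hb0 : ∀ x, |μ0 x| ≤ C0) (hb1 : ∀ x, |μ1 x| ≤ C1)
    (g : 𝒳 → ℝ) (hg : Measurable g) (Cg : ℝ) (hbg : ∀ x, |g x| ≤ Cg)
    (Y : Ω → ℝ) (hY : ∀ ω, Y ω = Z ω * Y1 ω + (1 - Z ω) * Y0 ω)
    (τ : 𝒳 → ℝ) (hτm : Measurable τ)
    (hτ : P[fun ω => Y1 ω - Y0 ω | MeasurableSpace.comap X inferInstance]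
        =ᵐ[P] fun ω => τ (X ω))
    (τhat : Ω → ℝ)
    (hτhat : ∀ ω, τhat ω = (μ1 (X ω) - μ0 (X ω))
        + (Y ω - μ1 (X ω)) * Z ω / p - (Y ω - μ0 (X ω)) * (1 - Z ω) / (1 - p)) :
    ∫ ω, (τ (X ω) - g (X ω)) * (τhat ω - τ (X ω)) ∂P = 0 := by
  obtain ⟨hp0, hp1⟩ := hp
  have hp0' : p ≠ 0 := ne_of_gt hp0
  have hq0' : (1 - p) ≠ 0 := by linarith
  have hm : MeasurableSpace.comap X inferInstance ≤ ‹MeasurableSpace Ω› := hX.comap_le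
  haveI : SigmaFinite (P.trim hm) := inferInstance
  have hXm : Measurable[MeasurableSpace.comap X inferInstance] X := fun s hs => ⟨s, hs, rfl⟩
  set h : Ω → ℝ := fun ω => τ (X ω) - g (X ω) with hhdef
  set B : Ω → ℝ := fun ω => p⁻¹ * (Y1 ω - μ1 (X ω)) + (1 - p)⁻¹ * (Y0 ω - μ0 (X ω)) with hBdef
  set A : Ω → ℝ := fun ω => (μ1 (X ω) - μ0 (X ω)) - (1 - p)⁻¹ * (Y0 ω - μ0 (X ω)) with hAdef
  -- MemLp facts
  have hμ0X : MemLp (fun ω => μ0 (X ω)) 2 P :=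
    MemLp.of_bound ((hμ0.comp hX).aestronglyMeasurable) C0
      (Filter.Eventually.of_forall fun ω => by simpa [Real.norm_eq_abs] using hb0 (X ω))
  have hμ1X : MemLp (fun ω => μ1 (X ω)) 2 P :=
    MemLp.of_bound ((hμ1.comp hX).aestronglyMeasurable) C1
      (Filter.Eventually.of_forall fun ω => by simpa [Real.norm_eq_abs] using hb1 (X ω))
  have hgX : MemLp (fun ω => g (X ω)) 2 P :=
    MemLp.of_bound ((hg.comp hX).aestronglyMeasurable) Cg
      (Filter.Eventually.of_forall fun ω => by simpa [Real.norm_eq_abs] using hbg (X ω))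
  have hd : MemLp (fun ω => Y1 ω - Y0 ω) 2 P := hY1sq.sub hY0sq
  have hτX : MemLp (fun ω => τ (X ω)) 2 P := (memL2_condexp hm hd).ae_eq hτ
  have hh : MemLp h 2 P := hτX.sub hgX
  have hB2 : MemLp B 2 P :=
    ((hY1sq.sub hμ1X).const_mul _).add ((hY0sq.sub hμ0X).const_mul _)
  have hA2 : MemLp A 2 P := (hμ1X.sub hμ0X).sub ((hY0sq.sub hμ0X).const_mul _)
  have hhm : StronglyMeasurable[MeasurableSpace.comap X inferInstance] h :=
    ((hτm.comp hXm).sub (hg.comp hXm)).stronglyMeasurable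
  -- integrability
  have IhAτ : Integrable (fun ω => h ω * (A ω - τ (X ω))) P :=
    integrable_mul_of_memL2 hh (hA2.sub hτX)
  have IhB : Integrable (fun ω => h ω * B ω) P := integrable_mul_of_memL2 hh hB2
  have IZ : Integrable Z P := by
    rw [← memLp_one_iff_integrable]
    exact MemLp.of_bound hZ.aestronglyMeasurable 1
      (Filter.Eventually.of_forall fun ω => by
        rcases hZval ω with h0 | h0 <;> simp [h0])
  have I2 : Integrable (fun ω => Z ω * (h ω * B ω)) P :=
    IhB.bdd_mul hZ.aestronglyMeasurable
      (c := 1) (Filter.Eventually.of_forall fun ω => by rcases hZval ω with h0 | h0 <;> simp [h0])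
  -- pointwise decomposition
  have key : ∀ ω, (τ (X ω) - g (X ω)) * (τhat ω - τ (X ω))
      = h ω * (A ω - τ (X ω)) + Z ω * (h ω * B ω) := by
    intro ω
    rcases hZval ω with h0 | h0 <;>
    · simp only [hhdef, hAdef, hBdef, hτhat, hY, h0]
      field_simp
      try ring
  -- independence step
  have hZint : ∫ ω, Z ω ∂P = p := by
    have hZeq : ∀ ω, Z ω = Set.indicator {ω | Z ω = 1} (fun _ => (1 : ℝ)) ω := by
      intro ω
      rcases hZval ω with h0 | h0 <;>
        simp [Set.indicator, h0]
    have hZm : MeasurableSet {ω | Z ω = 1} := hZ (measurableSet_singleton 1)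
    rw [integral_congr_ae (Filter.Eventually.of_forall hZeq),
      integral_indicator_const _ hZm, measureReal_def, hZp, ENNReal.toReal_ofReal hp0.le, smul_eq_mul, mul_one]
  have hF : Measurable (fun q : 𝒳 × ℝ × ℝ =>
      (τ q.1 - g q.1) * (p⁻¹ * (q.2.2 - μ1 q.1) + (1 - p)⁻¹ * (q.2.1 - μ0 q.1))) := by
    fun_prop
  have hindep2 : IndepFun Z (fun ω => h ω * B ω) P := by
    have := hindep.comp measurable_id hF
    exact this
  have hmulZ : ∫ ω, Z ω * (h ω * B ω) ∂P = (∫ ω, Z ω ∂P) * ∫ ω, h ω * B ω ∂P :=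
    hindep2.integral_mul_eq_mul_integral IZ.aestronglyMeasurable IhB.aestronglyMeasurable
  -- tower property
  have Ihd : Integrable (fun ω => h ω * (Y1 ω - Y0 ω)) P := integrable_mul_of_memL2 hh hd
  have IhτX : Integrable (fun ω => h ω * τ (X ω)) P := integrable_mul_of_memL2 hh hτX
  have hce : P[(fun ω => h ω * (Y1 ω - Y0 ω))|MeasurableSpace.comap X inferInstance]
      =ᵐ[P] fun ω => h ω * τ (X ω) := by
    have h1 : P[(fun ω => h ω * (Y1 ω - Y0 ω))|MeasurableSpace.comap X inferInstance]
        =ᵐ[P] h * P[(fun ω => Y1 ω - Y0 ω)|MeasurableSpace.comap X inferInstance] :=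
      condExp_mul_of_stronglyMeasurable_left hhm Ihd (hd.integrable one_le_two)
    filter_upwards [h1, hτ] with ω h1ω h2ω
    rw [h1ω, Pi.mul_apply, h2ω]
  have tower : ∫ ω, h ω * (Y1 ω - Y0 ω) ∂P = ∫ ω, h ω * τ (X ω) ∂P := by
    rw [← integral_condExp hm (f := fun ω => h ω * (Y1 ω - Y0 ω))]
    exact integral_congr_ae hce
  -- final computation
  have key2 : ∀ ω, h ω * (A ω - τ (X ω)) + p * (h ω * B ω)
      = h ω * (Y1 ω - Y0 ω) - h ω * τ (X ω) := by
    intro ω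
    simp only [hhdef, hAdef, hBdef]
    field_simp
    ring
  calc ∫ ω, (τ (X ω) - g (X ω)) * (τhat ω - τ (X ω)) ∂P
      = ∫ ω, (h ω * (A ω - τ (X ω)) + Z ω * (h ω * B ω)) ∂P :=
        integral_congr_ae (Filter.Eventually.of_forall key)
    _ = (∫ ω, h ω * (A ω - τ (X ω)) ∂P) + ∫ ω, Z ω * (h ω * B ω) ∂P :=
        integral_add IhAτ I2
    _ = (∫ ω, h ω * (A ω - τ (X ω)) ∂P) + p * ∫ ω, h ω * B ω ∂P := by
        rw [hmulZ, hZint]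
    _ = ∫ ω, (h ω * (A ω - τ (X ω)) + p * (h ω * B ω)) ∂P := by
        rw [integral_add IhAτ (IhB.const_mul p), integral_const_mul]
    _ = ∫ ω, (h ω * (Y1 ω - Y0 ω) - h ω * τ (X ω)) ∂P :=
        integral_congr_ae (Filter.Eventually.of_forall key2)
    _ = (∫ ω, h ω * (Y1 ω - Y0 ω) ∂P) - ∫ ω, h ω * τ (X ω) ∂P :=
        integral_sub Ihd IhτX
    _ = 0 := by rw [tower, sub_self]
end

section
/- Suppose Y₀, Y₁ are square-integrable, μ̂₀, μ̂₁, and the candidate models τ̂₁, …, τ̂_K are bounded measurable functions, and Z is independent of (X, Y₀, Y₁) with P(Z = 1) = p ∈ (0,1). Then for every weight vector w ∈ ℝ^K, the population stacking loss decomposes as ℓ(w) = E[(τ̂ − τ(X))²] + ‖τ − Σ_{k=1}^K w_k τ̂_k‖₂². In particular, minimizing ℓ over w is equivalent to minimizing the squared L²(P_X) distance between the combined model Σ_k w_k τ̂_k and the true CATE function τ, since the first term does not depend on w. -/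
open MeasureTheory ProbabilityTheory

lemma memLp_two_condexp {Ω : Type*} {m m0 : MeasurableSpace Ω} (hm : m ≤ m0)
    {P : Measure Ω} [IsFiniteMeasure P] {f : Ω → ℝ} (hf : MemLp f 2 P) :
    MemLp (P[f|m]) 2 P := by
  haveI : SigmaFinite (P.trim hm) := inferInstance
  have hg := Lp.memLp ((condExpL2 ℝ ℝ hm (hf.toLp f) : lpMeas ℝ ℝ m 2 P) : Lp ℝ 2 P)
  refine MemLp.ae_eq ?_ hg
  apply ae_eq_condExp_of_forall_setIntegral_eq hm (hf.integrable one_le_two)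
  · intro s hs hμs
    exact integrableOn_condExpL2_of_measure_ne_top hm hμs.ne _
  · intro s hs hμs
    rw [integral_condExpL2_eq hm (hf.toLp f) hs hμs.ne]
    exact setIntegral_congr_ae (hm s hs) ((hf.coeFn_toLp).mono fun x hx _ => hx)
  · exact aestronglyMeasurable_condExpL2 hm _

lemma integrable_mul_of_memLp_two {Ω : Type*} {m0 : MeasurableSpace Ω} {P : Measure Ω}
    {f g : Ω → ℝ} (hf : MemLp f 2 P) (hg : MemLp g 2 P) :
    Integrable (fun ω => f ω * g ω) P := by
  have h : MemLp (f • g) 1 P := MemLp.smul (r := 1) hg hf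
  exact memLp_one_iff_integrable.mp h

/-- Decomposition of the population stacking loss:
`ℓ(w) = E[(τ̂ − τ(X))²] + ‖τ − Σ_k w_k τ̂_k‖₂²` for every weight vector `w`. -/
theorem population_stacking_loss_decomposition
    {Ω 𝒳 : Type*} [MeasurableSpace Ω] [MeasurableSpace 𝒳]
    (P : Measure Ω) [IsProbabilityMeasure P]
    (X : Ω → 𝒳) (Y0 Y1 Z : Ω → ℝ)
    (hX : Measurable X) (hY0 : Measurable Y0) (hY1 : Measurable Y1) (hZ : Measurable Z)
    (hY0sq : MemLp Y0 2 P) (hY1sq : MemLp Y1 2 P)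
    (hZval : ∀ ω, Z ω = 0 ∨ Z ω = 1)
    (p : ℝ) (hp : p ∈ Set.Ioo (0 : ℝ) 1)
    (hZp : P {ω | Z ω = 1} = ENNReal.ofReal p)
    (hindep : IndepFun Z (fun ω => (X ω, Y0 ω, Y1 ω)) P)
    (μ0 μ1 : 𝒳 → ℝ) (hμ0 : Measurable μ0) (hμ1 : Measurable μ1)
    (C0 C1 : ℝ) (hb0 : ∀ x, |μ0 x| ≤ C0) (hb1 : ∀ x, |μ1 x| ≤ C1)
    (K : ℕ) (τk : Fin K → 𝒳 → ℝ) (hτk : ∀ k, Measurable (τk k))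
    (Ck : ℝ) (hbk : ∀ k x, |τk k x| ≤ Ck)
    (Y : Ω → ℝ) (hY : ∀ ω, Y ω = Z ω * Y1 ω + (1 - Z ω) * Y0 ω)
    (τ : 𝒳 → ℝ) (hτm : Measurable τ)
    (hτ : P[fun ω => Y1 ω - Y0 ω | MeasurableSpace.comap X inferInstance]
        =ᵐ[P] fun ω => τ (X ω))
    (τhat : Ω → ℝ)
    (hτhat : ∀ ω, τhat ω = (μ1 (X ω) - μ0 (X ω))
        + (Y ω - μ1 (X ω)) * Z ω / p - (Y ω - μ0 (X ω)) * (1 - Z ω) / (1 - p)) :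
    ∀ w : Fin K → ℝ,
      ∫ ω, (τhat ω - ∑ k, w k * τk k (X ω)) ^ 2 ∂P
        = (∫ ω, (τhat ω - τ (X ω)) ^ 2 ∂P)
          + ∫ ω, (τ (X ω) - ∑ k, w k * τk k (X ω)) ^ 2 ∂P := by
  obtain ⟨hp0, hp1⟩ := hp
  have hp1' : (0:ℝ) < 1 - p := by linarith
  intro w
  have hZabs : ∀ ω, |Z ω| ≤ 1 := by
    intro ω; rcases hZval ω with hz | hz <;> simp [hz]
  have hZint : Integrable Z P := by
    refine Integrable.mono' (integrable_const 1) hZ.aestronglyMeasurable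
      (Filter.Eventually.of_forall fun ω => by simpa using hZabs ω)
  have hintZ : ∫ ω, Z ω ∂P = p := by
    have hset : MeasurableSet {ω | Z ω = 1} := hZ (measurableSet_singleton 1)
    have hind : Z = Set.indicator {ω | Z ω = 1} (fun _ => (1:ℝ)) := by
      funext ω
      rcases hZval ω with hz | hz <;>
        simp [Set.indicator, hz, Set.mem_setOf_eq]
    rw [hind, integral_indicator_const _ hset, measureReal_def, hZp, smul_eq_mul, mul_one,
      ENNReal.toReal_ofReal hp0.le]
  have hm := hX.comap_le
  set m : MeasurableSpace Ω := MeasurableSpace.comap X inferInstance with hm_def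
  haveI : SigmaFinite (P.trim hm) := inferInstance
  -- the residual functions
  have hF2 : MemLp (fun ω => Y1 ω - Y0 ω) 2 P := hY1sq.sub hY0sq
  have hτX2 : MemLp (fun ω => τ (X ω)) 2 P := MemLp.ae_eq hτ (memLp_two_condexp hm hF2)
  -- combined model
  set G : 𝒳 → ℝ := fun x => ∑ k, w k * τk k x with hG_def
  have hGm : Measurable G := by
    apply Finset.measurable_sum
    intro k _
    exact (hτk k).const_mul (w k)
  have hGb : ∀ x, |G x| ≤ ∑ k : Fin K, |w k| * Ck := by
    intro x
    calc |G x| ≤ ∑ k : Fin K, |w k * τk k x| := Finset.abs_sum_le_sum_abs _ _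
      _ ≤ ∑ k : Fin K, |w k| * Ck := by
        apply Finset.sum_le_sum
        intro k _
        rw [abs_mul]
        exact mul_le_mul_of_nonneg_left (hbk k x) (abs_nonneg _)
  have hGX2 : MemLp (fun ω => G (X ω)) 2 P :=
    MemLp.of_bound ((hGm.comp hX).aestronglyMeasurable) _
      (Filter.Eventually.of_forall fun ω => hGb (X ω))
  -- H and h
  set H : 𝒳 → ℝ := fun x => τ x - G x with hH_def
  set h : Ω → ℝ := fun ω => H (X ω) with hh_def
  have hh2 : MemLp h 2 P := hτX2.sub hGX2
  have hHm : Measurable H := hτm.sub hGm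
  -- bounded pieces
  have hμ1X2 : MemLp (fun ω => μ1 (X ω)) 2 P :=
    MemLp.of_bound ((hμ1.comp hX).aestronglyMeasurable) C1
      (Filter.Eventually.of_forall fun ω => hb1 (X ω))
  have hμ0X2 : MemLp (fun ω => μ0 (X ω)) 2 P :=
    MemLp.of_bound ((hμ0.comp hX).aestronglyMeasurable) C0
      (Filter.Eventually.of_forall fun ω => hb0 (X ω))
  have hR1 : MemLp (fun ω => Y1 ω - μ1 (X ω)) 2 P := hY1sq.sub hμ1X2
  have hR0 : MemLp (fun ω => Y0 ω - μ0 (X ω)) 2 P := hY0sq.sub hμ0X2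
  -- simplified form of τhat
  have hτhat' : ∀ ω, τhat ω = (μ1 (X ω) - μ0 (X ω))
      + Z ω * (Y1 ω - μ1 (X ω)) / p - (1 - Z ω) * (Y0 ω - μ0 (X ω)) / (1 - p) := by
    intro ω
    rcases hZval ω with hz | hz <;> · rw [hτhat, hY, hz]; ring
  -- MemLp of τhat
  have hf1 : MemLp (fun ω => μ1 (X ω) - μ0 (X ω)) 2 P := hμ1X2.sub hμ0X2
  have hf2 : MemLp (fun ω => Z ω * (Y1 ω - μ1 (X ω)) / p) 2 P := by
    refine MemLp.of_le (hR1.const_mul (1/p))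
      (((hZ.mul (hY1.sub (hμ1.comp hX))).div_const p).aestronglyMeasurable)
      (Filter.Eventually.of_forall fun ω => ?_)
    simp only [Real.norm_eq_abs, one_div, div_eq_mul_inv, abs_mul]
    calc |Z ω| * |Y1 ω - μ1 (X ω)| * |p⁻¹| ≤ 1 * |Y1 ω - μ1 (X ω)| * |p⁻¹| :=
          mul_le_mul_of_nonneg_right
            (mul_le_mul_of_nonneg_right (hZabs ω) (abs_nonneg _)) (abs_nonneg _)
      _ = |1| * |p⁻¹| * |Y1 ω - μ1 (X ω)| := by rw [abs_one]; ring
  have hf3 : MemLp (fun ω => (1 - Z ω) * (Y0 ω - μ0 (X ω)) / (1 - p)) 2 P := by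
    refine MemLp.of_le (hR0.const_mul (1/(1-p)))
      ((((measurable_const.sub hZ).mul (hY0.sub (hμ0.comp hX))).div_const (1-p)).aestronglyMeasurable)
      (Filter.Eventually.of_forall fun ω => ?_)
    have h1z : |1 - Z ω| ≤ 1 := by rcases hZval ω with hz | hz <;> simp [hz]
    simp only [Real.norm_eq_abs, one_div, div_eq_mul_inv, abs_mul]
    calc |1 - Z ω| * |Y0 ω - μ0 (X ω)| * |(1-p)⁻¹| ≤ 1 * |Y0 ω - μ0 (X ω)| * |(1-p)⁻¹| :=
          mul_le_mul_of_nonneg_right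
            (mul_le_mul_of_nonneg_right h1z (abs_nonneg _)) (abs_nonneg _)
      _ = |1| * |(1-p)⁻¹| * |Y0 ω - μ0 (X ω)| := by rw [abs_one]; ring
  have hτhat2 : MemLp τhat 2 P := by
    refine MemLp.ae_eq (Filter.Eventually.of_forall fun ω => (hτhat' ω).symm)
      (((hf1.add hf2).sub hf3))
  -- ====== cross term ======
  -- Claim A : ∫ τ(X) * h = ∫ (Y1 - Y0) * h
  have hhm : StronglyMeasurable[m] h := by
    have hXm : Measurable[m] X := fun s hs => ⟨s, hs, rfl⟩
    exact (Measurable.stronglyMeasurable (hHm.comp hXm))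
  have hFh_int : Integrable (fun ω => h ω * (Y1 ω - Y0 ω)) P :=
    integrable_mul_of_memLp_two hh2 hF2
  have hF_int : Integrable (fun ω => Y1 ω - Y0 ω) P := hF2.integrable one_le_two
  have claimA : ∫ ω, h ω * τ (X ω) ∂P = ∫ ω, h ω * (Y1 ω - Y0 ω) ∂P := by
    have key : P[(fun ω => h ω * (Y1 ω - Y0 ω)) | m]
        =ᵐ[P] fun ω => h ω * (P[fun ω => Y1 ω - Y0 ω | m]) ω := by
      have := condExp_mul_of_stronglyMeasurable_left (μ := P) (m := m) hhm
        (by exact hFh_int) hF_int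
      filter_upwards [this] with ω hω using hω
    have step1 : ∫ ω, h ω * (Y1 ω - Y0 ω) ∂P
        = ∫ ω, (P[(fun ω => h ω * (Y1 ω - Y0 ω)) | m]) ω ∂P :=
      (integral_condExp hm).symm
    rw [step1, integral_congr_ae key, integral_congr_ae ?_]
    filter_upwards [hτ] with ω hω
    rw [hω]
  -- Claim B : ∫ τhat * h = ∫ (Y1 - Y0) * h
  -- independence computations
  set W : Ω → 𝒳 × ℝ × ℝ := fun ω => (X ω, Y0 ω, Y1 ω) with hW_def
  have indep1 : ∫ ω, Z ω * ((Y1 ω - μ1 (X ω)) * h ω) ∂P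
      = p * ∫ ω, (Y1 ω - μ1 (X ω)) * h ω ∂P := by
    have hφ : Measurable (fun q : 𝒳 × ℝ × ℝ => (q.2.2 - μ1 q.1) * H q.1) :=
      (measurable_snd.snd.sub (hμ1.comp measurable_fst)).mul (hHm.comp measurable_fst)
    have hid : IndepFun Z (fun ω => (W ω).2.2 - μ1 (W ω).1 ) P := by
      exact hindep.comp measurable_id (measurable_snd.snd.sub (hμ1.comp measurable_fst))
    have hidep : IndepFun Z (fun ω => ((W ω).2.2 - μ1 (W ω).1) * H (W ω).1) P :=
      hindep.comp measurable_id hφ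
    have hint : Integrable (fun ω => (Y1 ω - μ1 (X ω)) * h ω) P :=
      integrable_mul_of_memLp_two hR1 hh2
    have := hidep.integral_mul_eq_mul_integral hZint.aestronglyMeasurable hint.aestronglyMeasurable
    simpa [hintZ] using this
  have indep0 : ∫ ω, (1 - Z ω) * ((Y0 ω - μ0 (X ω)) * h ω) ∂P
      = (1 - p) * ∫ ω, (Y0 ω - μ0 (X ω)) * h ω ∂P := by
    have hφ : Measurable (fun q : 𝒳 × ℝ × ℝ => (q.2.1 - μ0 q.1) * H q.1) :=
      (measurable_snd.fst.sub (hμ0.comp measurable_fst)).mul (hHm.comp measurable_fst)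
    have hidep : IndepFun (fun ω => 1 - Z ω) (fun ω => ((W ω).2.1 - μ0 (W ω).1) * H (W ω).1) P :=
      hindep.comp (measurable_const.sub measurable_id) hφ
    have hint : Integrable (fun ω => (Y0 ω - μ0 (X ω)) * h ω) P :=
      integrable_mul_of_memLp_two hR0 hh2
    have h1Zint : Integrable (fun ω => 1 - Z ω) P := (integrable_const 1).sub hZint
    have h1Z : ∫ ω, (1 - Z ω) ∂P = 1 - p := by
      rw [integral_sub (integrable_const 1) hZint, hintZ, integral_const]
      simp
    have := hidep.integral_mul_eq_mul_integral h1Zint.aestronglyMeasurable hint.aestronglyMeasurable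
    simpa [h1Z] using this
  have claimB : ∫ ω, τhat ω * h ω ∂P = ∫ ω, h ω * (Y1 ω - Y0 ω) ∂P := by
    have hint1 : Integrable (fun ω => (μ1 (X ω) - μ0 (X ω)) * h ω) P :=
      integrable_mul_of_memLp_two hf1 hh2
    have hintR1h : Integrable (fun ω => (Y1 ω - μ1 (X ω)) * h ω) P :=
      integrable_mul_of_memLp_two hR1 hh2
    have hintR0h : Integrable (fun ω => (Y0 ω - μ0 (X ω)) * h ω) P :=
      integrable_mul_of_memLp_two hR0 hh2
    have hintZ1 : Integrable (fun ω => Z ω * ((Y1 ω - μ1 (X ω)) * h ω)) P := by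
      refine Integrable.bdd_mul hintR1h hZ.aestronglyMeasurable (c := 1) (Filter.Eventually.of_forall fun ω => by simpa using hZabs ω)
    have hintZ0 : Integrable (fun ω => (1 - Z ω) * ((Y0 ω - μ0 (X ω)) * h ω)) P := by
      refine Integrable.bdd_mul hintR0h (measurable_const.sub hZ).aestronglyMeasurable
        (c := 1) (Filter.Eventually.of_forall fun ω => by rcases hZval ω with hz | hz <;> simp [hz])
    have hptw : ∀ ω, τhat ω * h ω
        = (μ1 (X ω) - μ0 (X ω)) * h ω
          + (1/p) * (Z ω * ((Y1 ω - μ1 (X ω)) * h ω))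
          - (1/(1-p)) * ((1 - Z ω) * ((Y0 ω - μ0 (X ω)) * h ω)) := by
      intro ω
      rw [hτhat' ω]
      field_simp
    calc ∫ ω, τhat ω * h ω ∂P
        = ∫ ω, ((μ1 (X ω) - μ0 (X ω)) * h ω
          + (1/p) * (Z ω * ((Y1 ω - μ1 (X ω)) * h ω))
          - (1/(1-p)) * ((1 - Z ω) * ((Y0 ω - μ0 (X ω)) * h ω))) ∂P := by
          exact integral_congr_ae (Filter.Eventually.of_forall hptw)
      _ = (∫ ω, (μ1 (X ω) - μ0 (X ω)) * h ω ∂P)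
          + (1/p) * ∫ ω, Z ω * ((Y1 ω - μ1 (X ω)) * h ω) ∂P
          - (1/(1-p)) * ∫ ω, (1 - Z ω) * ((Y0 ω - μ0 (X ω)) * h ω) ∂P := by
          have hB : Integrable (fun ω => 1/p * (Z ω * ((Y1 ω - μ1 (X ω)) * h ω))) P :=
            hintZ1.const_mul _
          have hC : Integrable
              (fun ω => 1/(1-p) * ((1 - Z ω) * ((Y0 ω - μ0 (X ω)) * h ω))) P :=
            hintZ0.const_mul _
          have hA : Integrable (fun ω => (μ1 (X ω) - μ0 (X ω)) * h ω
              + 1/p * (Z ω * ((Y1 ω - μ1 (X ω)) * h ω))) P := hint1.add hB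
          rw [integral_sub hA hC, integral_add hint1 hB, integral_const_mul, integral_const_mul]
      _ = (∫ ω, (μ1 (X ω) - μ0 (X ω)) * h ω ∂P)
          + (∫ ω, (Y1 ω - μ1 (X ω)) * h ω ∂P)
          - ∫ ω, (Y0 ω - μ0 (X ω)) * h ω ∂P := by
          rw [indep1, indep0]
          field_simp
      _ = ∫ ω, ((μ1 (X ω) - μ0 (X ω)) * h ω + (Y1 ω - μ1 (X ω)) * h ω
            - (Y0 ω - μ0 (X ω)) * h ω) ∂P := by
          have hsum : Integrable (fun ω => (μ1 (X ω) - μ0 (X ω)) * h ω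
              + (Y1 ω - μ1 (X ω)) * h ω) P := hint1.add hintR1h
          rw [integral_sub hsum hintR0h, integral_add hint1 hintR1h]
      _ = ∫ ω, h ω * (Y1 ω - Y0 ω) ∂P := by
          apply integral_congr_ae (Filter.Eventually.of_forall fun ω => ?_)
          ring
  have cross : ∫ ω, (τhat ω - τ (X ω)) * h ω ∂P = 0 := by
    have hint1 : Integrable (fun ω => τhat ω * h ω) P :=
      integrable_mul_of_memLp_two hτhat2 hh2
    have hint2 : Integrable (fun ω => τ (X ω) * h ω) P :=
      integrable_mul_of_memLp_two hτX2 hh2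
    have : ∫ ω, (τhat ω - τ (X ω)) * h ω ∂P
        = (∫ ω, τhat ω * h ω ∂P) - ∫ ω, τ (X ω) * h ω ∂P := by
      rw [← integral_sub hint1 hint2]
      apply integral_congr_ae (Filter.Eventually.of_forall fun ω => ?_)
      ring
    rw [this, claimB]
    have : ∫ ω, τ (X ω) * h ω ∂P = ∫ ω, h ω * τ (X ω) ∂P := by
      apply integral_congr_ae (Filter.Eventually.of_forall fun ω => ?_)
      ring
    rw [this, claimA, sub_self]
  -- ====== final assembly ======
  have hA2 : MemLp (fun ω => τhat ω - τ (X ω)) 2 P := hτhat2.sub hτX2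
  have hintA2 : Integrable (fun ω => (τhat ω - τ (X ω))^2) P := hA2.integrable_sq
  have hintB2 : Integrable (fun ω => (h ω)^2) P := hh2.integrable_sq
  have hintAB : Integrable (fun ω => (τhat ω - τ (X ω)) * h ω) P :=
    integrable_mul_of_memLp_two hA2 hh2
  calc ∫ ω, (τhat ω - ∑ k, w k * τk k (X ω)) ^ 2 ∂P
      = ∫ ω, ((τhat ω - τ (X ω))^2 + (h ω)^2 + 2 * ((τhat ω - τ (X ω)) * h ω)) ∂P := by
        apply integral_congr_ae (Filter.Eventually.of_forall fun ω => ?_)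
        have : h ω = τ (X ω) - ∑ k, w k * τk k (X ω) := rfl
        rw [this]
        ring
    _ = (∫ ω, (τhat ω - τ (X ω))^2 ∂P) + (∫ ω, (h ω)^2 ∂P)
        + 2 * ∫ ω, (τhat ω - τ (X ω)) * h ω ∂P := by
        have hsum : Integrable (fun ω => (τhat ω - τ (X ω))^2 + (h ω)^2) P :=
          hintA2.add hintB2
        rw [integral_add hsum (hintAB.const_mul 2), integral_add hintA2 hintB2,
          integral_const_mul]
    _ = (∫ ω, (τhat ω - τ (X ω)) ^ 2 ∂P)
        + ∫ ω, (τ (X ω) - ∑ k, w k * τk k (X ω)) ^ 2 ∂P := by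
        rw [cross]
        simp only [mul_zero, add_zero]
        rfl
end
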